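/- arXiv:2108.04054 — 6 statements merged into one kernel-verified Lean document; each statement's English description precedes it below -/
import Mathlib

section
/- Fix a constraint value C ∈ (0, 1/2). Let f be a bounded measurable strategy supported in [0, 1] with mca(f) ≤ C such that ∫_{(2C, 1]} f(x) dx > 0, and let h be the indicator function of the interval [0, 2C]. Then h is a strategy with mca(h) = C, and wp(f; h) < 0. -/
open MeasureTheory Set

/-- Mean competitive ability of a function supported in `[0, ∞)`:
`mca f = (∫₀^∞ t f(t) dt) / (∫₀^∞ f(t) dt)`. -/
noncomputable def mca (f : ℝ → ℝ) : ℝ :=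
  (∫ t in Ioi (0:ℝ), t * f t) / (∫ t in Ioi (0:ℝ), f t)

/-- Payoff of `f` against `g`:
`wp f g = ∫₀^∞ f(x) (∫₀ˣ g(t) dt − ∫ₓ^∞ g(t) dt) dx`. -/
noncomputable def wp (f g : ℝ → ℝ) : ℝ :=
  ∫ x in Ioi (0:ℝ), f x * ((∫ t in Ioc (0:ℝ) x, g t) - ∫ t in Ioi x, g t)

/-- A bounded measurable strategy: measurable, bounded, nonnegative, compactly
supported in `[0, ∞)`, and not almost everywhere zero. -/
def IsStrategy (f : ℝ → ℝ) : Prop :=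
  Measurable f ∧ (∃ Cb : ℝ, ∀ x, f x ≤ Cb) ∧ (∀ x, 0 ≤ f x) ∧
  (∃ R : ℝ, Function.support f ⊆ Icc 0 R) ∧ ¬ f =ᵐ[volume] (0 : ℝ → ℝ)

lemma aux_integrable {g : ℝ → ℝ} (hg : Measurable g)
    (hs : Function.support g ⊆ Icc 0 1) (M : ℝ)
    (hM : ∀ x ∈ Icc (0:ℝ) 1, |g x| ≤ M) : Integrable g := by
  have hrepr : g = (Icc (0:ℝ) 1).indicator g := by
    funext x
    by_cases hx : x ∈ Icc (0:ℝ) 1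
    · simp [hx]
    · simp [hx, Function.notMem_support.mp (fun hmem => hx (hs hmem))]
  rw [hrepr, integrable_indicator_iff measurableSet_Icc]
  apply Measure.integrableOn_of_bounded (M := M)
  · simp [Real.volume_Icc]
  · exact hg.aestronglyMeasurable
  · exact ae_restrict_of_forall_mem measurableSet_Icc fun x hx => by
      simpa [Real.norm_eq_abs] using hM x hx

theorem stmt13 (C : ℝ) (hC : C ∈ Ioo (0:ℝ) (1/2)) (f : ℝ → ℝ) (hf : IsStrategy f)
    (hsupp : Function.support f ⊆ Icc (0:ℝ) 1) (hmca : mca f ≤ C)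
    (hpos : 0 < ∫ x in Ioc (2*C) 1, f x)
    (h : ℝ → ℝ) (hh : h = Set.indicator (Icc (0:ℝ) (2*C)) (fun _ => (1:ℝ))) :
    IsStrategy h ∧ mca h = C ∧ wp f h < 0 := by
  obtain ⟨hCpos, hChalf⟩ := hC
  obtain ⟨hfm, ⟨Cb, hCb⟩, hf0, -, hfne⟩ := hf
  have hcpos : (0:ℝ) < 2*C := by linarith
  have hc1 : 2*C < 1 := by linarith
  have hhm : Measurable h := by
    rw [hh]; exact (measurable_const.indicator measurableSet_Icc)
  -- ∫ h over Ioi 0 = 2C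
  have hInt_h : (∫ t in Ioi (0:ℝ), h t) = 2*C := by
    rw [hh, setIntegral_indicator measurableSet_Icc]
    have : Ioi (0:ℝ) ∩ Icc 0 (2*C) = Ioc 0 (2*C) := by
      ext t
      simp only [mem_inter_iff, mem_Ioi, mem_Icc, mem_Ioc]
      constructor
      · rintro ⟨h1, _, h3⟩; exact ⟨h1, h3⟩
      · rintro ⟨h1, h2⟩; exact ⟨h1, h1.le, h2⟩
    rw [this]
    simp [Real.volume_Ioc, ENNReal.toReal_ofReal hcpos.le, hCpos.le]
  -- weighted integral of h
  have hInt_th : (∫ t in Ioi (0:ℝ), t * h t) = 2*C^2 := by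
    have heq : ∀ t ∈ Ioi (0:ℝ), t * h t = (Icc (0:ℝ) (2*C)).indicator (fun s => s) t := by
      intro t _
      rw [hh]
      by_cases ht : t ∈ Icc (0:ℝ) (2*C) <;> simp [ht]
    rw [setIntegral_congr_fun measurableSet_Ioi heq,
      setIntegral_indicator measurableSet_Icc]
    have hset : Ioi (0:ℝ) ∩ Icc 0 (2*C) = Ioc 0 (2*C) := by
      ext t
      simp only [mem_inter_iff, mem_Ioi, mem_Icc, mem_Ioc]
      constructor
      · rintro ⟨h1, _, h3⟩; exact ⟨h1, h3⟩
      · rintro ⟨h1, h2⟩; exact ⟨h1, h1.le, h2⟩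
    rw [hset, ← intervalIntegral.integral_of_le hcpos.le, integral_id]
    ring
  -- h is a strategy
  have hStrat : IsStrategy h := by
    refine ⟨hhm, ⟨1, ?_⟩, ?_, ⟨2*C, ?_⟩, ?_⟩
    · intro x; rw [hh]
      by_cases hx : x ∈ Icc (0:ℝ) (2*C) <;> simp [hx]
    · intro x; rw [hh]
      exact Set.indicator_nonneg (fun _ _ => zero_le_one) x
    · rw [hh]
      exact Set.support_indicator_subset
    · intro hae
      have h0 : (∫ t in Ioi (0:ℝ), h t) = 0 := by
        have := integral_congr_ae (ae_restrict_of_ae (μ := volume) (s := Ioi (0:ℝ)) hae)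
        simpa using this
      rw [hInt_h] at h0; linarith
  have hmcah : mca h = C := by
    rw [mca, hInt_h, hInt_th]
    field_simp
  -- integrability of f and friends
  have hfabs : ∀ x ∈ Icc (0:ℝ) 1, |f x| ≤ Cb := fun x _ => by
    rw [abs_of_nonneg (hf0 x)]; exact hCb x
  have hfint : Integrable f := aux_integrable hfm hsupp Cb hfabs
  have hCb0 : 0 ≤ Cb := le_trans (hf0 0) (hCb 0)
  have hg1m : Measurable (fun x => f x * (x - C)) :=
    hfm.mul (measurable_id.sub measurable_const)
  have hg1supp : Function.support (fun x => f x * (x - C)) ⊆ Icc 0 1 := by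
    intro x hx
    apply hsupp
    intro h0
    apply hx; simp [Function.mem_support] at *; left; exact h0
  have hg1int : Integrable (fun x => f x * (x - C)) := by
    apply aux_integrable hg1m hg1supp (Cb * (1 + C))
    intro x hx
    rw [abs_mul]
    apply mul_le_mul (hfabs x hx) _ (abs_nonneg _) hCb0
    rw [abs_sub_comm]
    calc |C - x| ≤ |C| + |x| := abs_sub _ _
      _ ≤ C + 1 := by
          rw [abs_of_nonneg hCpos.le, abs_of_nonneg hx.1]
          linarith [hx.2]
      _ = 1 + C := by ring
  set m : ℝ → ℝ := fun x => min x (2*C) with hm_def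
  have hg2m : Measurable (fun x => f x * (x - m x)) :=
    hfm.mul (measurable_id.sub (measurable_id.min measurable_const))
  have hg2supp : Function.support (fun x => f x * (x - m x)) ⊆ Icc 0 1 := by
    intro x hx
    apply hsupp
    intro h0
    apply hx; simp only [Function.mem_support, ne_eq] at *
    simp [h0]
  have hg2nonneg : ∀ x, 0 ≤ f x * (x - m x) := fun x =>
    mul_nonneg (hf0 x) (by simp [hm_def])
  have hg2int : Integrable (fun x => f x * (x - m x)) := by
    apply aux_integrable hg2m hg2supp Cb
    intro x hx
    rw [abs_mul]
    calc |f x| * |x - m x| ≤ Cb * 1 := by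
          apply mul_le_mul (hfabs x hx) _ (abs_nonneg _) hCb0
          rw [abs_of_nonneg (by simp [hm_def])]
          have : m x ≥ 0 := le_min hx.1 hcpos.le
          linarith [hx.2, this]
      _ = Cb := mul_one Cb
  -- positivity of ∫ f over Ioi 0
  have hsuppf_pos : 0 < volume (Function.support f) := by
    by_contra hle
    push_neg at hle
    apply hfne
    have : volume (Function.support f) = 0 := le_antisymm hle zero_le
    rw [Filter.eventuallyEq_iff_exists_mem]
    exact ⟨(Function.support f)ᶜ, by
      rwa [MeasureTheory.mem_ae_iff, compl_compl], fun x hx =>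
      Function.notMem_support.mp hx⟩
  have hsuppf_Ioi_pos : 0 < volume (Function.support f ∩ Ioi 0) := by
    by_contra hle
    push_neg at hle
    have h0' : volume (Function.support f ∩ Ioi 0) = 0 :=
      le_antisymm hle zero_le
    have hdiff : Function.support f \ Ioi 0 ⊆ {0} := by
      intro x ⟨hx1, hx2⟩
      have := (hsupp hx1).1
      simp only [mem_Ioi, not_lt] at hx2
      simp [le_antisymm hx2 this]
    have : volume (Function.support f) ≤
        volume (Function.support f ∩ Ioi 0) + volume (Function.support f \ Ioi 0) :=
      measure_le_inter_add_diff _ _ _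
    rw [h0', zero_add] at this
    have h1 : volume (Function.support f \ Ioi 0) = 0 :=
      le_antisymm (le_trans (measure_mono hdiff) (by simp)) zero_le
    rw [h1] at this
    exact absurd (le_antisymm this zero_le) (ne_of_gt hsuppf_pos)
  have hf_nonneg_ae : 0 ≤ᶠ[ae (volume.restrict (Ioi (0:ℝ)))] f :=
    Filter.Eventually.of_forall hf0
  have hIfpos : 0 < ∫ t in Ioi (0:ℝ), f t := by
    rw [setIntegral_pos_iff_support_of_nonneg_ae hf_nonneg_ae hfint.integrableOn]
    exact hsuppf_Ioi_pos
  have hIf_le : (∫ t in Ioi (0:ℝ), t * f t) ≤ C * ∫ t in Ioi (0:ℝ), f t := by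
    rw [mca, div_le_iff₀ hIfpos] at hmca
    linarith [hmca]
  -- rewrite wp
  have hwp : wp f h = ∫ x in Ioi (0:ℝ), f x * (2 * m x - 2*C) := by
    rw [wp]
    apply setIntegral_congr_fun measurableSet_Ioi
    intro x hx
    have hx0 : (0:ℝ) < x := hx
    have hIoc : (∫ t in Ioc (0:ℝ) x, h t) = m x := by
      rw [hh, setIntegral_indicator measurableSet_Icc]
      have hset : Ioc (0:ℝ) x ∩ Icc 0 (2*C) = Ioc 0 (m x) := by
        ext t
        simp only [mem_inter_iff, mem_Ioc, mem_Icc, hm_def, le_min_iff]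
        constructor
        · rintro ⟨⟨h1, h2⟩, _, h4⟩; exact ⟨h1, h2, h4⟩
        · rintro ⟨h1, h2, h3⟩; exact ⟨⟨h1, h2⟩, h1.le, h3⟩
      rw [hset, setIntegral_const, smul_eq_mul, mul_one, measureReal_def, Real.volume_Ioc,
        ENNReal.toReal_ofReal (by rw [sub_zero]; exact le_min hx0.le hcpos.le : (0:ℝ) ≤ m x - 0)]
      ring
    have hIoi : (∫ t in Ioi x, h t) = 2*C - m x := by
      rw [hh, setIntegral_indicator measurableSet_Icc]
      have hset : Ioi x ∩ Icc 0 (2*C) = Ioc x (2*C) := by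
        ext t
        simp only [mem_inter_iff, mem_Ioi, mem_Icc, mem_Ioc]
        constructor
        · rintro ⟨h1, _, h3⟩; exact ⟨h1, h3⟩
        · rintro ⟨h1, h2⟩; exact ⟨h1, (hx0.trans h1).le, h2⟩
      rw [hset, setIntegral_const, smul_eq_mul, mul_one, measureReal_def, Real.volume_Ioc]
      rcases le_total x (2*C) with hle | hle
      · rw [ENNReal.toReal_ofReal (by linarith)]
        simp [hm_def, min_eq_left hle]
      · rw [ENNReal.ofReal_of_nonpos (by linarith), ENNReal.toReal_zero]
        simp [hm_def, min_eq_right hle]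
    show f x * ((∫ t in Ioc (0:ℝ) x, h t) - ∫ t in Ioi x, h t) = f x * (2 * m x - 2*C)
    rw [hIoc, hIoi]
    ring
  -- split the integral
  have hsplit : (∫ x in Ioi (0:ℝ), f x * (2 * m x - 2*C)) =
      2 * (∫ x in Ioi (0:ℝ), f x * (x - C)) -
      2 * (∫ x in Ioi (0:ℝ), f x * (x - m x)) := by
    rw [← integral_const_mul, ← integral_const_mul, ← integral_sub
      (hg1int.integrableOn.const_mul 2) (hg2int.integrableOn.const_mul 2)]
    apply setIntegral_congr_fun measurableSet_Ioi
    intro x _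
    show f x * (2 * m x - 2*C) = 2 * (f x * (x - C)) - 2 * (f x * (x - m x))
    ring
  -- first piece ≤ 0
  have hA : (∫ x in Ioi (0:ℝ), f x * (x - C)) ≤ 0 := by
    have heq : (∫ x in Ioi (0:ℝ), f x * (x - C)) =
        (∫ t in Ioi (0:ℝ), t * f t) - C * ∫ t in Ioi (0:ℝ), f t := by
      rw [← integral_const_mul, ← integral_sub]
      · apply setIntegral_congr_fun measurableSet_Ioi
        intro x _
        show f x * (x - C) = x * f x - C * f x
        ring
      · have : Integrable (fun t => t * f t) := by
          apply aux_integrable (measurable_id.mul hfm : Measurable (fun t => t * f t)) _ Cb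
          · intro x hx
            rw [Pi.mul_apply, id_eq, abs_mul]
            calc |x| * |f x| ≤ 1 * Cb := by
                  apply mul_le_mul _ (hfabs x hx) (abs_nonneg _) zero_le_one
                  rw [abs_of_nonneg hx.1]; exact hx.2
              _ = Cb := one_mul Cb
          · intro x hx
            apply hsupp
            intro h0
            apply hx; simp [Function.mem_support] at *
            simp [h0]
        exact this.integrableOn
      · exact (hfint.integrableOn.const_mul C)
    rw [heq]
    linarith
  -- second piece > 0
  have hB : 0 < ∫ x in Ioi (0:ℝ), f x * (x - m x) := by
    have hsub : (∫ x in Ioc (2*C) 1, f x * (x - m x)) ≤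
        ∫ x in Ioi (0:ℝ), f x * (x - m x) := by
      apply setIntegral_mono_set hg2int.integrableOn
        (Filter.Eventually.of_forall hg2nonneg)
      apply Filter.Eventually.of_forall
      intro x hx
      exact lt_trans hcpos hx.1
    refine lt_of_lt_of_le ?_ hsub
    rw [setIntegral_pos_iff_support_of_nonneg_ae
      (Filter.Eventually.of_forall hg2nonneg) hg2int.integrableOn]
    have hfIoc : 0 < volume (Function.support f ∩ Ioc (2*C) 1) := by
      rw [← setIntegral_pos_iff_support_of_nonneg_ae
        (Filter.Eventually.of_forall hf0) hfint.integrableOn]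
      exact hpos
    refine lt_of_lt_of_le hfIoc (measure_mono ?_)
    rintro x ⟨hx1, hx2⟩
    refine ⟨?_, hx2⟩
    simp only [Function.mem_support, ne_eq]
    have hmx : m x = 2*C := min_eq_right hx2.1.le
    have : 0 < x - m x := by rw [hmx]; linarith [hx2.1]
    have hfx : 0 < f x := lt_of_le_of_ne (hf0 x) (Ne.symm hx1)
    positivity
  refine ⟨hStrat, hmcah, ?_⟩
  rw [hwp, hsplit]
  linarith
end

section
/- Fix a constraint value C > 0 and let n ≥ 2. If (f₁, …, fₙ) is an equilibrium point of the bounded measurable game, then wp(fₖ; f_j) = 0 for all j, k ∈ {1, …, n} and wp(fₖ; g) ≥ 0 for every admissible bounded measurable strategy g and every k; that is, each fₖ is an equilibrium strategy for the two-player game. -/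
open MeasureTheory Set

namespace S14

def Nice (f : ℝ → ℝ) : Prop :=
  Measurable f ∧ (∀ x, 0 ≤ f x) ∧ (∃ Cb : ℝ, ∀ x, f x ≤ Cb) ∧
    ∃ R : ℝ, 0 ≤ R ∧ ∀ x, x ∉ Icc (0:ℝ) R → f x = 0

noncomputable def FF (f : ℝ → ℝ) (x : ℝ) : ℝ := ∫ t in Ioc (0:ℝ) x, f t
noncomputable def TT (f : ℝ → ℝ) : ℝ := ∫ t in Ioi (0:ℝ), f t
noncomputable def KK (f : ℝ → ℝ) (x : ℝ) : ℝ := 2 * FF f x - TT f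

theorem Nice.meas {f : ℝ → ℝ} (h : Nice f) : Measurable f := h.1
theorem Nice.nonneg {f : ℝ → ℝ} (h : Nice f) : ∀ x, 0 ≤ f x := h.2.1

theorem nice_of_strategy {f : ℝ → ℝ} (h : IsStrategy f) : Nice f := by
  obtain ⟨hm, ⟨Cb, hCb⟩, hnn, ⟨R, hR⟩, -⟩ := h
  refine ⟨hm, hnn, ⟨Cb, hCb⟩, max R 0, le_max_right _ _, fun x hx => ?_⟩
  by_contra hfx
  have := hR (by simpa [Function.mem_support] using hfx)
  exact hx ⟨this.1, this.2.trans (le_max_left _ _)⟩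

theorem Nice.integrable {f : ℝ → ℝ} (h : Nice f) : Integrable f := by
  obtain ⟨hm, hnn, ⟨Cb, hCb⟩, R, hR0, hR⟩ := h
  refine Integrable.mono' (g := (Icc (0:ℝ) R).indicator fun _ => Cb)
    ((integrable_indicator_iff measurableSet_Icc).2 ?_) hm.aestronglyMeasurable
    (Filter.Eventually.of_forall fun x => ?_)
  · exact (integrableOn_const measure_Icc_lt_top.ne)
  · by_cases hx : x ∈ Icc (0:ℝ) R
    · rw [indicator_of_mem hx]
      rw [Real.norm_eq_abs, abs_of_nonneg (hnn x)]; exact hCb x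
    · rw [indicator_of_notMem hx, hR x hx]; simp

theorem Nice.integrable_id_mul {f : ℝ → ℝ} (h : Nice f) :
    Integrable (fun t => t * f t) := by
  obtain ⟨hm, hnn, ⟨Cb, hCb⟩, R, hR0, hR⟩ := h
  refine Integrable.mono' (g := (Icc (0:ℝ) R).indicator fun _ => R * max Cb 0)
    ((integrable_indicator_iff measurableSet_Icc).2 ?_)
    (measurable_id.mul hm).aestronglyMeasurable (Filter.Eventually.of_forall fun x => ?_)
  · exact (integrableOn_const measure_Icc_lt_top.ne)
  · by_cases hx : x ∈ Icc (0:ℝ) R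
    · rw [indicator_of_mem hx, Real.norm_eq_abs, abs_of_nonneg (mul_nonneg hx.1 (hnn x))]
      exact mul_le_mul hx.2 ((hCb x).trans (le_max_left _ _)) (hnn x) hR0
    · rw [indicator_of_notMem hx, hR x hx]; simp

theorem Nice.integrableOn {f : ℝ → ℝ} (h : Nice f) (s : Set ℝ) : IntegrableOn f s :=
  h.integrable.integrableOn

theorem FF_nonneg {f : ℝ → ℝ} (h : Nice f) (x : ℝ) : 0 ≤ FF f x :=
  setIntegral_nonneg measurableSet_Ioc fun t _ => h.nonneg t

theorem FF_mono {f : ℝ → ℝ} (h : Nice f) {x y : ℝ} (hxy : x ≤ y) : FF f x ≤ FF f y :=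
  setIntegral_mono_set (h.integrableOn _)
    (Filter.Eventually.of_forall fun t => h.nonneg t)
    (HasSubset.Subset.eventuallyLE (Ioc_subset_Ioc le_rfl hxy))

theorem FF_le_TT {f : ℝ → ℝ} (h : Nice f) (x : ℝ) : FF f x ≤ TT f :=
  setIntegral_mono_set (h.integrableOn _)
    (Filter.Eventually.of_forall fun t => h.nonneg t)
    (HasSubset.Subset.eventuallyLE Ioc_subset_Ioi_self)

theorem TT_nonneg {f : ℝ → ℝ} (h : Nice f) : 0 ≤ TT f :=
  setIntegral_nonneg measurableSet_Ioi fun t _ => h.nonneg t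

theorem FF_zero (f : ℝ → ℝ) : FF f 0 = 0 := by simp [FF]

theorem FF_of_nonpos {f : ℝ → ℝ} {x : ℝ} (hx : x ≤ 0) : FF f x = 0 := by
  rw [FF, Ioc_eq_empty hx.not_gt]; simp

theorem FF_split {f : ℝ → ℝ} (h : Nice f) {x : ℝ} (hx : 0 ≤ x) :
    FF f x + ∫ t in Ioi x, f t = TT f := by
  rw [FF, TT, ← setIntegral_union (Ioc_disjoint_Ioi le_rfl) measurableSet_Ioi
    (h.integrableOn _) (h.integrableOn _), Ioc_union_Ioi_eq_Ioi hx]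

theorem KK_le {f : ℝ → ℝ} (h : Nice f) (x : ℝ) : KK f x ≤ TT f := by
  have := FF_le_TT h x; unfold KK; linarith

theorem KK_ge {f : ℝ → ℝ} (h : Nice f) (x : ℝ) : -TT f ≤ KK f x := by
  have := FF_nonneg h x; unfold KK; linarith

theorem KK_mono {f : ℝ → ℝ} (h : Nice f) {x y : ℝ} (hxy : x ≤ y) : KK f x ≤ KK f y := by
  have := FF_mono h hxy; unfold KK; linarith

theorem FF_eq_intervalIntegral {f : ℝ → ℝ} (h : Nice f) (x : ℝ) :
    FF f x = ∫ t in (0:ℝ)..x, f t := by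
  rcases le_or_gt 0 x with hx | hx
  · rw [intervalIntegral.integral_of_le hx, FF]
  · rw [intervalIntegral.integral_of_ge hx.le, FF_of_nonpos hx.le]
    rw [show (∫ t in Ioc x 0, f t) = 0 from ?_]
    · ring
    · rw [integral_Ioc_eq_integral_Ioo]
      refine setIntegral_eq_zero_of_forall_eq_zero fun t ht => ?_
      exact h.2.2.2.choose_spec.2 t fun hmem => (hmem.1.trans_lt ht.2).false

theorem FF_continuous {f : ℝ → ℝ} (h : Nice f) : Continuous (FF f) := by
  have : Continuous fun x => ∫ t in (0:ℝ)..x, f t :=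
    intervalIntegral.continuous_primitive (fun a b => h.integrable.intervalIntegrable) 0
  exact this.congr fun x => (FF_eq_intervalIntegral h x).symm

end S14

namespace S14
open Filter

theorem KK_continuous {f : ℝ → ℝ} (h : Nice f) : Continuous (KK f) :=
  (((continuous_const).mul (FF_continuous h)).sub continuous_const : _)

theorem KK_abs_le {f : ℝ → ℝ} (h : Nice f) (x : ℝ) : |KK f x| ≤ TT f :=
  abs_le.2 ⟨KK_ge h x, KK_le h x⟩

theorem Nice.add {f g : ℝ → ℝ} (hf : Nice f) (hg : Nice g) : Nice (fun x => f x + g x) := by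
  obtain ⟨hm, hnn, ⟨Cb, hCb⟩, R, hR0, hR⟩ := hf
  obtain ⟨hm', hnn', ⟨Cb', hCb'⟩, R', hR0', hR'⟩ := hg
  refine ⟨hm.add hm', fun x => add_nonneg (hnn x) (hnn' x), ⟨Cb + Cb',
    fun x => add_le_add (hCb x) (hCb' x)⟩, max R R', le_max_of_le_left hR0, fun x hx => ?_⟩
  show f x + g x = 0
  rw [hR x fun hm => hx ⟨hm.1, hm.2.trans (le_max_left _ _)⟩,
    hR' x fun hm => hx ⟨hm.1, hm.2.trans (le_max_right _ _)⟩, add_zero]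

theorem Nice.zero : Nice (fun _ : ℝ => (0:ℝ)) :=
  ⟨measurable_const, fun _ => le_rfl, ⟨0, fun _ => le_rfl⟩, 0, le_rfl, fun _ _ => rfl⟩

theorem nice_sum {ι : Type*} (s : Finset ι) (f : ι → ℝ → ℝ) (h : ∀ i ∈ s, Nice (f i)) :
    Nice (fun x => ∑ i ∈ s, f i x) := by
  classical
  induction s using Finset.induction_on with
  | empty => simpa using Nice.zero
  | insert a s' hni ih =>
    simp only [Finset.sum_insert hni]
    exact (h a (Finset.mem_insert_self a s')).add
      (ih fun i hi => h i (Finset.mem_insert_of_mem hi))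

theorem FF_diff {f : ℝ → ℝ} (h : Nice f) {a b : ℝ} (ha : 0 ≤ a) (hab : a ≤ b) :
    FF f b - FF f a = ∫ t in Ioc a b, f t := by
  rw [FF, FF, ← Ioc_union_Ioc_eq_Ioc ha hab,
    setIntegral_union (Ioc_disjoint_Ioc_of_le le_rfl) measurableSet_Ioc (h.integrableOn _)
      (h.integrableOn _)]
  ring

theorem FF_sum {ι : Type*} (s : Finset ι) (f : ι → ℝ → ℝ) (h : ∀ i ∈ s, Nice (f i)) (x : ℝ) :
    FF (fun t => ∑ i ∈ s, f i t) x = ∑ i ∈ s, FF (f i) x := by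
  exact integral_finset_sum s fun i hi => ((h i hi).integrableOn _)

theorem TT_sum {ι : Type*} (s : Finset ι) (f : ι → ℝ → ℝ) (h : ∀ i ∈ s, Nice (f i)) :
    TT (fun t => ∑ i ∈ s, f i t) = ∑ i ∈ s, TT (f i) := by
  exact integral_finset_sum s fun i hi => ((h i hi).integrableOn _)

theorem Nice.mul_bdd {f φ : ℝ → ℝ} (h : Nice f) (hφ : Measurable φ) {B : ℝ}
    (hB : ∀ x, |φ x| ≤ B) : Integrable (fun x => f x * φ x) := by
  refine Integrable.mono' (h.integrable.mul_const B) (h.meas.mul hφ).aestronglyMeasurable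
    (Filter.Eventually.of_forall fun x => ?_)
  rw [Real.norm_eq_abs, abs_mul, abs_of_nonneg (h.nonneg x)]
  exact mul_le_mul_of_nonneg_left (hB x) (h.nonneg x)

theorem Nice.mul_KK {f g : ℝ → ℝ} (hf : Nice f) (hg : Nice g) :
    Integrable (fun x => f x * KK g x) :=
  hf.mul_bdd (KK_continuous hg).measurable (KK_abs_le hg)

theorem Nice.mul_FF {f g : ℝ → ℝ} (hf : Nice f) (hg : Nice g) :
    Integrable (fun x => f x * FF g x) := by
  refine hf.mul_bdd (FF_continuous hg).measurable (B := TT g) fun x => ?_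
  rw [abs_of_nonneg (FF_nonneg hg x)]; exact FF_le_TT hg x

theorem wp_eq {f g : ℝ → ℝ} (hg : Nice g) :
    wp f g = ∫ x in Ioi (0:ℝ), f x * KK g x := by
  refine setIntegral_congr_fun measurableSet_Ioi fun x hx => ?_
  have h1 := FF_split hg (le_of_lt hx)
  have : (∫ t in Ioi x, g t) = TT g - FF g x := by linarith
  rw [this]; unfold KK FF; ring_nf

theorem wp_eq2 {f g : ℝ → ℝ} (hf : Nice f) (hg : Nice g) :
    wp f g = 2 * (∫ x in Ioi (0:ℝ), f x * FF g x) - TT f * TT g := by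
  rw [wp_eq hg]
  have h1 : (∫ x in Ioi (0:ℝ), f x * KK g x)
      = ∫ x in Ioi (0:ℝ), (2 * (f x * FF g x) - TT g * f x) := by
    refine setIntegral_congr_fun measurableSet_Ioi fun x _ => ?_
    unfold KK; ring
  rw [h1, integral_sub (((hf.mul_FF hg).const_mul 2).integrableOn)
    ((hf.integrable.const_mul (TT g)).integrableOn), MeasureTheory.integral_const_mul, MeasureTheory.integral_const_mul]
  unfold TT; ring

end S14

namespace S14

theorem fubini_FF {f g : ℝ → ℝ} (hf : Nice f) (hg : Nice g) :
    (∫ x in Ioi (0:ℝ), f x * FF g x) = TT f * TT g - ∫ t in Ioi (0:ℝ), g t * FF f t := by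
  classical
  set φ : ℝ → ℝ → ℝ := fun x t => if 0 < t ∧ t ≤ x then f x * g t else 0 with hφ
  have hset : MeasurableSet {p : ℝ × ℝ | 0 < p.2 ∧ p.2 ≤ p.1} :=
    (measurableSet_lt measurable_const measurable_snd).inter
      (measurableSet_le measurable_snd measurable_fst)
  have hInt : Integrable (Function.uncurry φ) (volume.prod volume) := by
    have : Function.uncurry φ
        = ({p : ℝ × ℝ | 0 < p.2 ∧ p.2 ≤ p.1}).indicator (fun p => f p.1 * g p.2) := by
      funext p
      obtain ⟨a, b⟩ := p
      simp only [hφ, Function.uncurry, Set.indicator_apply, mem_setOf_eq]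
    rw [this]
    exact (hf.integrable.mul_prod hg.integrable).indicator hset
  have hswap := MeasureTheory.integral_integral_swap hInt
  have hL : (∫ x, ∫ t, φ x t) = ∫ x in Ioi (0:ℝ), f x * FF g x := by
    have hinner : ∀ x, (∫ t, φ x t) = f x * FF g x := by
      intro x
      have : φ x = fun t => (Ioc (0:ℝ) x).indicator (fun t => f x * g t) t := by
        funext t
        by_cases ht : t ∈ Ioc (0:ℝ) x
        · rw [indicator_of_mem ht]; exact if_pos (mem_Ioc.1 ht)
        · rw [indicator_of_notMem ht]; exact if_neg (fun hc => ht (mem_Ioc.2 hc))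
      rw [this, MeasureTheory.integral_indicator measurableSet_Ioc,
        MeasureTheory.integral_const_mul]
      rfl
    simp only [hinner]
    refine (setIntegral_eq_integral_of_forall_compl_eq_zero fun x hx => ?_).symm
    rw [FF_of_nonpos (by simpa using hx), mul_zero]
  have hR : (∫ t, ∫ x, φ x t) = ∫ t in Ioi (0:ℝ), g t * (TT f - FF f t) := by
    have hzero : ∀ t ≤ (0:ℝ), (∫ x, φ x t) = 0 := by
      intro t ht
      have : (fun x => φ x t) = fun _ => (0:ℝ) := by
        funext x; exact if_neg (fun hc => absurd hc.1 ht.not_gt)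
      rw [this]; simp
    have hpos : ∀ t ∈ Ioi (0:ℝ), (∫ x, φ x t) = g t * (TT f - FF f t) := by
      intro t ht
      have ht : (0:ℝ) < t := ht
      have : (fun x => φ x t) = fun x => (Ici t).indicator (fun x => f x * g t) x := by
        funext x
        by_cases hx : x ∈ Ici t
        · rw [indicator_of_mem hx]; exact if_pos ⟨ht, hx⟩
        · rw [indicator_of_notMem hx]; exact if_neg (fun hc => hx hc.2)
      rw [this, MeasureTheory.integral_indicator measurableSet_Ici,
        MeasureTheory.integral_Ici_eq_integral_Ioi, MeasureTheory.integral_mul_const]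
      have hsplit := FF_split hf ht.le
      have : (∫ x in Ioi t, f x) = TT f - FF f t := by linarith
      rw [this, mul_comm]
    rw [← setIntegral_eq_integral_of_forall_compl_eq_zero
      (f := fun t => ∫ x, φ x t) (s := Ioi (0:ℝ)) (fun t ht => hzero t (by simpa using ht))]
    exact setIntegral_congr_fun measurableSet_Ioi hpos
  have hfinal : (∫ t in Ioi (0:ℝ), g t * (TT f - FF f t))
      = TT f * TT g - ∫ t in Ioi (0:ℝ), g t * FF f t := by
    have h1 : (∫ t in Ioi (0:ℝ), g t * (TT f - FF f t))
        = ∫ t in Ioi (0:ℝ), (g t * TT f - g t * FF f t) := by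
      refine setIntegral_congr_fun measurableSet_Ioi fun t _ => by ring
    rw [h1, integral_sub ((hg.integrable.mul_const (TT f)).integrableOn)
      ((hg.mul_FF hf).integrableOn), MeasureTheory.integral_mul_const]
    unfold TT; ring
  rw [hL, hR, hfinal] at hswap
  linarith

theorem wp_antisymm {f g : ℝ → ℝ} (hf : Nice f) (hg : Nice g) : wp f g = - wp g f := by
  rw [wp_eq2 hf hg, wp_eq2 hg hf, fubini_FF hf hg]
  ring

theorem wp_self {f : ℝ → ℝ} (hf : Nice f) : wp f f = 0 := by
  have := wp_antisymm hf hf; linarith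

theorem wp_sum {ι : Type*} {g : ℝ → ℝ} (hg : Nice g) (s : Finset ι) (h : ι → ℝ → ℝ)
    (hh : ∀ i ∈ s, Nice (h i)) :
    wp g (fun x => ∑ i ∈ s, h i x) = ∑ i ∈ s, wp g (h i) := by
  have hns := nice_sum s h hh
  rw [wp_eq hns]
  have h1 : ∀ x, KK (fun t => ∑ i ∈ s, h i t) x = ∑ i ∈ s, KK (h i) x := by
    intro x
    unfold KK
    rw [FF_sum s h hh, TT_sum s h hh, Finset.mul_sum, Finset.sum_sub_distrib]
  have h2 : (∫ x in Ioi (0:ℝ), g x * KK (fun t => ∑ i ∈ s, h i t) x)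
      = ∫ x in Ioi (0:ℝ), ∑ i ∈ s, g x * KK (h i) x := by
    refine setIntegral_congr_fun measurableSet_Ioi fun x _ => ?_
    rw [h1 x, Finset.mul_sum]
  rw [h2, integral_finset_sum s fun i hi => ((hg.mul_KK (hh i hi)).integrableOn)]
  exact Finset.sum_congr rfl fun i hi => (wp_eq (hh i hi)).symm

end S14

namespace S14

theorem TT_eq_integral {g : ℝ → ℝ} (hn : Nice g) : TT g = ∫ x, g x := by
  refine setIntegral_eq_integral_of_ae_compl_eq_zero ?_
  rw [ae_iff]
  refine measure_mono_null ?_ (measure_singleton (0:ℝ))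
  intro x hx
  simp only [mem_setOf_eq, Classical.not_imp] at hx
  obtain ⟨R, hR0, hR⟩ := hn.2.2.2
  simp only [mem_singleton_iff]
  by_contra hx0
  exact hx.2 (hR x fun hm => hx.1 (lt_of_le_of_ne hm.1 (Ne.symm hx0)))

theorem TT_pos {g : ℝ → ℝ} (hs : IsStrategy g) : 0 < TT g := by
  have hn := nice_of_strategy hs
  rw [TT_eq_integral hn]
  rw [integral_pos_iff_support_of_nonneg_ae (Filter.Eventually.of_forall hn.nonneg)
    hn.integrable]
  rcases (zero_le : (0:ENNReal) ≤ volume (Function.support g)).lt_or_eq with h | h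
  · exact h
  · exact absurd (ae_iff.2 h.symm) hs.2.2.2.2

theorem mca_le_iff {g : ℝ → ℝ} (hs : IsStrategy g) {C : ℝ} :
    mca g ≤ C ↔ (∫ t in Ioi (0:ℝ), t * g t) ≤ C * TT g := by
  have h := TT_pos hs
  unfold TT at h ⊢
  rw [mca, div_le_iff₀ h]

theorem part1 {C : ℝ} (hC : 0 < C) {n : ℕ} (hn : 2 ≤ n) (f : Fin n → ℝ → ℝ)
    (hstrat : ∀ k, IsStrategy (f k)) (hadm : ∀ k, mca (f k) ≤ C)
    (heq : ∀ k, ∀ g : ℝ → ℝ, IsStrategy g → mca g ≤ C →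
      wp g (fun x => ∑ ℓ ∈ Finset.univ.erase k, f ℓ x) ≤
        wp (f k) (fun x => ∑ ℓ ∈ Finset.univ.erase k, f ℓ x)) :
    ∀ j k, wp (f j) (f k) = 0 := by
  classical
  have N : ∀ i, Nice (f i) := fun i => nice_of_strategy (hstrat i)
  set w : Fin n → Fin n → ℝ := fun j k => wp (f j) (f k) with hw
  set r : Fin n → ℝ := fun j => ∑ k, w j k with hr
  have hanti : ∀ j k, w j k = - w k j := fun j k => wp_antisymm (N j) (N k)
  have hdiag : ∀ j, w j j = 0 := fun j => wp_self (N j)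
  have key : ∀ j k, r j - w j k ≤ r k := by
    intro j k
    have h0 := heq k (f j) (hstrat j) (hadm j)
    rw [wp_sum (N j) _ _ (fun i _ => N i), wp_sum (N k) _ _ (fun i _ => N i)] at h0
    rw [Finset.sum_erase_eq_sub (Finset.mem_univ k),
      Finset.sum_erase_eq_sub (Finset.mem_univ k)] at h0
    have : (∑ ℓ, w k ℓ) - w k k = r k := by rw [hdiag k]; ring
    calc r j - w j k = (∑ ℓ, w j ℓ) - w j k := rfl
      _ ≤ (∑ ℓ, w k ℓ) - w k k := h0
      _ = r k := this
  have heqw : ∀ j k, w j k = r j - r k := by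
    intro j k
    have h1 := key j k
    have h2 := key k j
    rw [hanti k j] at h2
    exact le_antisymm (by linarith) (by linarith)
  have hS : (∑ j, r j) = 0 := by
    have h1 : (∑ j, r j) = ∑ j, ∑ k, w j k := rfl
    have h2 : (∑ j, ∑ k, w j k) = - ∑ j, ∑ k, w j k := by
      nth_rewrite 2 [Finset.sum_comm]
      rw [← Finset.sum_neg_distrib]
      refine Finset.sum_congr rfl fun j _ => ?_
      rw [← Finset.sum_neg_distrib]
      exact Finset.sum_congr rfl fun k _ => by rw [hanti j k]
    rw [h1]; linarith [h2]
  have hr0 : ∀ j, r j = 0 := by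
    intro j
    have h1 : r j = ∑ k, (r j - r k) :=
      (rfl : r j = ∑ k, w j k).trans (Finset.sum_congr rfl fun k _ => heqw j k)
    have h2 : (∑ k : Fin n, (r j - r k)) = n * r j - ∑ k, r k := by
      rw [Finset.sum_sub_distrib, Finset.sum_const, Finset.card_univ, Fintype.card_fin]
      simp [nsmul_eq_mul]
    rw [h2, hS, sub_zero] at h1
    have hn1 : (1:ℝ) < (n:ℝ) := by exact_mod_cast lt_of_lt_of_le one_lt_two hn
    nlinarith
  intro j k
  rw [show wp (f j) (f k) = w j k from rfl, heqw j k, hr0 j, hr0 k, sub_zero]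

end S14

namespace S14

noncomputable def ind (u v c : ℝ) : ℝ → ℝ := fun t => (Ioc u v).indicator (fun _ => c) t

theorem nice_ind {u v c : ℝ} (hu : 0 ≤ u) (huv : u ≤ v) (hc : 0 ≤ c) : Nice (ind u v c) := by
  refine ⟨measurable_const.indicator measurableSet_Ioc, fun t => indicator_nonneg (fun _ _ => hc) t,
    ⟨c, fun t => ?_⟩, v, hu.trans huv, fun t ht => ?_⟩
  · exact indicator_le' (fun _ _ => le_rfl) (fun _ _ => hc) t
  · refine indicator_of_notMem (fun hmem => ht ⟨hu.trans hmem.1.le, hmem.2⟩) _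

theorem TT_congr_zero {g : ℝ → ℝ} (hz : g =ᵐ[volume] (0 : ℝ → ℝ)) : TT g = 0 := by
  rw [TT, setIntegral_congr_ae measurableSet_Ioi (hz.mono fun x hx _ => hx)]
  simp

theorem Ioi_inter_Ioc {u v : ℝ} (hu : 0 ≤ u) : Ioi (0:ℝ) ∩ Ioc u v = Ioc u v :=
  inter_eq_self_of_subset_right fun t ht => hu.trans_lt ht.1

theorem TT_ind {u v c : ℝ} (hu : 0 ≤ u) (huv : u ≤ v) : TT (ind u v c) = c * (v - u) := by
  rw [TT]
  simp only [ind]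
  rw [setIntegral_indicator measurableSet_Ioc, Ioi_inter_Ioc hu, setIntegral_const,
    Real.volume_real_Ioc_of_le huv, smul_eq_mul, mul_comm]

theorem mom_ind {u v c : ℝ} (hu : 0 ≤ u) (huv : u ≤ v) :
    (∫ t in Ioi (0:ℝ), t * ind u v c t) = c * ((v^2 - u^2)/2) := by
  have h1 : ∀ t, t * ind u v c t = (Ioc u v).indicator (fun t => t * c) t := by
    intro t
    by_cases ht : t ∈ Ioc u v
    · simp only [ind]; rw [indicator_of_mem ht, indicator_of_mem ht]
    · simp only [ind]; rw [indicator_of_notMem ht, indicator_of_notMem ht, mul_zero]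
  simp only [h1]
  rw [setIntegral_indicator measurableSet_Ioc, Ioi_inter_Ioc hu,
    MeasureTheory.integral_mul_const, ← intervalIntegral.integral_of_le huv,
    integral_id]
  ring

theorem isStrategy_ind {u v c : ℝ} (hu : 0 ≤ u) (huv : u < v) (hc : 0 < c) :
    IsStrategy (ind u v c) := by
  have hn := nice_ind hu huv.le hc.le
  refine ⟨hn.meas, hn.2.2.1, hn.nonneg, ⟨v, fun t ht => ?_⟩, fun hz => ?_⟩
  · have hmem : t ∈ Ioc u v := by
      by_contra hm
      exact ht (indicator_of_notMem hm _)
    exact ⟨hu.trans hmem.1.le, hmem.2⟩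
  · have := TT_congr_zero hz
    rw [TT_ind hu huv.le] at this
    nlinarith

theorem IsStrategy.add' {f g : ℝ → ℝ} (hf : IsStrategy f) (hg : IsStrategy g) :
    IsStrategy (fun x => f x + g x) := by
  have hnf := nice_of_strategy hf
  have hng := nice_of_strategy hg
  have hn := hnf.add hng
  refine ⟨hn.meas, hn.2.2.1, hn.nonneg, ⟨hn.2.2.2.choose, fun t ht => ?_⟩, fun hz => ?_⟩
  · by_contra hmem
    exact ht (hn.2.2.2.choose_spec.2 t hmem)
  · refine hf.2.2.2.2 (hz.mono fun x hx => ?_)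
    have h1 := hnf.nonneg x
    have h2 := hng.nonneg x
    simp only [Pi.zero_apply] at hx ⊢
    linarith

theorem TT_add {f g : ℝ → ℝ} (hf : Nice f) (hg : Nice g) :
    TT (fun x => f x + g x) = TT f + TT g :=
  integral_add (hf.integrableOn _) (hg.integrableOn _)

theorem mom_add {f g : ℝ → ℝ} (hf : Nice f) (hg : Nice g) :
    (∫ t in Ioi (0:ℝ), t * (f t + g t))
      = (∫ t in Ioi (0:ℝ), t * f t) + ∫ t in Ioi (0:ℝ), t * g t := by
  have h1 : ∀ t, t * (f t + g t) = t * f t + t * g t := fun t => by ring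
  simp only [h1]
  exact integral_add (hf.integrable_id_mul.integrableOn) (hg.integrable_id_mul.integrableOn)

theorem intKK_ind {u v c : ℝ} (h : ℝ → ℝ) (hu : 0 ≤ u) :
    (∫ x in Ioi (0:ℝ), ind u v c x * KK h x) = c * ∫ x in Ioc u v, KK h x := by
  have h1 : ∀ x, ind u v c x * KK h x = (Ioc u v).indicator (fun x => c * KK h x) x := by
    intro x
    by_cases hx : x ∈ Ioc u v
    · simp only [ind]; rw [indicator_of_mem hx, indicator_of_mem hx, mul_comm]
    · simp only [ind]; rw [indicator_of_notMem hx, indicator_of_notMem hx, zero_mul]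
  simp only [h1]
  rw [setIntegral_indicator measurableSet_Ioc, Ioi_inter_Ioc hu,
    MeasureTheory.integral_const_mul]

theorem intKK_lower {u v : ℝ} {h : ℝ → ℝ} (hh : Nice h) (huv : u ≤ v) :
    (v - u) * KK h u ≤ ∫ x in Ioc u v, KK h x := by
  have h1 : (∫ x in Ioc u v, KK h u) ≤ ∫ x in Ioc u v, KK h x := by
    refine setIntegral_mono_on (integrableOn_const measure_Ioc_lt_top.ne)
      ((KK_continuous hh).integrableOn_Ioc) measurableSet_Ioc fun x hx => KK_mono hh hx.1.le
  rw [setIntegral_const, Real.volume_real_Ioc_of_le huv,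
    smul_eq_mul] at h1
  exact h1

end S14

namespace S14

theorem le_zero_of_le_eps {a b e0 : ℝ} (he0 : 0 < e0) (hb : 0 ≤ b)
    (H : ∀ e, 0 < e → e < e0 → a ≤ e * b) : a ≤ 0 := by
  by_contra ha
  push_neg at ha
  rcases hb.lt_or_eq with hb' | hb'
  · have he : 0 < min (e0/2) (a/(2*b)) := lt_min (by linarith) (by positivity)
    have h1 := H _ he (lt_of_le_of_lt (min_le_left _ _) (by linarith))
    have h3 : (a/(2*b)) * b = a/2 := by field_simp
    have h2 : min (e0/2) (a/(2*b)) * b ≤ a/2 := by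
      rw [← h3]; exact mul_le_mul_of_nonneg_right (min_le_right _ _) hb
    linarith
  · have h1 := H (e0/2) (by linarith) (by linarith)
    rw [← hb', mul_zero] at h1
    linarith

section Abstract

variable {C : ℝ} {h : ℝ → ℝ}

theorem G1 (hC : 0 < C) (hh : Nice h)
    (htest : ∀ g, IsStrategy g → mca g ≤ C → (∫ x in Ioi (0:ℝ), g x * KK h x) ≤ 0) :
    ∀ u, 0 ≤ u → u ≤ C → KK h u ≤ 0 := by
  have main : ∀ u, 0 ≤ u → u < C → KK h u ≤ 0 := by
    intro u hu huC
    have hstrat := isStrategy_ind (c := 1) hu huC one_pos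
    have hmca : mca (ind u C 1) ≤ C := by
      rw [mca_le_iff hstrat, TT_ind hu huC.le, mom_ind hu huC.le]
      nlinarith
    have ht := htest _ hstrat hmca
    rw [intKK_ind h hu, one_mul] at ht
    have hlow := intKK_lower hh huC.le (u := u) (v := C)
    nlinarith
  intro u hu huC
  rcases huC.lt_or_eq with hlt | heq
  · exact main u hu hlt
  · subst heq
    have hten : Filter.Tendsto (KK h) (nhdsWithin u (Iio u)) (nhds (KK h u)) :=
      ((KK_continuous hh).tendsto u).mono_left nhdsWithin_le_nhds
    refine le_of_tendsto hten ?_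
    have h1 : ∀ᶠ x in nhdsWithin u (Iio u), 0 < x :=
      nhdsWithin_le_nhds (eventually_gt_nhds hC)
    filter_upwards [h1, self_mem_nhdsWithin] with x hx0 hxu
    exact main x hx0.le hxu

theorem G2 (hC : 0 < C) (hh : Nice h)
    (htest : ∀ g, IsStrategy g → mca g ≤ C → (∫ x in Ioi (0:ℝ), g x * KK h x) ≤ 0) :
    ∀ x y, 0 ≤ x → x < C → C < y →
      (y - C) * KK h x + (C - x) * KK h y ≤ 0 := by
  intro x y hx hxC hCy
  set s : ℝ := (y - x) / (2 * (y - C)) with hs_def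
  have hs : 0 < s := div_pos (by linarith) (by linarith)
  set e0 : ℝ := (C - x) / s with he0_def
  have he0 : 0 < e0 := div_pos (by linarith) hs
  have key : ∀ e, 0 < e → e < e0 →
      (y - C) * KK h x + (C - x) * KK h y ≤ e * (s * TT h) := by
    intro e he hee0
    set α : ℝ := y - C with hα
    set β : ℝ := C - x - s * e with hβ
    have hαpos : 0 < α := by linarith
    have hse0 : s * e0 = C - x := by
      rw [he0_def, mul_comm]
      exact div_mul_cancel₀ _ hs.ne' 
    have hβpos : 0 < β := by
      have h' : s * e < s * e0 := (mul_lt_mul_iff_right₀ hs).2 hee0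
      rw [hse0] at h'
      simp only [hβ]; linarith
    set g : ℝ → ℝ := fun t => ind x (x+e) α t + ind y (y+e) β t with hg
    have hnx := nice_ind hx (by linarith : x ≤ x + e) hαpos.le
    have hny := nice_ind (by linarith : (0:ℝ) ≤ y) (by linarith : y ≤ y + e) hβpos.le
    have hstrat : IsStrategy g :=
      IsStrategy.add' (isStrategy_ind (u := x) (v := x + e) hx (by linarith) hαpos)
        (isStrategy_ind (u := y) (v := y + e) (by linarith) (by linarith) hβpos)
    have hTT : TT g = e * (α + β) := by
      rw [hg, TT_add hnx hny, TT_ind hx (by linarith), TT_ind (by linarith) (by linarith)]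
      ring
    have hmom : (∫ t in Ioi (0:ℝ), t * g t)
        = α * (((x+e)^2 - x^2)/2) + β * (((y+e)^2 - y^2)/2) := by
      rw [hg, mom_add hnx hny, mom_ind hx (by linarith), mom_ind (by linarith) (by linarith)]
    have hmca : mca g ≤ C := by
      rw [mca_le_iff hstrat, hTT, hmom]
      have hsy : 2 * s * (y - C) = y - x := by
        rw [hs_def, hα]; field_simp [(by linarith : y - C ≠ 0)]
      nlinarith [sq_nonneg e, mul_pos hs he]
    have ht := htest _ hstrat hmca
    have hsplit : (∫ t in Ioi (0:ℝ), g t * KK h t)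
        = (∫ t in Ioi (0:ℝ), ind x (x+e) α t * KK h t)
          + ∫ t in Ioi (0:ℝ), ind y (y+e) β t * KK h t := by
      rw [hg]
      have h1 : ∀ t, (ind x (x+e) α t + ind y (y+e) β t) * KK h t
          = ind x (x+e) α t * KK h t + ind y (y+e) β t * KK h t := fun t => by ring
      simp only [h1]
      exact integral_add ((hnx.mul_KK hh).integrableOn) ((hny.mul_KK hh).integrableOn)
    rw [hsplit, intKK_ind h hx, intKK_ind h (by linarith)] at ht
    have hl1 := intKK_lower hh (by linarith : x ≤ x + e) (u := x)
    have hl2 := intKK_lower hh (by linarith : y ≤ y + e) (u := y)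
    have hKy := KK_le hh y
    -- α * (e * KK h x) + β * (e * KK h y) ≤ 0
    have hcomb : α * (e * KK h x) + β * (e * KK h y) ≤ 0 := by
      have e1 : α * ((x + e - x) * KK h x) ≤ α * ∫ t in Ioc x (x+e), KK h t :=
        mul_le_mul_of_nonneg_left hl1 hαpos.le
      have e2 : β * ((y + e - y) * KK h y) ≤ β * ∫ t in Ioc y (y+e), KK h t :=
        mul_le_mul_of_nonneg_left hl2 hβpos.le
      have : x + e - x = e := by ring
      rw [this] at e1
      have : y + e - y = e := by ring
      rw [this] at e2
      linarith
    have h9 : α * KK h x + β * KK h y ≤ 0 := by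
      by_contra hX
      push_neg at hX
      have := mul_pos he hX
      nlinarith [hcomb]
    have h11 : (C - x) * KK h y = β * KK h y + (s*e) * KK h y := by
      rw [hβ]; ring
    have h12 : (s*e) * KK h y ≤ (s*e) * TT h :=
      mul_le_mul_of_nonneg_left hKy (mul_nonneg hs.le he.le)
    have h13 : e * (s * TT h) = (s*e) * TT h := by ring
    rw [hα] at h9
    rw [hα, h13]
    linarith
  exact le_zero_of_le_eps he0 (mul_nonneg hs.le (TT_nonneg hh)) key

end Abstract

end S14

namespace S14

theorem exists_linear_bound {C : ℝ} {h : ℝ → ℝ} (hC : 0 < C) (hh : Nice h)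
    (htest : ∀ g, IsStrategy g → mca g ≤ C → (∫ x in Ioi (0:ℝ), g x * KK h x) ≤ 0) :
    ∃ a : ℝ, ∀ x, 0 ≤ x → KK h x ≤ a * (x - C) := by
  obtain ⟨Cb, hCb⟩ := hh.2.2.1
  have hCb0 : 0 ≤ Cb := le_trans (hh.nonneg 0) (hCb 0)
  set S : Set ℝ := {z | ∃ y, C < y ∧ z = KK h y / (y - C)} with hS
  have hne : S.Nonempty := ⟨KK h (C+1) / (C+1-C), C+1, by linarith, rfl⟩
  have hKC : KK h C ≤ 0 := G1 hC hh htest C hC.le le_rfl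
  have hlip : ∀ y, C < y → KK h y ≤ 2*Cb*(y - C) := by
    intro y hy
    have hd : FF h y - FF h C = ∫ t in Ioc C y, h t := (FF_diff hh hC.le hy.le).symm ▸ rfl
    have hd' := FF_diff hh hC.le hy.le
    have hb : (∫ t in Ioc C y, h t) ≤ Cb * (y - C) := by
      have h1 : (∫ t in Ioc C y, h t) ≤ ∫ t in Ioc C y, Cb :=
        setIntegral_mono_on (hh.integrableOn _) (integrableOn_const measure_Ioc_lt_top.ne)
          measurableSet_Ioc fun t _ => hCb t
      rw [setIntegral_const, Real.volume_real_Ioc_of_le hy.le,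
        smul_eq_mul, mul_comm] at h1
      exact h1
    unfold KK at hKC ⊢
    linarith
  have hbdd : BddAbove S := by
    refine ⟨2*Cb, fun z hz => ?_⟩
    obtain ⟨y, hy, rfl⟩ := hz
    rw [div_le_iff₀ (by linarith)]
    exact hlip y hy
  refine ⟨sSup S, fun x hx => ?_⟩
  rcases lt_trichotomy x C with hxC | rfl | hxC
  · have hub : ∀ z ∈ S, z ≤ -KK h x / (C - x) := by
      rintro z ⟨y, hy, rfl⟩
      have h2 := G2 hC hh htest x y hx hxC hy
      rw [div_le_div_iff₀ (by linarith) (by linarith)]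
      nlinarith
    have hsup := csSup_le hne hub
    rw [le_div_iff₀ (by linarith)] at hsup
    nlinarith
  · simpa using hKC
  · have hzS : KK h x / (x - C) ∈ S := ⟨x, hxC, rfl⟩
    have hle := le_csSup hbdd hzS
    rw [div_le_iff₀ (by linarith)] at hle
    linarith

end S14

namespace S14

theorem eq_of_forall_abs_lt {a b : ℝ} (H : ∀ ε, 0 < ε → |a - b| < ε) : a = b := by
  by_contra hne
  have h1 := H (|a - b|) (abs_pos.2 (sub_ne_zero.2 hne))
  exact absurd h1 (lt_irrefl _)

theorem le_zero_of_forall_lt {a : ℝ} (H : ∀ ε, 0 < ε → a < ε) : a ≤ 0 := by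
  by_contra h
  push_neg at h
  exact absurd (H a h) (lt_irrefl _)

/-- If a continuous nonneg function has zeros arbitrarily close to `p`, it vanishes at `p`. -/
theorem zero_of_cont {F : ℝ → ℝ} (hc : Continuous F) {p : ℝ} (hnn : 0 ≤ F p)
    (hex : ∀ δ, 0 < δ → ∃ t, F t = 0 ∧ |t - p| < δ) : F p = 0 := by
  refine le_antisymm (le_zero_of_forall_lt fun ε hε => ?_) hnn
  obtain ⟨δ, hδ, hδ'⟩ := Metric.continuous_iff.1 hc p ε hε
  obtain ⟨t, htF, htp⟩ := hex δ hδ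
  have := hδ' t (by rwa [Real.dist_eq])
  rw [Real.dist_eq, htF] at this
  have := abs_lt.1 this
  linarith [this.1]

theorem setIntegral_mono_fn {p q : ℝ → ℝ} (hp : Nice p) (hq : Nice q)
    (hle : ∀ x, p x ≤ q x) (s : Set ℝ) (hs : MeasurableSet s) :
    (∫ x in s, p x) ≤ ∫ x in s, q x :=
  setIntegral_mono_on (hp.integrableOn _) (hq.integrableOn _) hs fun x _ => hle x

theorem ae_zero_restrict_of_setIntegral_zero {p : ℝ → ℝ} (hp : Nice p) {s : Set ℝ}
    (hs : MeasurableSet s) (hz : (∫ x in s, p x) = 0) :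
    ∀ᵐ x ∂(volume.restrict s), p x = 0 := by
  have h1 := (integral_eq_zero_iff_of_nonneg_ae
    (Filter.Eventually.of_forall fun x => hp.nonneg x) (hp.integrableOn s)).1 hz
  exact h1.mono fun x hx => hx

theorem FF_at_R {p : ℝ → ℝ} (hp : Nice p) {b : ℝ} (hb : hp.2.2.2.choose ≤ b) :
    FF p b = TT p := by
  obtain ⟨hR0, hR⟩ := hp.2.2.2.choose_spec
  have hb0 : 0 ≤ b := hR0.trans hb
  have h1 : (∫ t in Ioi b, p t) = 0 := by
    refine setIntegral_eq_zero_of_forall_eq_zero fun t ht => ?_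
    exact hR t fun hm => absurd hm.2 (not_le.2 (lt_of_le_of_lt hb ht))
  have := FF_split hp hb0
  linarith

/-- A strategy with `mca ≤ C` cannot vanish a.e. on `(0, b]` for `b ≥ C`. -/
theorem strategy_mass_below {p : ℝ → ℝ} (hs : IsStrategy p) {C b : ℝ} (hC : 0 < C)
    (hCb : C ≤ b) (hadm : mca p ≤ C)
    (hz : ∀ᵐ t ∂(volume.restrict (Ioc (0:ℝ) b)), p t = 0) : False := by
  have hp := nice_of_strategy hs
  have hTp := TT_pos hs
  have hmom := (mca_le_iff hs).1 hadm
  have hb0 : 0 < b := lt_of_lt_of_le hC hCb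
  set I : ℝ := ∫ t in Ioi (0:ℝ), p t * (t - b) with hI
  have hIint : Integrable (fun t => p t * (t - b)) := by
    have h1 : ∀ t, p t * (t - b) = t * p t - b * p t := fun t => by ring
    refine (hp.integrable_id_mul.sub (hp.integrable.const_mul b)).congr
      (Filter.Eventually.of_forall fun t => ?_)
    simp only [Pi.sub_apply]
    ring
  have hIle : I ≤ 0 := by
    have h1 : I = (∫ t in Ioi (0:ℝ), t * p t) - b * TT p := by
      rw [hI]
      have h2 : ∀ t, p t * (t - b) = t * p t - b * p t := fun t => by ring
      simp only [h2]
      rw [integral_sub (hp.integrable_id_mul.integrableOn) ((hp.integrable.const_mul b).integrableOn),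
        MeasureTheory.integral_const_mul]
      rfl
    nlinarith
  have hz' : ∀ᵐ t ∂(volume.restrict (Ioi (0:ℝ))), t ∈ Ioc (0:ℝ) b → p t = 0 := by
    have hg : ∀ᵐ t ∂volume, t ∈ Ioc (0:ℝ) b → p t = 0 :=
      (ae_restrict_iff' measurableSet_Ioc).1 hz
    exact ae_restrict_of_ae hg
  have hnnae : ∀ᵐ t ∂(volume.restrict (Ioi (0:ℝ))), 0 ≤ p t * (t - b) := by
    filter_upwards [hz', ae_restrict_mem measurableSet_Ioi] with t h1 h2
    rcases le_or_gt t b with htb | htb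
    · rw [h1 ⟨h2, htb⟩, zero_mul]
    · exact mul_nonneg (hp.nonneg t) (by linarith)
  have hI0 : I = 0 := le_antisymm hIle (integral_nonneg_of_ae hnnae)
  have hae0 : ∀ᵐ t ∂(volume.restrict (Ioi (0:ℝ))), p t * (t - b) = 0 :=
    (integral_eq_zero_iff_of_nonneg_ae hnnae (hIint.integrableOn)).1 hI0
  have hpae : ∀ᵐ t ∂(volume.restrict (Ioi (0:ℝ))), p t = 0 := by
    filter_upwards [hz', hae0, ae_restrict_mem measurableSet_Ioi] with t h1 h2 h3
    rcases le_or_gt t b with htb | htb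
    · exact h1 ⟨h3, htb⟩
    · rcases mul_eq_zero.1 h2 with h | h
      · exact h
      · linarith
  refine hs.2.2.2.2 ?_
  have hne0 : ∀ᵐ (t : ℝ) ∂volume, t ≠ 0 := by
    rw [ae_iff]
    simp only [ne_eq, not_not, Set.setOf_eq_eq_singleton]
    exact measure_singleton 0
  have hcompl : ∀ᵐ t ∂(volume.restrict (Iic (0:ℝ))), p t = 0 := by
    rw [ae_restrict_iff' measurableSet_Iic]
    filter_upwards [hne0] with t ht0 hmem
    obtain ⟨R, hR0, hR⟩ := hp.2.2.2
    exact hR t fun hm => ht0 (le_antisymm hmem hm.1)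
  have hglob : ∀ᵐ t ∂(volume : Measure ℝ), p t = 0 := by
    refine ae_of_ae_restrict_of_ae_restrict_compl (Iic (0:ℝ)) hcompl ?_
    rwa [compl_Iic]
  exact hglob

end S14

open S14 in
theorem stmt14 (C : ℝ) (hC : 0 < C) (n : ℕ) (hn : 2 ≤ n) (f : Fin n → ℝ → ℝ)
    (hstrat : ∀ k, IsStrategy (f k)) (hadm : ∀ k, mca (f k) ≤ C)
    (heq : ∀ k, ∀ g : ℝ → ℝ, IsStrategy g → mca g ≤ C →
      wp g (fun x => ∑ ℓ ∈ Finset.univ.erase k, f ℓ x) ≤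
        wp (f k) (fun x => ∑ ℓ ∈ Finset.univ.erase k, f ℓ x)) :
    (∀ j k, wp (f k) (f j) = 0) ∧
    (∀ k, ∀ g : ℝ → ℝ, IsStrategy g → mca g ≤ C → 0 ≤ wp (f k) g) := by
  classical
  have N : ∀ i, Nice (f i) := fun i => nice_of_strategy (hstrat i)
  have hTfpos : ∀ i, 0 < TT (f i) := fun i => TT_pos (hstrat i)
  have hzero : ∀ j k, wp (f j) (f k) = 0 := part1 hC hn f hstrat hadm heq
  set Sk : Fin n → ℝ → ℝ := fun k x => ∑ ℓ ∈ Finset.univ.erase k, f ℓ x with hSkdef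
  have NSk : ∀ k, Nice (Sk k) := fun k => nice_sum _ _ fun i _ => N i
  have hwpS : ∀ (g : ℝ → ℝ), Nice g → ∀ k,
      wp g (Sk k) = ∑ ℓ ∈ Finset.univ.erase k, wp g (f ℓ) :=
    fun g hg k => wp_sum hg _ _ fun i _ => N i
  have hVk : ∀ k, wp (f k) (Sk k) = 0 := by
    intro k; rw [hwpS _ (N k) k]; exact Finset.sum_eq_zero fun ℓ _ => hzero k ℓ
  have htest : ∀ k, ∀ g, IsStrategy g → mca g ≤ C →
      (∫ x in Ioi (0:ℝ), g x * KK (Sk k) x) ≤ 0 := by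
    intro k g hg hm
    have h0 : wp g (Sk k) ≤ wp (f k) (Sk k) := heq k g hg hm
    rw [hVk k] at h0
    rwa [← wp_eq (NSk k)]
  set ψ : ℝ → ℝ := fun x => ∑ ℓ, f ℓ x with hψdef
  have Nψ : Nice ψ := nice_sum _ _ fun i _ => N i
  have k0 : Fin n := ⟨0, by omega⟩
  have huniv_ne : (Finset.univ : Finset (Fin n)).Nonempty := ⟨k0, Finset.mem_univ _⟩
  have hTψ : TT ψ = ∑ ℓ, TT (f ℓ) := TT_sum _ _ fun i _ => N i
  have hTψpos : 0 < TT ψ := by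
    rw [hTψ]; exact Finset.sum_pos (fun i _ => hTfpos i) huniv_ne
  have hψSk : ∀ k x, ψ x = Sk k x + f k x := fun k x =>
    (Finset.sum_erase_add _ _ (Finset.mem_univ k)).symm
  have hfle : ∀ j x, f j x ≤ ψ x := fun j x =>
    Finset.single_le_sum (f := fun ℓ => f ℓ x) (fun i _ => (N i).nonneg x) (Finset.mem_univ j)
  have hSkle : ∀ k x, Sk k x ≤ ψ x := by
    intro k x
    have h1 := (N k).nonneg x
    have h2 := hψSk k x
    linarith
  have hTSk : ∀ k, TT (Sk k) = ∑ ℓ ∈ Finset.univ.erase k, TT (f ℓ) :=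
    fun k => TT_sum _ _ fun i _ => N i
  have hTSkpos : ∀ k, 0 < TT (Sk k) := by
    intro k
    rw [hTSk k]
    refine Finset.sum_pos (fun i _ => hTfpos i) ?_
    rw [← Finset.card_pos, Finset.card_erase_of_mem (Finset.mem_univ k), Finset.card_univ,
      Fintype.card_fin]
    omega
  choose a hA using fun k => exists_linear_bound hC (NSk k) (htest k)
  set D : Fin n → ℝ → ℝ := fun k x => a k * (x - C) - KK (Sk k) x with hDdef
  have hDcont : ∀ k, Continuous (D k) :=
    fun k => ((continuous_const.mul (continuous_id.sub continuous_const)).sub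
      (KK_continuous (NSk k)) : _)
  have hDnn : ∀ k x, 0 ≤ x → 0 ≤ D k x := fun k x hx => sub_nonneg.2 (hA k x hx)
  -- a is positive
  have hKSk_big : ∀ k, ∃ y, C < y ∧ KK (Sk k) y = TT (Sk k) := by
    intro k
    refine ⟨max ((NSk k).2.2.2.choose) (C+1), lt_of_lt_of_le (by linarith) (le_max_right _ _), ?_⟩
    unfold KK
    rw [FF_at_R (NSk k) (le_max_left _ _)]
    ring
  have hapos : ∀ k, 0 < a k := by
    intro k
    obtain ⟨y, hy, hKy⟩ := hKSk_big k
    have h1 := hA k y (by linarith)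
    rw [hKy] at h1
    nlinarith [hTSkpos k]
  have hmomle : ∀ (g : ℝ → ℝ), IsStrategy g → mca g ≤ C →
      (∫ t in Ioi (0:ℝ), t * g t) ≤ C * TT g := fun g hg hm => (mca_le_iff hg).1 hm
  have hwm : ∀ m k, (∫ x in Ioi (0:ℝ), f m x * KK (Sk k) x) = 0 := by
    intro m k
    rw [← wp_eq (NSk k), hwpS _ (N m) k]
    exact Finset.sum_eq_zero fun ℓ _ => hzero m ℓ
  have hfD : ∀ m k, ∀ᵐ x ∂(volume.restrict (Ioi (0:ℝ))), f m x * D k x = 0 := by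
    intro m k
    have i4 : IntegrableOn (fun x => f m x * KK (Sk k) x) (Ioi (0:ℝ)) :=
      ((N m).mul_KK (NSk k)).integrableOn
    have i3 : IntegrableOn (fun x => a k * (x * f m x)) (Ioi (0:ℝ)) :=
      (((N m).integrable_id_mul).const_mul (a k)).integrableOn
    have i2 : IntegrableOn (fun x => a k * C * f m x) (Ioi (0:ℝ)) :=
      ((N m).integrable.const_mul (a k * C)).integrableOn
    have i1 : IntegrableOn (fun x => a k * (x * f m x) - a k * C * f m x) (Ioi (0:ℝ)) := by
      refine ((i3.sub i2).congr (Filter.Eventually.of_forall fun x => ?_) : _)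
      simp only [Pi.sub_apply]
    have hint : Integrable (fun x => f m x * D k x) := by
      refine (((((N m).integrable_id_mul).const_mul (a k)).sub
        (((N m).integrable).const_mul (a k * C))).sub ((N m).mul_KK (NSk k))).congr
        (Filter.Eventually.of_forall fun x => ?_)
      simp only [Pi.sub_apply, hDdef]
      ring
    have hval : (∫ x in Ioi (0:ℝ), f m x * D k x)
        = a k * ((∫ t in Ioi (0:ℝ), t * f m t) - C * TT (f m)) := by
      have h1 : ∀ x, f m x * D k x
          = (a k * (x * f m x) - a k * C * f m x) - f m x * KK (Sk k) x := by
        intro x; simp only [hDdef]; ring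
      simp only [h1]
      rw [integral_sub i1 i4, integral_sub i3 i2, hwm m k,
        MeasureTheory.integral_const_mul, MeasureTheory.integral_const_mul]
      unfold TT; ring
    have hnnae : ∀ᵐ x ∂(volume.restrict (Ioi (0:ℝ))), 0 ≤ f m x * D k x :=
      (ae_restrict_mem measurableSet_Ioi).mono fun x hx =>
        mul_nonneg ((N m).nonneg x) (hDnn k x (le_of_lt hx))
    have hle0 : (∫ x in Ioi (0:ℝ), f m x * D k x) ≤ 0 := by
      rw [hval]
      have h2 := hmomle (f m) (hstrat m) (hadm m)
      nlinarith [hapos k]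
    have hI0 := le_antisymm hle0 (integral_nonneg_of_ae hnnae)
    exact (integral_eq_zero_iff_of_nonneg_ae hnnae hint.integrableOn).1 hI0
  have haeAll : ∀ᵐ x ∂(volume.restrict (Ioi (0:ℝ))), ∀ k m, f m x * D k x = 0 := by
    rw [ae_all_iff]
    intro k
    rw [ae_all_iff]
    intro m
    exact hfD m k
  set A : Set ℝ := {x | ∀ k, D k x = 0} with hAdef
  have hAclosed : IsClosed A := by
    have : A = ⋂ k, (D k) ⁻¹' {0} := by
      ext x
      simp [hAdef, mem_iInter]
    rw [this]
    exact isClosed_iInter fun k => (isClosed_singleton).preimage (hDcont k)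
  have hgap : ∀ u v, 0 ≤ u → u ≤ v → (∀ t, t ∈ Ioc u v → t ∉ A) →
      FF ψ v - FF ψ u = 0 := by
    intro u v hu huv hNA
    rw [FF_diff Nψ hu huv]
    have hsub : Ioc u v ⊆ Ioi (0:ℝ) := fun t ht => hu.trans_lt ht.1
    have hae : ∀ᵐ x ∂(volume.restrict (Ioc u v)), ψ x = (fun _ => (0:ℝ)) x := by
      filter_upwards [ae_restrict_of_ae_restrict_of_subset hsub haeAll,
        ae_restrict_mem measurableSet_Ioc] with x hx hxm
      obtain ⟨k, hk⟩ : ∃ k, D k x ≠ 0 := by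
        by_contra hall
        push_neg at hall
        exact hNA x hxm hall
      show ψ x = 0
      rw [hψdef]
      refine Finset.sum_eq_zero fun ℓ _ => ?_
      rcases mul_eq_zero.1 (hx k ℓ) with h | h
      · exact h
      · exact absurd h hk
    rw [integral_congr_ae hae]
    simp
  -- MM and mm
  set SM : Set ℝ := {b | 0 ≤ b ∧ FF ψ b = TT ψ} with hSMdef
  have hSMne : SM.Nonempty :=
    ⟨max Nψ.2.2.2.choose 0, le_max_right _ _, FF_at_R Nψ (le_max_left _ _)⟩
  have hSMbdd : BddBelow SM := ⟨0, fun b hb => hb.1⟩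
  set MM := sInf SM with hMMdef
  have hMM0 : 0 ≤ MM := le_csInf hSMne fun b hb => hb.1
  have hFFMM : FF ψ MM = TT ψ := by
    refine eq_of_forall_abs_lt fun ε hε => ?_
    obtain ⟨δ, hδ, hδ'⟩ := Metric.continuous_iff.1 (FF_continuous Nψ) MM ε hε
    obtain ⟨b, hbS, hbδ⟩ := exists_lt_of_csInf_lt hSMne
      (lt_add_of_pos_right MM hδ : MM < MM + δ)
    have h1 := csInf_le hSMbdd hbS
    have h2 := hδ' b (by rw [Real.dist_eq, abs_lt]; constructor <;> linarith)
    rw [Real.dist_eq, hbS.2] at h2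
    rw [abs_sub_comm] at h2
    exact h2
  have hbelowMM : ∀ u, 0 ≤ u → u < MM → FF ψ u < TT ψ := by
    intro u hu huMM
    rcases (FF_le_TT Nψ u).lt_or_eq with h | h
    · exact h
    · exact absurd (csInf_le hSMbdd ⟨hu, h⟩) (not_le.2 huMM)
  set Sm : Set ℝ := {b | 0 ≤ b ∧ FF ψ b = 0} with hSmdef
  have hSmne : Sm.Nonempty := ⟨0, le_rfl, FF_zero ψ⟩
  have hSmbdd : BddAbove Sm := by
    refine ⟨MM, fun b hb => ?_⟩
    by_contra hbM
    push_neg at hbM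
    have h1 := FF_mono Nψ hbM.le
    rw [hFFMM, hb.2] at h1
    linarith
  set mm := sSup Sm with hmmdef
  have hmm0 : 0 ≤ mm := le_csSup hSmbdd ⟨le_rfl, FF_zero ψ⟩
  have hFFmm : FF ψ mm = 0 := by
    refine eq_of_forall_abs_lt fun ε hε => ?_
    obtain ⟨δ, hδ, hδ'⟩ := Metric.continuous_iff.1 (FF_continuous Nψ) mm ε hε
    obtain ⟨b, hbS, hbδ⟩ := exists_lt_of_lt_csSup hSmne
      (sub_lt_self mm hδ : mm - δ < mm)
    have h1 := le_csSup hSmbdd hbS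
    have h2 := hδ' b (by rw [Real.dist_eq, abs_lt]; constructor <;> linarith)
    rw [Real.dist_eq, hbS.2] at h2
    rw [abs_sub_comm] at h2
    simpa using h2
  have haboveMm : ∀ v, mm < v → 0 < FF ψ v := by
    intro v hv
    rcases (FF_nonneg Nψ v).lt_or_eq with h | h
    · exact h
    · exact absurd (le_csSup hSmbdd ⟨hmm0.trans hv.le, h.symm⟩) (not_le.2 hv)
  -- cumulative values at MM and mm
  have hfullMM : ∀ (p : ℝ → ℝ), Nice p → (∀ x, p x ≤ ψ x) → FF p MM = TT p := by
    intro p hp hple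
    have h1 := FF_split hp hMM0
    have h2 := FF_split Nψ hMM0
    have h3 : (∫ t in Ioi MM, p t) ≤ ∫ t in Ioi MM, ψ t :=
      setIntegral_mono_fn hp Nψ hple _ measurableSet_Ioi
    have h4 : 0 ≤ ∫ t in Ioi MM, p t :=
      setIntegral_nonneg measurableSet_Ioi fun t _ => hp.nonneg t
    linarith [hFFMM]
  have hzeromm : ∀ (p : ℝ → ℝ), Nice p → (∀ x, p x ≤ ψ x) → FF p mm = 0 := by
    intro p hp hple
    have h1 : FF p mm ≤ FF ψ mm := by
      unfold FF
      exact setIntegral_mono_fn hp Nψ hple _ measurableSet_Ioc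
    have h2 := FF_nonneg hp mm
    linarith [hFFmm]
  have hKSkMM : ∀ k, KK (Sk k) MM = TT (Sk k) := by
    intro k; unfold KK; rw [hfullMM _ (NSk k) (hSkle k)]; ring
  have hKSkmm : ∀ k, KK (Sk k) mm = -TT (Sk k) := by
    intro k; unfold KK; rw [hzeromm _ (NSk k) (hSkle k)]; ring
  have hMMC : C < MM := by
    by_contra hle
    push_neg at hle
    have h1 := G1 hC (NSk k0) (htest k0) MM hMM0 hle
    rw [hKSkMM k0] at h1
    linarith [hTSkpos k0]
  have hmmC : mm < C := by
    by_contra hge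
    push_neg at hge
    refine strategy_mass_below (hstrat k0) hC hge (hadm k0) ?_
    have h3 : (∫ t in Ioc (0:ℝ) mm, f k0 t) = 0 := by
      have h4 : (∫ t in Ioc (0:ℝ) mm, f k0 t) ≤ ∫ t in Ioc (0:ℝ) mm, ψ t :=
        setIntegral_mono_fn (N k0) Nψ (hfle k0) _ measurableSet_Ioc
      have h5 : 0 ≤ ∫ t in Ioc (0:ℝ) mm, f k0 t :=
        setIntegral_nonneg measurableSet_Ioc fun t _ => (N k0).nonneg t
      have h6 : (∫ t in Ioc (0:ℝ) mm, ψ t) = FF ψ mm := rfl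
      linarith [hFFmm]
    exact ae_zero_restrict_of_setIntegral_zero (N k0) measurableSet_Ioc h3
  have hMM2C : 2*C ≤ MM := by
    have h2 := G2 hC (NSk k0) (htest k0) 0 MM le_rfl hC hMMC
    rw [hKSkMM k0] at h2
    have hK0 : KK (Sk k0) 0 = -TT (Sk k0) := by
      unfold KK; rw [FF_zero]; ring
    rw [hK0] at h2
    nlinarith [hTSkpos k0]
  -- MM and mm belong to A
  have hexA_MM : ∀ δ, 0 < δ → ∃ t, (∀ k, D k t = 0) ∧ |t - MM| < δ := by
    intro δ hδ
    by_contra hno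
    push_neg at hno
    set u := max (MM - δ/2) 0 with hu
    have hu0 : 0 ≤ u := le_max_right _ _
    have hMMpos : 0 < MM := by linarith
    have huMM : u ≤ MM := max_le (by linarith) hMM0
    have huMM' : u < MM := max_lt (by linarith) hMMpos
    have hg := hgap u MM hu0 huMM (fun t ht htA => ?_)
    · have h7 := hbelowMM u hu0 huMM'
      rw [hFFMM] at hg
      linarith
    · have h8 := hno t htA
      have h9 : MM - t < δ := by
        have := ht.1
        have hu1 : MM - δ/2 ≤ u := le_max_left _ _
        linarith
      have h10 : |t - MM| < δ := by
        rw [abs_lt]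
        exact ⟨by linarith, by linarith [ht.2]⟩
      exact absurd h8 (not_le.2 h10)
  have hexA_mm : ∀ δ, 0 < δ → ∃ t, (∀ k, D k t = 0) ∧ |t - mm| < δ := by
    intro δ hδ
    by_contra hno
    push_neg at hno
    have hg := hgap mm (mm + δ/2) hmm0 (by linarith) (fun t ht htA => ?_)
    · have h7 := haboveMm (mm + δ/2) (by linarith)
      rw [hFFmm] at hg
      linarith
    · have h8 := hno t htA
      have h9 : |t - mm| < δ := by
        rw [abs_lt]
        constructor
        · linarith [ht.1]
        · linarith [ht.2]
      exact absurd h8 (not_le.2 h9)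
  have hDMM : ∀ k, D k MM = 0 := by
    intro k
    refine zero_of_cont (hDcont k) (hDnn k MM hMM0) fun δ hδ => ?_
    obtain ⟨t, htA, htδ⟩ := hexA_MM δ hδ
    exact ⟨t, htA k, htδ⟩
  have hDmm : ∀ k, D k mm = 0 := by
    intro k
    refine zero_of_cont (hDcont k) (hDnn k mm hmm0) fun δ hδ => ?_
    obtain ⟨t, htA, htδ⟩ := hexA_mm δ hδ
    exact ⟨t, htA k, htδ⟩
  have haMM : ∀ k, a k * (MM - C) = TT (Sk k) := by
    intro k
    have h1 := hDMM k
    simp only [hDdef] at h1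
    rw [hKSkMM k] at h1
    linarith
  have hamm : ∀ k, a k * (mm - C) = -TT (Sk k) := by
    intro k
    have h1 := hDmm k
    simp only [hDdef] at h1
    rw [hKSkmm k] at h1
    linarith
  have hmmMM : mm + MM = 2*C := by
    have h1 := haMM k0
    have h2 := hamm k0
    have h3 : a k0 * (mm + MM - 2*C) = 0 := by linarith [h1, h2]; 
    have h4 := (mul_eq_zero.1 h3).resolve_left (ne_of_gt (hapos k0))
    linarith
  have hmmeq : mm = 0 := by linarith
  have hMMeq : MM = 2*C := by linarith
  have h0A : ∀ k, D k 0 = 0 := fun k => by have h := hDmm k; rwa [hmmeq] at h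
  have hKSk_split : ∀ k x, KK (Sk k) x = (∑ ℓ, KK (f ℓ) x) - KK (f k) x := by
    intro k x
    have h2 : KK (Sk k) x = ∑ ℓ ∈ Finset.univ.erase k, KK (f ℓ) x := by
      unfold KK
      rw [show FF (Sk k) x = ∑ ℓ ∈ Finset.univ.erase k, FF (f ℓ) x from
          FF_sum _ _ (fun i _ => N i) x,
        hTSk k, Finset.mul_sum, Finset.sum_sub_distrib]
    rw [h2, Finset.sum_erase_eq_sub (Finset.mem_univ k)]
  have hsum_KSk : ∀ x, (∑ k, KK (Sk k) x) = ((n:ℝ) - 1) * (∑ ℓ, KK (f ℓ) x) := by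
    intro x
    rw [Finset.sum_congr rfl fun k (_ : k ∈ Finset.univ) => hKSk_split k x,
      Finset.sum_sub_distrib, Finset.sum_const, Finset.card_univ, Fintype.card_fin,
      nsmul_eq_mul]
    ring
  set cb : Fin n → ℝ := fun j => (∑ k, a k) - ((n:ℝ) - 1) * a j with hcbdef
  have hn1 : (0:ℝ) < (n:ℝ) - 1 := by
    have h : (2:ℝ) ≤ (n:ℝ) := by exact_mod_cast hn
    linarith
  have honA : ∀ j x, (∀ k, D k x = 0) → ((n:ℝ) - 1) * KK (f j) x = cb j * (x - C) := by
    intro j x hx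
    have h1 : ∀ k, KK (Sk k) x = a k * (x - C) := by
      intro k
      have h0 := hx k
      simp only [hDdef] at h0
      linarith
    have h2 : (∑ k, KK (Sk k) x) = (∑ k, a k) * (x - C) := by
      rw [Finset.sum_congr rfl fun k (_ : k ∈ Finset.univ) => h1 k, ← Finset.sum_mul]
    have h3 := hsum_KSk x
    have h6 : ((n:ℝ)-1) * (∑ ℓ, KK (f ℓ) x) = (∑ k, a k) * (x - C) := by
      rw [← h3]; exact h2
    have h7 : KK (f j) x = (∑ ℓ, KK (f ℓ) x) - a j * (x - C) := by
      have h8 := hKSk_split j x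
      have h9 := h1 j
      linarith
    calc ((n:ℝ)-1) * KK (f j) x
        = ((n:ℝ)-1) * (∑ ℓ, KK (f ℓ) x) - ((n:ℝ)-1) * (a j * (x - C)) := by rw [h7]; ring
      _ = (∑ k, a k) * (x - C) - ((n:ℝ)-1) * (a j * (x - C)) := by rw [h6]
      _ = cb j * (x - C) := by rw [hcbdef]; ring
  have hKfMM : ∀ j, KK (f j) MM = TT (f j) := by
    intro j; unfold KK; rw [hfullMM _ (N j) (hfle j)]; ring
  have hcbpos : ∀ j, 0 < cb j := by
    intro j
    have h1 := honA j MM hDMM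
    rw [hKfMM j] at h1
    by_contra hcb
    push_neg at hcb
    nlinarith [mul_pos hn1 (hTfpos j), hMMC]
  have hbound : ∀ j x, 0 < x → ((n:ℝ)-1) * KK (f j) x ≤ cb j * (x - C) := by
    intro j x hx
    have h0A' : (0:ℝ) ∈ A := h0A
    have hAx : (A ∩ Icc 0 x).Nonempty := ⟨0, h0A', ⟨le_rfl, hx.le⟩⟩
    have hcomp : IsCompact (A ∩ Icc 0 x) :=
      isCompact_Icc.of_isClosed_subset (hAclosed.inter isClosed_Icc) inter_subset_right
    set s0 := sSup (A ∩ Icc 0 x) with hs0def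
    have hs0mem := hcomp.sSup_mem hAx
    have hs00 : 0 ≤ s0 := hs0mem.2.1
    have hs0x : s0 ≤ x := hs0mem.2.2
    have hnogap : ∀ t, t ∈ Ioc s0 x → t ∉ A := by
      intro t ht htA
      have h1 : t ∈ A ∩ Icc 0 x := ⟨htA, ⟨hs00.trans ht.1.le, ht.2⟩⟩
      exact absurd (le_csSup hcomp.bddAbove h1) (not_le.2 ht.1)
    have hFFeq := hgap s0 x hs00 hs0x hnogap
    have hfj_eq : FF (f j) x = FF (f j) s0 := by
      have h1 := FF_diff (N j) hs00 hs0x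
      have h2 := FF_diff Nψ hs00 hs0x
      have h3 : (∫ t in Ioc s0 x, f j t) ≤ ∫ t in Ioc s0 x, ψ t :=
        setIntegral_mono_fn (N j) Nψ (hfle j) _ measurableSet_Ioc
      have h4 : 0 ≤ ∫ t in Ioc s0 x, f j t :=
        setIntegral_nonneg measurableSet_Ioc fun t _ => (N j).nonneg t
      linarith
    have hKeq : KK (f j) x = KK (f j) s0 := by unfold KK; rw [hfj_eq]
    have h5 := honA j s0 hs0mem.1
    rw [hKeq, h5]
    exact mul_le_mul_of_nonneg_left (by linarith) (hcbpos j).le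
  refine ⟨fun j k => hzero k j, fun k g hg hmcag => ?_⟩
  have hgN := nice_of_strategy hg
  have hwpneg : wp g (f k) ≤ 0 := by
    rw [wp_eq (N k)]
    set β : ℝ := cb k / ((n:ℝ)-1) with hβ
    have hβpos : 0 < β := div_pos (hcbpos k) hn1
    have hptw : ∀ x, 0 < x → KK (f k) x ≤ β * (x - C) := by
      intro x hx
      rw [hβ, div_mul_eq_mul_div, le_div_iff₀ hn1]
      have h1 := hbound k x hx
      nlinarith [h1]
    have hint2 : IntegrableOn (fun x => g x * (β * (x - C))) (Ioi (0:ℝ)) := by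
      refine ((((hgN.integrable_id_mul.const_mul β).sub
        (hgN.integrable.const_mul (β*C))).integrableOn).congr
        (Filter.Eventually.of_forall fun x => ?_) : _)
      simp only [Pi.sub_apply]
      ring
    have hle : (∫ x in Ioi (0:ℝ), g x * KK (f k) x)
        ≤ ∫ x in Ioi (0:ℝ), g x * (β * (x - C)) := by
      refine setIntegral_mono_on ((hgN.mul_KK (N k)).integrableOn) hint2 measurableSet_Ioi
        (fun x hx => mul_le_mul_of_nonneg_left (hptw x hx) (hgN.nonneg x))
    have hrhs : (∫ x in Ioi (0:ℝ), g x * (β * (x - C)))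
        = β * ((∫ t in Ioi (0:ℝ), t * g t) - C * TT g) := by
      have h1 : ∀ x, g x * (β * (x - C)) = β * (x * g x) - (β * C) * g x := fun x => by ring
      simp only [h1]
      rw [integral_sub ((hgN.integrable_id_mul.const_mul β).integrableOn)
        ((hgN.integrable.const_mul (β*C)).integrableOn), MeasureTheory.integral_const_mul,
        MeasureTheory.integral_const_mul]
      unfold TT; ring
    have hmg := hmomle g hg hmcag
    rw [hrhs] at hle
    nlinarith [hβpos]
  have h2 := wp_antisymm (N k) hgN
  have h3 := wp_antisymm hgN (N k)
  linarith
end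

section
/- Fix a positive integer M, let the constraint value be C = 1/2, and restrict the discrete game to strategies supported in {0, 1, …, M}. If M is odd, then a discrete strategy A with mca(A) ≤ 1/2 satisfies wp(A; B) ≥ 0 for every discrete strategy B supported in {0, …, M} with mca(B) ≤ 1/2 if and only if A is uniform, i.e. there is a > 0 with A(j) = a for all 0 ≤ j ≤ M. If M is even, then A satisfies this condition if and only if mca(A) = 1/2, A(2j) = A(0) and A(2j+1) = A(1) for all j with 0 ≤ 2j ≤ M and 0 ≤ 2j+1 ≤ M. -/
open Set

/-- A discrete strategy: a nonnegative finitely supported function on `ℕ`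
with positive total mass `|A| = Σ_j A(j)`. -/
def IsDStrategy (A : ℕ → ℝ) : Prop :=
  (∀ j, 0 ≤ A j) ∧ (Function.support A).Finite ∧ 0 < ∑ᶠ j, A j

/-- Mean competitive ability on the grid `{j/M : j ∈ ℕ}`:
`mcaD M A = (Σ_j (j/M) A(j)) / (Σ_j A(j))`. -/
noncomputable def mcaD (M : ℕ) (A : ℕ → ℝ) : ℝ :=
  (∑ᶠ j : ℕ, ((j : ℝ) / M) * A j) / (∑ᶠ j : ℕ, A j)

/-- Discrete payoff `wpD A B = Σ_j A(j) (Σ_{i<j} B(i) − Σ_{i>j} B(i))`. -/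
noncomputable def wpD (A B : ℕ → ℝ) : ℝ :=
  ∑ᶠ j : ℕ, A j * ((∑ᶠ i ∈ Iio j, B i) - ∑ᶠ i ∈ Ioi j, B i)

namespace Stmt15

/-- partial sum -/
noncomputable def P (A : ℕ → ℝ) (n : ℕ) : ℝ := ∑ j ∈ Finset.range n, A j

/-- the "coefficient" function `t_i = Σ_{j>i} A j − Σ_{j<i} A j`. -/
noncomputable def tf (M : ℕ) (A : ℕ → ℝ) (i : ℕ) : ℝ :=
  (∑ j ∈ Finset.Ioc i M, A j) - ∑ j ∈ Finset.range i, A j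

/-- constraint functional `Σ (M − 2j) A j`. -/
noncomputable def Ds (M : ℕ) (A : ℕ → ℝ) : ℝ :=
  ∑ j ∈ Finset.range (M+1), (((M:ℝ) - 2*j) * A j)

lemma finsum_eq_range (M : ℕ) (f : ℕ → ℝ) (h : ∀ j, M < j → f j = 0) :
    ∑ᶠ j, f j = ∑ j ∈ Finset.range (M+1), f j := by
  apply finsum_eq_finset_sum_of_support_subset
  intro j hj
  simp only [Function.mem_support] at hj
  simp only [Finset.coe_range, Set.mem_Iio]
  by_contra hc
  exact hj (h j (by omega))

lemma wpD_eq (M : ℕ) (A B : ℕ → ℝ) (hA : ∀ j, M < j → A j = 0)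
    (hB : ∀ j, M < j → B j = 0) :
    wpD A B = ∑ j ∈ Finset.range (M+1),
      A j * ((∑ i ∈ Finset.range j, B i) - ∑ i ∈ Finset.Ioc j M, B i) := by
  have h1 : ∀ j : ℕ, (∑ᶠ i ∈ Set.Iio j, B i) = ∑ i ∈ Finset.range j, B i := by
    intro j
    rw [← Finset.coe_range, finsum_mem_coe_finset]
  have h2 : ∀ j : ℕ, (∑ᶠ i ∈ Set.Ioi j, B i) = ∑ i ∈ Finset.Ioc j M, B i := by
    intro j
    apply finsum_mem_eq_sum_of_inter_support_eq
    ext i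
    simp only [Set.mem_inter_iff, Set.mem_Ioi, Function.mem_support, Finset.coe_Ioc,
      Set.mem_Ioc]
    constructor
    · rintro ⟨hij, hi⟩
      refine ⟨⟨hij, ?_⟩, hi⟩
      by_contra hc
      exact hi (hB i (by omega))
    · rintro ⟨⟨hij, _⟩, hi⟩
      exact ⟨hij, hi⟩
  rw [wpD]
  rw [finsum_eq_range M _ (fun j hj => by rw [hA j hj, zero_mul])]
  exact Finset.sum_congr rfl fun j _ => by rw [h1 j, h2 j]

variable (M : ℕ)

lemma range_eq_filter (j : ℕ) (hj : j ≤ M) :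
    Finset.range j = (Finset.range (M+1)).filter (· < j) := by
  ext i; simp only [Finset.mem_range, Finset.mem_filter]; omega

lemma Ioc_eq_filter (j : ℕ) :
    Finset.Ioc j M = (Finset.range (M+1)).filter (j < ·) := by
  ext i; simp only [Finset.mem_Ioc, Finset.mem_range, Finset.mem_filter]; omega

lemma swap (A B : ℕ → ℝ) :
    ∑ j ∈ Finset.range (M+1),
      A j * ((∑ i ∈ Finset.range j, B i) - ∑ i ∈ Finset.Ioc j M, B i)
    = ∑ i ∈ Finset.range (M+1),
      B i * ((∑ j ∈ Finset.Ioc i M, A j) - ∑ j ∈ Finset.range i, A j) := by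
  have key1 : ∀ j ∈ Finset.range (M+1),
      A j * ((∑ i ∈ Finset.range j, B i) - ∑ i ∈ Finset.Ioc j M, B i)
      = ∑ i ∈ Finset.range (M+1),
          ((if i < j then A j * B i else 0) - (if j < i then A j * B i else 0)) := by
    intro j hj
    rw [range_eq_filter M j (by simpa using Nat.lt_succ_iff.mp (Finset.mem_range.mp hj)),
      Ioc_eq_filter M j, Finset.sum_filter, Finset.sum_filter, mul_sub,
      Finset.mul_sum, Finset.mul_sum, ← Finset.sum_sub_distrib]
    refine Finset.sum_congr rfl fun i _ => by split_ifs <;> ring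
  have key2 : ∀ i ∈ Finset.range (M+1),
      B i * ((∑ j ∈ Finset.Ioc i M, A j) - ∑ j ∈ Finset.range i, A j)
      = ∑ j ∈ Finset.range (M+1),
          ((if i < j then A j * B i else 0) - (if j < i then A j * B i else 0)) := by
    intro i hi
    rw [range_eq_filter M i (by simpa using Nat.lt_succ_iff.mp (Finset.mem_range.mp hi)),
      Ioc_eq_filter M i, Finset.sum_filter, Finset.sum_filter, mul_sub,
      Finset.mul_sum, Finset.mul_sum, ← Finset.sum_sub_distrib]
    refine Finset.sum_congr rfl fun j _ => by split_ifs <;> ring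
  rw [Finset.sum_congr rfl key1, Finset.sum_congr rfl key2, Finset.sum_comm]


lemma wpD_eq_t (A B : ℕ → ℝ) (hA : ∀ j, M < j → A j = 0) (hB : ∀ j, M < j → B j = 0) :
    wpD A B = ∑ i ∈ Finset.range (M+1), B i * tf M A i := by
  rw [wpD_eq M A B hA hB, swap M A B]
  rfl

lemma tf_eq_P (A : ℕ → ℝ) (i : ℕ) (hi : i ≤ M) :
    tf M A i = P A (M+1) - P A (i+1) - P A i := by
  have hsub : Finset.Ioc i M = Finset.range (M+1) \ Finset.range (i+1) := by
    ext j; simp only [Finset.mem_Ioc, Finset.mem_sdiff, Finset.mem_range]; omega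
  have hss : Finset.range (i+1) ⊆ Finset.range (M+1) := by
    apply Finset.range_subset_range.mpr; omega
  rw [tf, hsub, Finset.sum_sdiff_eq_sub hss]
  rfl

lemma strat_sum_pos (A : ℕ → ℝ) (hA : IsDStrategy A) (hs : ∀ j, M < j → A j = 0) :
    0 < ∑ j ∈ Finset.range (M+1), A j := by
  rw [← finsum_eq_range M A hs]; exact hA.2.2

lemma Ds_eq (A : ℕ → ℝ) (hM : 0 < M) :
    Ds M A = (M:ℝ) * ((∑ j ∈ Finset.range (M+1), A j)
      - 2 * (∑ j ∈ Finset.range (M+1), ((j:ℝ)/M) * A j)) := by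
  have hM' : (M:ℝ) ≠ 0 := Nat.cast_ne_zero.mpr hM.ne'
  have key : ∀ j ∈ Finset.range (M+1), ((M:ℝ) - 2*j) * A j
      = (M:ℝ)*A j - 2*((M:ℝ)*(((j:ℝ)/M)*A j)) := by
    intro j _; field_simp
  rw [Ds, Finset.sum_congr rfl key, Finset.sum_sub_distrib, ← Finset.mul_sum,
    ← Finset.mul_sum, ← Finset.mul_sum]
  ring

lemma mca_le_iff (A : ℕ → ℝ) (hM : 0 < M) (hA : IsDStrategy A)
    (hs : ∀ j, M < j → A j = 0) : mcaD M A ≤ 1/2 ↔ 0 ≤ Ds M A := by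
  have hS : 0 < ∑ j ∈ Finset.range (M+1), A j := strat_sum_pos M A hA hs
  have hnum : (∑ᶠ j : ℕ, ((j : ℝ) / M) * A j)
      = ∑ j ∈ Finset.range (M+1), ((j:ℝ)/M) * A j :=
    finsum_eq_range M _ (fun j hj => by rw [hs j hj, mul_zero])
  have hden : (∑ᶠ j : ℕ, A j) = ∑ j ∈ Finset.range (M+1), A j := finsum_eq_range M A hs
  have hM' : (0:ℝ) < M := Nat.cast_pos.mpr hM
  rw [mcaD, hnum, hden, Ds_eq M A hM, div_le_div_iff₀ hS two_pos]
  constructor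
  · intro h; nlinarith
  · intro h; nlinarith

lemma mca_eq_iff (A : ℕ → ℝ) (hM : 0 < M) (hA : IsDStrategy A)
    (hs : ∀ j, M < j → A j = 0) : mcaD M A = 1/2 ↔ Ds M A = 0 := by
  have hS : 0 < ∑ j ∈ Finset.range (M+1), A j := strat_sum_pos M A hA hs
  have hnum : (∑ᶠ j : ℕ, ((j : ℝ) / M) * A j)
      = ∑ j ∈ Finset.range (M+1), ((j:ℝ)/M) * A j :=
    finsum_eq_range M _ (fun j hj => by rw [hs j hj, mul_zero])
  have hden : (∑ᶠ j : ℕ, A j) = ∑ j ∈ Finset.range (M+1), A j := finsum_eq_range M A hs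
  have hM' : (0:ℝ) < M := Nat.cast_pos.mpr hM
  rw [mcaD, hnum, hden, Ds_eq M A hM, div_eq_iff hS.ne']
  constructor
  · intro h; nlinarith
  · intro h; nlinarith

/-- two point masses: `c` at `i` and `d` at `k`. -/
def Pt (c : ℝ) (i : ℕ) (d : ℝ) (k : ℕ) : ℕ → ℝ :=
  fun j => c * (if j = i then 1 else 0) + d * (if j = k then 1 else 0)

lemma Pt_sum (c : ℝ) (i : ℕ) (d : ℝ) (k : ℕ) (hi : i ≤ M) (hk : k ≤ M) (f : ℕ → ℝ) :
    ∑ j ∈ Finset.range (M+1), Pt c i d k j * f j = c * f i + d * f k := by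
  have h1 : ∀ j ∈ Finset.range (M+1), Pt c i d k j * f j
      = (if j = i then c * f j else 0) + (if j = k then d * f j else 0) := by
    intro j _; rw [Pt]; split_ifs <;> ring
  rw [Finset.sum_congr rfl h1, Finset.sum_add_distrib, Finset.sum_ite_eq',
    Finset.sum_ite_eq', if_pos (Finset.mem_range.mpr (by omega)),
    if_pos (Finset.mem_range.mpr (by omega))]

lemma Pt_supp (c : ℝ) (i : ℕ) (d : ℝ) (k : ℕ) (hi : i ≤ M) (hk : k ≤ M) :
    ∀ j, M < j → Pt c i d k j = 0 := by
  intro j hj; rw [Pt, if_neg (by omega), if_neg (by omega)]; ring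

lemma Pt_strategy (c : ℝ) (i : ℕ) (d : ℝ) (k : ℕ) (hi : i ≤ M) (hk : k ≤ M)
    (hc : 0 ≤ c) (hd : 0 ≤ d) (hcd : 0 < c + d) : IsDStrategy (Pt c i d k) := by
  refine ⟨fun j => by rw [Pt]; positivity, ?_, ?_⟩
  · apply Set.Finite.subset (Set.finite_Icc 0 M)
    intro j hj
    simp only [Function.mem_support] at hj
    simp only [Set.mem_Icc]
    constructor
    · omega
    · by_contra hb; exact hj (Pt_supp M c i d k hi hk j (by omega))
  · rw [finsum_eq_range M _ (Pt_supp M c i d k hi hk)]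
    have := Pt_sum M c i d k hi hk (fun _ => 1)
    simp only [mul_one] at this
    calc (0:ℝ) < c + d := hcd
    _ = ∑ j ∈ Finset.range (M+1), Pt c i d k j := by
        exact this.symm

lemma Pt_Ds (c : ℝ) (i : ℕ) (d : ℝ) (k : ℕ) (hi : i ≤ M) (hk : k ≤ M) :
    Ds M (Pt c i d k) = c * ((M:ℝ) - 2*i) + d * ((M:ℝ) - 2*k) := by
  rw [Ds, ← Pt_sum M c i d k hi hk (fun j => (M:ℝ) - 2*j)]
  exact Finset.sum_congr rfl fun j _ => by ring

/-- the uniform strategy -/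
def U (M : ℕ) : ℕ → ℝ := fun j => if j ≤ M then 1 else 0

lemma U_supp : ∀ j, M < j → U M j = 0 := fun j hj => if_neg (by omega)

lemma U_strategy : IsDStrategy (U M) := by
  refine ⟨fun j => by rw [U]; positivity, ?_, ?_⟩
  · apply Set.Finite.subset (Set.finite_Icc 0 M)
    intro j hj
    simp only [Function.mem_support] at hj
    simp only [Set.mem_Icc]
    refine ⟨by omega, ?_⟩
    by_contra hb; exact hj (U_supp M j (by omega))
  · rw [finsum_eq_range M _ (U_supp M)]
    have : ∀ j ∈ Finset.range (M+1), U M j = 1 := by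
      intro j hj; exact if_pos (by simpa [Nat.lt_succ_iff] using Finset.mem_range.mp hj)
    rw [Finset.sum_congr rfl this, Finset.sum_const, Finset.card_range]
    simp
    positivity

lemma gauss : ∑ j ∈ Finset.range (M+1), (j:ℝ) = (M:ℝ) * (M+1) / 2 := by
  have := Finset.sum_range_id_mul_two (M+1)
  have h2 : ((∑ i ∈ Finset.range (M+1), i) * 2 : ℕ) = ((M+1) * M : ℕ) := by
    rw [this]; simp
  have h3 : ((∑ i ∈ Finset.range (M+1), i : ℕ) : ℝ) * 2 = ((M:ℝ)+1) * M := by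
    exact_mod_cast h2
  push_cast at h3
  linarith

lemma U_Ds : Ds M (U M) = 0 := by
  have h1 : ∀ j ∈ Finset.range (M+1), ((M:ℝ) - 2*j) * U M j = (M:ℝ) - 2*(j:ℝ) := by
    intro j hj
    rw [U, if_pos (by simpa [Nat.lt_succ_iff] using Finset.mem_range.mp hj), mul_one]
  rw [Ds, Finset.sum_congr rfl h1, Finset.sum_sub_distrib, Finset.sum_const,
    Finset.card_range, ← Finset.mul_sum, gauss M]
  ring

lemma wpD_U (A : ℕ → ℝ) (hA : ∀ j, M < j → A j = 0) : wpD A (U M) = - Ds M A := by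
  rw [wpD_eq M A (U M) hA (U_supp M)]
  have key : ∀ j ∈ Finset.range (M+1),
      A j * ((∑ i ∈ Finset.range j, U M i) - ∑ i ∈ Finset.Ioc j M, U M i)
      = -(((M:ℝ) - 2*j) * A j) := by
    intro j hj
    have hjM : j ≤ M := by simpa [Nat.lt_succ_iff] using Finset.mem_range.mp hj
    have h1 : (∑ i ∈ Finset.range j, U M i) = (j:ℝ) := by
      have : ∀ i ∈ Finset.range j, U M i = 1 := by
        intro i hi; exact if_pos (by have := Finset.mem_range.mp hi; omega)
      rw [Finset.sum_congr rfl this, Finset.sum_const, Finset.card_range]; simp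
    have h2 : (∑ i ∈ Finset.Ioc j M, U M i) = (M:ℝ) - (j:ℝ) := by
      have : ∀ i ∈ Finset.Ioc j M, U M i = 1 := by
        intro i hi; exact if_pos (Finset.mem_Ioc.mp hi).2
      rw [Finset.sum_congr rfl this, Finset.sum_const, Nat.card_Ioc]
      have : ((M - j : ℕ) : ℝ) = (M:ℝ) - (j:ℝ) := by
        rw [Nat.cast_sub hjM]
      simp [this]
    rw [h1, h2]; ring
  rw [Finset.sum_congr rfl key, Ds, ← Finset.sum_neg_distrib]

/-- the key sufficiency lemma -/
lemma optimal_of (hM : 0 < M) (A : ℕ → ℝ) (hAsupp : ∀ j, M < j → A j = 0)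
    (c : ℝ) (hc : 0 ≤ c) (ht : ∀ i, i ≤ M → tf M A i = ((M:ℝ) - 2*i) * c) :
    ∀ B : ℕ → ℝ, IsDStrategy B → (∀ j, M < j → B j = 0) → mcaD M B ≤ 1/2 →
      0 ≤ wpD A B := by
  intro B hB hBs hBC
  rw [wpD_eq_t M A B hAsupp hBs]
  have key : ∑ i ∈ Finset.range (M+1), B i * tf M A i = c * Ds M B := by
    rw [Ds, Finset.mul_sum]
    refine Finset.sum_congr rfl fun i hi => ?_
    rw [ht i (by simpa [Nat.lt_succ_iff] using Finset.mem_range.mp hi)]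
    ring
  rw [key]
  exact mul_nonneg hc ((mca_le_iff M B hM hB hBs).mp hBC)

lemma P_succ (A : ℕ → ℝ) (n : ℕ) : P A (n+1) = P A n + A n := Finset.sum_range_succ A n

lemma P_even (A : ℕ → ℝ) (he : ∀ j, 2*j ≤ M → A (2*j) = A 0)
    (ho : ∀ j, 2*j+1 ≤ M → A (2*j+1) = A 1) :
    ∀ n, 2*n ≤ M+1 → P A (2*n) = n * (A 0 + A 1) := by
  intro n
  induction n with
  | zero => intro _; simp [P]
  | succ n ih =>
    intro hn
    have h1 : 2*n+1 = 2*n + 1 := rfl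
    have e1 : P A (2*(n+1)) = P A (2*n) + A (2*n) + A (2*n+1) := by
      have : 2*(n+1) = (2*n+1)+1 := by ring
      rw [this, P_succ, P_succ]
    rw [e1, ih (by omega), he n (by omega), ho n (by omega)]
    push_cast
    ring

lemma P_odd (A : ℕ → ℝ) (he : ∀ j, 2*j ≤ M → A (2*j) = A 0)
    (ho : ∀ j, 2*j+1 ≤ M → A (2*j+1) = A 1) :
    ∀ n, 2*n+1 ≤ M+1 → P A (2*n+1) = n * (A 0 + A 1) + A 0 := by
  intro n hn
  rw [P_succ, P_even M A he ho n (by omega), he n (by omega)]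

lemma forward (hM : 0 < M) (A : ℕ → ℝ) (hA : IsDStrategy A)
    (hs : ∀ j, M < j → A j = 0) (hAC : mcaD M A ≤ 1/2)
    (H : ∀ B : ℕ → ℝ, IsDStrategy B → (∀ j, M < j → B j = 0) → mcaD M B ≤ 1/2 →
      0 ≤ wpD A B) :
    Ds M A = 0 ∧ (∀ i, i+1 ≤ M → A i + A (i+1) = 2 * (tf M A 0 / M)) := by
  have hMR : (0:ℝ) < M := Nat.cast_pos.mpr hM
  -- step 1 : Ds M A = 0
  have hUmca : mcaD M (U M) ≤ 1/2 :=
    (mca_le_iff M (U M) hM (U_strategy M) (U_supp M)).mpr (le_of_eq (U_Ds M).symm)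
  have hU0 := H (U M) (U_strategy M) (U_supp M) hUmca
  rw [wpD_U M A hs] at hU0
  have hDs : Ds M A = 0 := by
    have := (mca_le_iff M A hM hA hs).mp hAC
    linarith
  -- sum of tf over range is 0
  have htsum : ∑ i ∈ Finset.range (M+1), tf M A i = 0 := by
    have e1 : wpD A (U M) = ∑ i ∈ Finset.range (M+1), U M i * tf M A i :=
      wpD_eq_t M A (U M) hs (U_supp M)
    have e2 : ∑ i ∈ Finset.range (M+1), U M i * tf M A i
        = ∑ i ∈ Finset.range (M+1), tf M A i := by
      refine Finset.sum_congr rfl fun i hi => ?_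
      rw [U, if_pos (by simpa [Nat.lt_succ_iff] using Finset.mem_range.mp hi), one_mul]
    rw [← e2, ← e1, wpD_U M A hs, hDs, neg_zero]
  -- delta tests
  have hδ : ∀ i, 2*i ≤ M → 0 ≤ tf M A i := by
    intro i hi2
    have hi : i ≤ M := by omega
    have hstrat := Pt_strategy M 1 i 0 0 hi (Nat.zero_le M) zero_le_one le_rfl
      (by norm_num)
    have hsupp := Pt_supp M 1 i 0 0 hi (Nat.zero_le M)
    have hds : 0 ≤ Ds M (Pt 1 i 0 0) := by
      rw [Pt_Ds M 1 i 0 0 hi (Nat.zero_le M)]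
      have : (2*(i:ℝ)) ≤ M := by exact_mod_cast hi2
      nlinarith
    have hw := H _ hstrat hsupp ((mca_le_iff M _ hM hstrat hsupp).mpr hds)
    rw [wpD_eq_t M _ _ hs hsupp, Pt_sum M 1 i 0 0 hi (Nat.zero_le M) (tf M A)] at hw
    linarith
  -- pair tests
  have hpair : ∀ i k, 2*i < M → M < 2*k → k ≤ M →
      0 ≤ ((2*(k:ℝ)) - M) * tf M A i + ((M:ℝ) - 2*i) * tf M A k := by
    intro i k hi2 hk2 hk
    have hi : i ≤ M := by omega
    have hcpos : (0:ℝ) < 2*(k:ℝ) - M := by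
      have : (M:ℝ) < 2*(k:ℝ) := by exact_mod_cast hk2
      linarith
    have hdpos : (0:ℝ) < (M:ℝ) - 2*i := by
      have : (2*(i:ℝ)) < M := by exact_mod_cast hi2
      linarith
    have hstrat := Pt_strategy M (2*(k:ℝ) - M) i ((M:ℝ) - 2*i) k hi hk
      hcpos.le hdpos.le (by linarith)
    have hsupp := Pt_supp M (2*(k:ℝ) - M) i ((M:ℝ) - 2*i) k hi hk
    have hds : 0 ≤ Ds M (Pt (2*(k:ℝ) - M) i ((M:ℝ) - 2*i) k) := by
      rw [Pt_Ds M _ i _ k hi hk]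
      ring_nf
      rfl
    have hw := H _ hstrat hsupp ((mca_le_iff M _ hM hstrat hsupp).mpr hds)
    rw [wpD_eq_t M _ _ hs hsupp, Pt_sum M _ i _ k hi hk (tf M A)] at hw
    exact hw
  -- antisymmetry
  have hanti : ∀ i, i ≤ M → tf M A i + tf M A (M - i) = 0 := by
    have hg1 : ∀ i, 2*i ≤ M → 0 ≤ tf M A i + tf M A (M - i) := by
      intro i hi2
      rcases eq_or_lt_of_le hi2 with heq | hlt
      · have hmi : M - i = i := by omega
        rw [hmi]
        have := hδ i hi2
        linarith
      · have hp := hpair i (M - i) hlt (by omega) (by omega)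
        have hc : (2*(((M - i : ℕ)):ℝ) - M) = (M:ℝ) - 2*i := by
          rw [Nat.cast_sub (by omega : i ≤ M)]; ring
        rw [hc] at hp
        have hdpos : (0:ℝ) < (M:ℝ) - 2*i := by
          have : (2*(i:ℝ)) < M := by exact_mod_cast hlt
          linarith
        by_contra hcon
        push_neg at hcon
        nlinarith
    have hg : ∀ i ∈ Finset.range (M+1), 0 ≤ tf M A i + tf M A (M - i) := by
      intro i hi
      have hiM : i ≤ M := by simpa [Nat.lt_succ_iff] using Finset.mem_range.mp hi
      by_cases h2 : 2*i ≤ M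
      · exact hg1 i h2
      · have h2' : 2*(M - i) ≤ M := by omega
        have := hg1 (M - i) h2'
        have hmm : M - (M - i) = i := by omega
        rw [hmm] at this
        linarith
    have hsum0 : ∑ i ∈ Finset.range (M+1), (tf M A i + tf M A (M - i)) = 0 := by
      rw [Finset.sum_add_distrib, htsum]
      have e1 : ∑ i ∈ Finset.range (M+1), tf M A (M - i)
          = ∑ i ∈ Finset.range (M+1), tf M A (M + 1 - 1 - i) :=
        Finset.sum_congr rfl fun i _ => by congr 1
      rw [e1, Finset.sum_range_reflect (tf M A) (M+1), htsum, add_zero]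
    intro i hiM
    have := (Finset.sum_eq_zero_iff_of_nonneg hg).mp hsum0 i
      (Finset.mem_range.mpr (by omega))
    exact this
  -- linear form of tf
  have hlin0 : ∀ i, 2*i < M → (M:ℝ) * tf M A i = ((M:ℝ) - 2*i) * tf M A 0 := by
    have hlow : ∀ i j, 2*i < M → 2*j < M →
        0 ≤ ((M:ℝ)-2*j) * tf M A i - ((M:ℝ)-2*i) * tf M A j := by
      intro i j hi2 hj2
      have hp := hpair i (M - j) hi2 (by omega) (by omega)
      have hc : (2*(((M - j : ℕ)):ℝ) - M) = (M:ℝ) - 2*j := by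
        rw [Nat.cast_sub (by omega : j ≤ M)]; ring
      rw [hc] at hp
      have ha : tf M A (M - j) = - tf M A j := by
        linarith [hanti j (by omega : j ≤ M)]
      rw [ha] at hp
      linarith
    intro i hi2
    have h1 := hlow i 0 hi2 (by omega)
    have h2 := hlow 0 i (by omega) hi2
    simp only [Nat.cast_zero] at h1 h2
    linarith
  have hlin : ∀ i, i ≤ M → (M:ℝ) * tf M A i = ((M:ℝ) - 2*i) * tf M A 0 := by
    intro i hiM
    rcases lt_trichotomy (2*i) M with hlt | heq | hgt
    · exact hlin0 i hlt
    · have hmi : M - i = i := by omega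
      have ha := hanti i hiM
      rw [hmi] at ha
      have hz : tf M A i = 0 := by linarith
      have hMc : (M:ℝ) = 2*(i:ℝ) := by exact_mod_cast heq.symm
      rw [hz, hMc]
      ring
    · have hlt' : 2*(M - i) < M := by omega
      have h1 := hlin0 (M - i) hlt'
      have hc : ((M - i : ℕ):ℝ) = (M:ℝ) - i := Nat.cast_sub hiM
      rw [hc] at h1
      have ha : tf M A (M - i) = - tf M A i := by
        linarith [hanti i hiM]
      rw [ha] at h1
      linarith
  -- step sums
  refine ⟨hDs, ?_⟩
  intro i hi1
  have htstep : tf M A i - tf M A (i+1) = A i + A (i+1) := by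
    rw [tf_eq_P M A i (by omega), tf_eq_P M A (i+1) hi1]
    have e1 : P A (i+1+1) = P A i + A i + A (i+1) := by
      rw [P_succ, P_succ]
    rw [e1]
    ring
  have h1 := hlin i (by omega)
  have h2 := hlin (i+1) hi1
  push_cast at h2
  have hM0 : (M:ℝ) ≠ 0 := hMR.ne'
  have key : (M:ℝ) * (A i + A (i+1)) = 2 * tf M A 0 := by
    rw [← htstep]
    have : (M:ℝ) * (tf M A i - tf M A (i+1)) = (M:ℝ)*tf M A i - (M:ℝ)*tf M A (i+1) := by
      ring
    rw [this, h1, h2]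
    ring
  field_simp
  linarith

end Stmt15

open Stmt15 in
theorem stmt15 (M : ℕ) (hM : 0 < M) (A : ℕ → ℝ) (hA : IsDStrategy A)
    (hAsupp : ∀ j, M < j → A j = 0) (hAC : mcaD M A ≤ 1/2) :
    (Odd M →
      ((∀ B : ℕ → ℝ, IsDStrategy B → (∀ j, M < j → B j = 0) → mcaD M B ≤ 1/2 →
          0 ≤ wpD A B) ↔
        ∃ a : ℝ, 0 < a ∧ ∀ j ≤ M, A j = a)) ∧
    (Even M →
      ((∀ B : ℕ → ℝ, IsDStrategy B → (∀ j, M < j → B j = 0) → mcaD M B ≤ 1/2 →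
          0 ≤ wpD A B) ↔
        (mcaD M A = 1/2 ∧ (∀ j : ℕ, 2*j ≤ M → A (2*j) = A 0) ∧
          (∀ j : ℕ, 2*j+1 ≤ M → A (2*j+1) = A 1)))) := by
  have KEY : (∀ B : ℕ → ℝ, IsDStrategy B → (∀ j, M < j → B j = 0) → mcaD M B ≤ 1/2 →
      0 ≤ wpD A B) →
      (Ds M A = 0 ∧ (∀ j, 2*j ≤ M → A (2*j) = A 0) ∧
        (∀ j, 2*j+1 ≤ M → A (2*j+1) = A 1) ∧
        (∀ i, i+1 ≤ M → A i + A (i+1) = 2 * (tf M A 0 / M))) := by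
    intro H
    obtain ⟨hDs, hps⟩ := forward M hM A hA hAsupp hAC H
    have hstep2 : ∀ i, i+2 ≤ M → A (i+2) = A i := by
      intro i h
      have h1 := hps i (by omega)
      have h2 := hps (i+1) (by omega)
      have e : i+1+1 = i+2 := by omega
      rw [e] at h2
      linarith
    have heven : ∀ j, 2*j ≤ M → A (2*j) = A 0 := by
      intro j
      induction j with
      | zero => intro _; norm_num
      | succ n ih =>
        intro h
        have e : 2*(n+1) = 2*n+2 := by ring
        rw [e, hstep2 (2*n) (by omega)]
        exact ih (by omega)
    have hodd1 : ∀ j, 2*j+1 ≤ M → A (2*j+1) = A 1 := by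
      intro j
      induction j with
      | zero => intro _; norm_num
      | succ n ih =>
        intro h
        have e : 2*(n+1)+1 = (2*n+1)+2 := by ring
        rw [e, hstep2 (2*n+1) (by omega)]
        exact ih (by omega)
    exact ⟨hDs, heven, hodd1, hps⟩
  have hMR : (0:ℝ) < M := Nat.cast_pos.mpr hM
  constructor
  · -- odd case
    intro hoddM
    obtain ⟨m, hm⟩ := hoddM
    constructor
    · intro H
      obtain ⟨hDs, heven, hodd1, hps⟩ := KEY H
      set μ := tf M A 0 / M with hμ
      have h01 : A 0 + A 1 = 2*μ := by
        have := hps 0 (by omega)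
        simpa using this
      have hSP : P A (M+1) = ((m:ℝ)+1) * (A 0 + A 1) := by
        have h1 := P_even M A heven hodd1 (m+1) (by omega)
        have e : 2*(m+1) = M+1 := by omega
        rw [e] at h1
        rw [h1]
        push_cast
        ring
      have htf0 : tf M A 0 = P A (M+1) - A 0 := by
        rw [tf_eq_P M A 0 (by omega)]
        have e1 : P A 1 = A 0 := by rw [P]; exact Finset.sum_range_one A
        have e0 : P A 0 = 0 := by rw [P]; exact Finset.sum_range_zero A
        rw [e1, e0]
        ring
      have hMc : (M:ℝ) = 2*(m:ℝ)+1 := by exact_mod_cast congrArg (Nat.cast (R := ℝ)) hm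
      have ht0 : tf M A 0 = μ * M := by
        rw [hμ]
        field_simp
      have hA0 : A 0 = μ := by
        rw [htf0, hSP, h01] at ht0
        rw [hMc] at ht0
        nlinarith [ht0]
      have hA1 : A 1 = μ := by linarith
      have hμpos : 0 < μ := by
        have hSpos := strat_sum_pos M A hA hAsupp
        have hPP : P A (M+1) = ((m:ℝ)+1)*(2*μ) := by rw [hSP, h01]
        have hm0 : (0:ℝ) ≤ (m:ℝ) := Nat.cast_nonneg m
        have : (0:ℝ) < P A (M+1) := hSpos
        nlinarith
      refine ⟨μ, hμpos, ?_⟩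
      intro j hj
      rcases Nat.even_or_odd j with hej | hoj
      · obtain ⟨r, hr⟩ := hej
        have e : j = 2*r := by omega
        rw [e, heven r (by omega), hA0]
      · obtain ⟨r, hr⟩ := hoj
        have e : j = 2*r+1 := by omega
        rw [e, hodd1 r (by omega), hA1]
    · rintro ⟨a, ha, hu⟩
      apply optimal_of M hM A hAsupp a ha.le
      intro i hiM
      have hP : ∀ n, n ≤ M+1 → P A n = (n:ℝ) * a := by
        intro n hn
        have hc : ∀ j ∈ Finset.range n, A j = a := by
          intro j hj
          exact hu j (by have := Finset.mem_range.mp hj; omega)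
        rw [P, Finset.sum_congr rfl hc, Finset.sum_const, Finset.card_range,
          nsmul_eq_mul]
      rw [tf_eq_P M A i hiM, hP (M+1) le_rfl, hP (i+1) (by omega), hP i (by omega)]
      push_cast
      ring
  · -- even case
    intro hevenM
    obtain ⟨m, hm⟩ := hevenM
    constructor
    · intro H
      obtain ⟨hDs, heven, hodd1, _⟩ := KEY H
      exact ⟨(mca_eq_iff M A hM hA hAsupp).mpr hDs, heven, hodd1⟩
    · rintro ⟨hmca, he, ho⟩
      have hc0 : (0:ℝ) ≤ (A 0 + A 1)/2 := by
        have := hA.1 0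
        have := hA.1 1
        linarith
      apply optimal_of M hM A hAsupp ((A 0 + A 1)/2) hc0
      intro i hiM
      have hMc : (M:ℝ) = 2*(m:ℝ) := by
        have : M = 2*m := by omega
        exact_mod_cast congrArg (Nat.cast (R := ℝ)) this
      have hPM : P A (M+1) = (m:ℝ)*(A 0 + A 1) + A 0 := by
        have h1 := P_odd M A he ho m (by omega)
        have e : 2*m+1 = M+1 := by omega
        rw [e] at h1
        exact h1
      rcases Nat.even_or_odd i with hei | hoi
      · obtain ⟨l, hl⟩ := hei
        have e : i = 2*l := by omega
        subst e
        rw [tf_eq_P M A (2*l) hiM, hPM, P_odd M A he ho l (by omega),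
          P_even M A he ho l (by omega), hMc]
        push_cast
        ring
      · obtain ⟨l, hl⟩ := hoi
        have e : i = 2*l+1 := by omega
        subst e
        have e2 : (2*l+1)+1 = 2*(l+1) := by ring
        rw [tf_eq_P M A (2*l+1) hiM, hPM, e2, P_even M A he ho (l+1) (by omega),
          P_odd M A he ho l (by omega), hMc]
        push_cast
        ring
end

section
/- Fix positive integers M and j_C with 2j_C < M, and let the constraint value be C = j_C/M. Define the discrete strategy A by A(k) = 1 for 0 ≤ k ≤ 2j_C and A(k) = 0 for k > 2j_C, so that mca(A) = C. Then for every discrete strategy B supported in {0, …, M} with mca(B) ≤ C, one has wp(A; B) ≥ Σ_{k=2j_C+1}^{M} (2k − 4j_C − 1) B(k) ≥ 0; in particular wp(A; B) > 0 whenever B(k) > 0 for some k > 2j_C. -/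
open Set

lemma stmt16_inner_sum (n i : ℕ) :
    ∑ j ∈ Finset.range (n+1), ((if i < j then (1:ℝ) else 0) - (if j < i then (1:ℝ) else 0))
      = if i ≤ n then (n:ℝ) - 2*i else -((n:ℝ)+1) := by
  induction n with
  | zero =>
    rw [Finset.sum_range_one]
    split_ifs <;> first | (exfalso; omega) |
      (have h0 : i = 0 := (by omega); rw [h0]; try norm_num) |
      (push_cast; linarith)
  | succ n ih =>
    rw [Finset.sum_range_succ, ih]
    split_ifs <;> first | (exfalso; omega) |
      (have h0 : i = n+1 := (by omega); rw [h0]; push_cast; try ring) |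
      (push_cast; linarith)

theorem stmt16 (M jC : ℕ) (hM : 0 < M) (hjC : 0 < jC) (hlt : 2*jC < M)
    (C : ℝ) (hC : C = (jC : ℝ) / M)
    (A : ℕ → ℝ) (hA : A = fun k => if k ≤ 2*jC then (1:ℝ) else 0) :
    mcaD M A = C ∧
    ∀ B : ℕ → ℝ, IsDStrategy B → (∀ j, M < j → B j = 0) → mcaD M B ≤ C →
      ((∑ k ∈ Finset.Icc (2*jC+1) M, (2*(k:ℝ) - 4*(jC:ℝ) - 1) * B k) ≤ wpD A B ∧
       0 ≤ ∑ k ∈ Finset.Icc (2*jC+1) M, (2*(k:ℝ) - 4*(jC:ℝ) - 1) * B k ∧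
       ((∃ k, 2*jC < k ∧ 0 < B k) → 0 < wpD A B)) := by
  set n := 2*jC with hn
  have hMpos : (0:ℝ) < M := by exact_mod_cast hM
  -- total mass of A
  have hsumA : ∑ᶠ j : ℕ, A j = ((n:ℝ)+1) := by
    rw [finsum_eq_sum_of_support_subset A (s := Finset.range (n+1))
      (by intro j hj; simp only [Finset.coe_range, Set.mem_Iio]
          by_contra h; push_neg at h
          exact hj (by simp [hA, Nat.not_le.mpr, show ¬ j ≤ n by omega]))]
    rw [Finset.sum_congr rfl (fun j hj => by
      simp only [hA]; rw [if_pos (by simp at hj; omega)])]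
    simp
  have hgauss : (∑ j ∈ Finset.range (n+1), (j:ℝ)) = (jC:ℝ) * ((n:ℝ)+1) := by
    have h2 : (∑ j ∈ Finset.range (n+1), j) * 2 = (n+1) * n := Finset.sum_range_id_mul_two (n+1)
    have h4 : (jC*(n+1)) * 2 = (n+1) * n := by rw [hn]; ring
    have h3 : (∑ j ∈ Finset.range (n+1), j) = jC * (n+1) :=
      Nat.eq_of_mul_eq_mul_right two_pos (h2.trans h4.symm)
    rw [← Nat.cast_sum, h3]
    push_cast
    ring
  have hsumA2 : ∑ᶠ j : ℕ, ((j:ℝ)/M) * A j = (jC:ℝ) * ((n:ℝ)+1) / M := by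
    rw [finsum_eq_sum_of_support_subset _ (s := Finset.range (n+1))
      (by intro j hj; simp only [Finset.coe_range, Set.mem_Iio]
          by_contra h; push_neg at h
          apply hj; simp [hA, show ¬ j ≤ n by omega])]
    rw [Finset.sum_congr rfl (fun j hj => by
      simp only [hA]; rw [if_pos (by simp at hj; omega), mul_one])]
    rw [← Finset.sum_div, hgauss]
  have hmcaA : mcaD M A = C := by
    rw [mcaD, hsumA, hsumA2, hC]
    have hne : ((n:ℝ)+1) ≠ 0 := by positivity
    field_simp
  refine ⟨hmcaA, ?_⟩
  intro B hB hBsupp hBmca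
  obtain ⟨hB0, hBfin, hBpos⟩ := hB
  have hBsup : Function.support B ⊆ ↑(Finset.range (M+1)) := by
    intro j hj
    simp only [Finset.coe_range, Set.mem_Iio]
    by_contra h; push_neg at h
    exact hj (hBsupp j (by omega))
  set T := ∑ j ∈ Finset.range (M+1), B j with hTdef
  set W := ∑ j ∈ Finset.range (M+1), (j:ℝ) * B j with hWdef
  have hT : ∑ᶠ j : ℕ, B j = T := finsum_eq_sum_of_support_subset B hBsup
  have hTpos : 0 < T := hT ▸ hBpos
  have hWsum : ∑ᶠ j : ℕ, ((j:ℝ)/M) * B j = W / M := by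
    rw [finsum_eq_sum_of_support_subset _ (s := Finset.range (M+1))
      (by intro j hj; apply hBsup
          simp only [Function.mem_support] at hj ⊢
          intro h; exact hj (by rw [h, mul_zero]))]
    rw [Finset.sum_congr rfl (fun j (_ : j ∈ Finset.range (M+1)) =>
      show (j:ℝ)/M * B j = ((j:ℝ) * B j)/M by ring), hWdef, Finset.sum_div]
  have hWT : W ≤ (jC:ℝ) * T := by
    rw [mcaD, hT, hWsum, hC, div_div] at hBmca
    rw [div_le_div_iff₀ (by positivity) hMpos] at hBmca
    nlinarith
  -- rewrite Iio / Ioi finsums as finite sums with indicators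
  have hIio : ∀ j : ℕ, j ≤ M → (∑ᶠ i ∈ Set.Iio j, B i)
      = ∑ i ∈ Finset.range (M+1), (if i < j then B i else 0) := by
    intro j hj
    rw [← Finset.coe_Iio, finsum_mem_coe_finset, ← Finset.sum_filter]
    congr 1
    ext a
    simp only [Finset.mem_Iio, Finset.mem_filter, Finset.mem_range]
    omega
  have hIoi : ∀ j : ℕ, (∑ᶠ i ∈ Set.Ioi j, B i)
      = ∑ i ∈ Finset.range (M+1), (if j < i then B i else 0) := by
    intro j
    rw [finsum_mem_eq_sum_of_inter_support_eq B
      (t := (Finset.range (M+1)).filter (fun i => j < i)) ?_,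
      ← Finset.sum_filter]
    ext x
    simp only [Set.mem_inter_iff, Set.mem_Ioi, Function.mem_support, Finset.coe_filter,
      Finset.mem_range, Set.mem_setOf_eq]
    constructor
    · rintro ⟨h1, h2⟩
      refine ⟨⟨?_, h1⟩, h2⟩
      by_contra h; push_neg at h
      exact h2 (hBsupp x (by omega))
    · rintro ⟨⟨_, h1⟩, h2⟩; exact ⟨h1, h2⟩
  -- wpD as a finite sum
  have hwp : wpD A B = ∑ i ∈ Finset.range (M+1),
      (if i ≤ n then (n:ℝ) - 2*i else -((n:ℝ)+1)) * B i := by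
    rw [wpD]
    rw [finsum_eq_sum_of_support_subset _ (s := Finset.range (n+1))
      (by intro j hj; simp only [Finset.coe_range, Set.mem_Iio]
          by_contra h; push_neg at h
          apply hj
          simp [hA, show ¬ j ≤ n by omega])]
    have step1 : ∀ j ∈ Finset.range (n+1),
        A j * ((∑ᶠ i ∈ Set.Iio j, B i) - ∑ᶠ i ∈ Set.Ioi j, B i)
        = ∑ i ∈ Finset.range (M+1),
            ((if i < j then (1:ℝ) else 0) - (if j < i then (1:ℝ) else 0)) * B i := by
      intro j hj
      have hjn : j ≤ n := by simp at hj; omega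
      have hA1 : A j = 1 := by simp [hA, hjn]
      rw [hA1, one_mul, hIio j (by omega), hIoi j, ← Finset.sum_sub_distrib]
      exact Finset.sum_congr rfl (fun i _ => by split_ifs <;> ring)
    rw [Finset.sum_congr rfl step1, Finset.sum_comm]
    refine Finset.sum_congr rfl (fun i _ => ?_)
    rw [← Finset.sum_mul, stmt16_inner_sum n i]
  -- rewrite RHS over range (M+1)
  have hRHS : (∑ k ∈ Finset.Icc (n+1) M, (2*(k:ℝ) - 4*(jC:ℝ) - 1) * B k)
      = ∑ i ∈ Finset.range (M+1), (if i ≤ n then 0 else (2*(i:ℝ) - 4*(jC:ℝ) - 1)) * B i := by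
    rw [show (∑ i ∈ Finset.range (M+1), (if i ≤ n then 0 else (2*(i:ℝ) - 4*(jC:ℝ) - 1)) * B i)
        = ∑ i ∈ Finset.range (M+1),
            (if ¬ i ≤ n then (2*(i:ℝ) - 4*(jC:ℝ) - 1) * B i else 0) from
      Finset.sum_congr rfl (fun i _ => by split_ifs <;> simp_all)]
    rw [Finset.sum_ite, Finset.sum_const_zero, add_zero]
    apply Finset.sum_congr _ (fun _ _ => rfl)
    ext a
    simp only [Finset.mem_Icc, Finset.mem_filter, Finset.mem_range]
    omega
  have hcastn : ((n:ℝ)) = 2*(jC:ℝ) := by push_cast [hn]; ring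
  have hdiff : wpD A B - (∑ k ∈ Finset.Icc (n+1) M, (2*(k:ℝ) - 4*(jC:ℝ) - 1) * B k)
      = 2*((jC:ℝ) * T - W) := by
    rw [hwp, hRHS, ← Finset.sum_sub_distrib]
    have : ∀ i ∈ Finset.range (M+1),
        (if i ≤ n then (n:ℝ) - 2*i else -((n:ℝ)+1)) * B i
          - (if i ≤ n then 0 else (2*(i:ℝ) - 4*(jC:ℝ) - 1)) * B i
        = ((n:ℝ) - 2*i) * B i := by
      intro i _
      split_ifs <;> rw [hcastn] <;> ring
    rw [Finset.sum_congr rfl this]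
    have expand : ∑ i ∈ Finset.range (M+1), ((n:ℝ) - 2*i) * B i
        = (n:ℝ) * T - 2 * W := by
      rw [hTdef, hWdef, Finset.mul_sum, Finset.mul_sum, ← Finset.sum_sub_distrib]
      exact Finset.sum_congr rfl (fun i _ => by ring)
    rw [expand, hcastn]; ring
  have hfirst : (∑ k ∈ Finset.Icc (n+1) M, (2*(k:ℝ) - 4*(jC:ℝ) - 1) * B k) ≤ wpD A B := by
    nlinarith [hdiff, hWT]
  have hcoef : ∀ k ∈ Finset.Icc (n+1) M, (1:ℝ) ≤ 2*(k:ℝ) - 4*(jC:ℝ) - 1 := by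
    intro k hk
    simp only [Finset.mem_Icc] at hk
    have : (n:ℝ) + 1 ≤ (k:ℝ) := by exact_mod_cast hk.1
    rw [hcastn] at this; linarith
  have hnonneg : ∀ k ∈ Finset.Icc (n+1) M, 0 ≤ (2*(k:ℝ) - 4*(jC:ℝ) - 1) * B k := by
    intro k hk
    exact mul_nonneg (le_trans zero_le_one (hcoef k hk)) (hB0 k)
  have hsecond : 0 ≤ ∑ k ∈ Finset.Icc (n+1) M, (2*(k:ℝ) - 4*(jC:ℝ) - 1) * B k :=
    Finset.sum_nonneg hnonneg
  refine ⟨hfirst, hsecond, ?_⟩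
  rintro ⟨k, hk1, hk2⟩
  have hkM : k ≤ M := by
    by_contra h; push_neg at h
    rw [hBsupp k h] at hk2; exact lt_irrefl 0 hk2
  have hmem : k ∈ Finset.Icc (n+1) M := by simp [Finset.mem_Icc]; omega
  have hpos : 0 < ∑ j ∈ Finset.Icc (n+1) M, (2*(j:ℝ) - 4*(jC:ℝ) - 1) * B j :=
    Finset.sum_pos' hnonneg ⟨k, hmem, by nlinarith [hcoef k hmem]⟩
  linarith
end

section
/- Fix a positive integer M and a nonnegative integer j_C with 2j_C + 1 < M, and let the constraint value be C = (2j_C + 1)/(2M). Define the discrete strategy A by A(k) = 1 for 0 ≤ k ≤ 2j_C + 1 and A(k) = 0 for k > 2j_C + 1, so that mca(A) = C. Then for every discrete strategy B supported in {0, …, M} with mca(B) ≤ C, one has wp(A; B) ≥ Σ_{k=2j_C+2}^{M} (2k − 3 − 4j_C) B(k) ≥ 0; in particular wp(A; B) > 0 whenever B(k) > 0 for some k ≥ 2j_C + 2. -/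
open Set

theorem stmt17 (M jC : ℕ) (hM : 0 < M) (hlt : 2*jC + 1 < M)
    (C : ℝ) (hC : C = (2*(jC:ℝ) + 1) / (2*M))
    (A : ℕ → ℝ) (hA : A = fun k => if k ≤ 2*jC + 1 then (1:ℝ) else 0) :
    mcaD M A = C ∧
    ∀ B : ℕ → ℝ, IsDStrategy B → (∀ j, M < j → B j = 0) → mcaD M B ≤ C →
      ((∑ k ∈ Finset.Icc (2*jC+2) M, (2*(k:ℝ) - 3 - 4*(jC:ℝ)) * B k) ≤ wpD A B ∧
       0 ≤ ∑ k ∈ Finset.Icc (2*jC+2) M, (2*(k:ℝ) - 3 - 4*(jC:ℝ)) * B k ∧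
       ((∃ k, 2*jC + 2 ≤ k ∧ 0 < B k) → 0 < wpD A B)) := by
  set N := 2*jC + 1 with hN
  have hMpos : (0:ℝ) < M := by exact_mod_cast hM
  -- support of A
  have hAsupp : Function.support A ⊆ ↑(Finset.Iic N) := by
    intro k hk
    simp only [Function.mem_support, hA] at hk
    simp only [Finset.coe_Iic, Set.mem_Iic]
    by_contra h
    exact hk (if_neg h)
  have hAsum : ∑ᶠ j, A j = (N:ℝ) + 1 := by
    rw [finsum_eq_sum_of_support_subset _ hAsupp]
    have : ∀ k ∈ Finset.Iic N, A k = 1 := by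
      intro k hk
      simp only [hA]
      exact if_pos (Finset.mem_Iic.mp hk)
    rw [Finset.sum_congr rfl this, Finset.sum_const, Nat.card_Iic]
    push_cast; ring
  -- Gauss sum
  have hgauss : ∑ k ∈ Finset.Iic N, (k:ℝ) = (N:ℝ) * (N+1) / 2 := by
    have h1 : Finset.Iic N = Finset.range (N+1) := by
      ext k; simp [Nat.lt_succ_iff]
    have h2 : (∑ i ∈ Finset.range (N+1), i) * 2 = (N+1) * N := by
      rw [Finset.sum_range_id_mul_two]; simp
    have h3 : ((∑ i ∈ Finset.range (N+1), i : ℕ) : ℝ) * 2 = ((N:ℝ)+1) * N := by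
      exact_mod_cast congrArg (Nat.cast : ℕ → ℝ) h2
    rw [h1, ← Nat.cast_sum]
    linarith
  have hmcaA : mcaD M A = C := by
    have hnsupp : Function.support (fun j : ℕ => ((j:ℝ)/M) * A j) ⊆ ↑(Finset.Iic N) := by
      intro k hk
      apply hAsupp
      simp only [Function.mem_support] at hk ⊢
      intro h; apply hk; rw [h]; ring
    have hnum : ∑ᶠ j : ℕ, ((j:ℝ)/M) * A j = (N:ℝ) * (N+1) / (2*M) := by
      rw [finsum_eq_sum_of_support_subset _ hnsupp]
      have : ∀ k ∈ Finset.Iic N, ((k:ℝ)/M) * A k = (k:ℝ)/M := by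
        intro k hk
        simp only [hA]
        rw [if_pos (Finset.mem_Iic.mp hk)]; ring
      rw [Finset.sum_congr rfl this, ← Finset.sum_div, hgauss]
      field_simp
    rw [mcaD, hnum, hAsum, hC]
    have hN1 : (N:ℝ) + 1 ≠ 0 := by positivity
    have hNcast : (N:ℝ) = 2*(jC:ℝ) + 1 := by rw [hN]; push_cast; ring
    rw [hNcast]
    field_simp
  refine ⟨hmcaA, ?_⟩
  rintro B ⟨hBnn, hBfin, hBpos⟩ hB0 hmca
  have hBsupp : Function.support B ⊆ ↑(Finset.Iic M) := by
    intro k hk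
    simp only [Function.mem_support] at hk
    simp only [Finset.coe_Iic, Set.mem_Iic]
    by_contra h
    exact hk (hB0 k (by omega))
  have hSB : ∑ᶠ j, B j = ∑ j ∈ Finset.Iic M, B j := finsum_eq_sum_of_support_subset _ hBsupp
  set SB := ∑ j ∈ Finset.Iic M, B j with hSBdef
  have hSBpos : 0 < SB := by rw [← hSB]; exact hBpos
  -- constraint
  have hkey : 0 ≤ ∑ j ∈ Finset.Iic M, ((N:ℝ) - 2*j) * B j := by
    have hnsupp : Function.support (fun j : ℕ => ((j:ℝ)/M) * B j) ⊆ ↑(Finset.Iic M) := by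
      intro k hk
      apply hBsupp
      simp only [Function.mem_support] at hk ⊢
      intro h; apply hk; rw [h]; ring
    have hnum : ∑ᶠ j : ℕ, ((j:ℝ)/M) * B j = (∑ j ∈ Finset.Iic M, (j:ℝ) * B j) / M := by
      rw [finsum_eq_sum_of_support_subset _ hnsupp, Finset.sum_div]
      exact Finset.sum_congr rfl fun k _ => by ring
    have h1 : (∑ j ∈ Finset.Iic M, (j:ℝ) * B j) / M ≤ ((N:ℝ) / (2*M)) * SB := by
      have hh := hmca
      rw [mcaD, hnum, hSB, hC] at hh
      have h2 := (div_le_iff₀ hSBpos).mp hh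
      calc (∑ j ∈ Finset.Iic M, (j:ℝ) * B j) / M ≤ (2*(jC:ℝ)+1)/(2*M) * SB := h2
        _ = ((N:ℝ)/(2*M)) * SB := by rw [hN]; push_cast; ring
    have h3 : ∑ j ∈ Finset.Iic M, (j:ℝ) * B j ≤ (N:ℝ)/2 * SB := by
      have := (div_le_iff₀ hMpos).mp h1
      calc ∑ j ∈ Finset.Iic M, (j:ℝ) * B j ≤ ((N:ℝ)/(2*M)) * SB * M := this
        _ = (N:ℝ)/2 * SB := by field_simp
    have h4 : ∑ j ∈ Finset.Iic M, ((N:ℝ) - 2*j) * B j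
        = (N:ℝ) * SB - 2 * ∑ j ∈ Finset.Iic M, (j:ℝ) * B j := by
      rw [hSBdef, Finset.mul_sum, Finset.mul_sum, ← Finset.sum_sub_distrib]
      exact Finset.sum_congr rfl fun k _ => by ring
    linarith
  -- compute wpD A B
  have hwsupp : Function.support (fun j : ℕ => A j * ((∑ᶠ i ∈ Iio j, B i) - ∑ᶠ i ∈ Ioi j, B i))
      ⊆ ↑(Finset.Iic N) := by
    intro k hk
    apply hAsupp
    simp only [Function.mem_support] at hk ⊢
    intro h; apply hk; rw [h]; ring
  have hwp : wpD A B = ∑ i ∈ Finset.Iic M,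
      (((N - i : ℕ):ℝ) - ((min i (N+1) : ℕ):ℝ)) * B i := by
    rw [wpD, finsum_eq_sum_of_support_subset _ hwsupp]
    have hstep : ∀ j ∈ Finset.Iic N,
        A j * ((∑ᶠ i ∈ Iio j, B i) - ∑ᶠ i ∈ Ioi j, B i)
        = ∑ i ∈ Finset.Iic M, ((if i < j then B i else 0) - (if j < i then B i else 0)) := by
      intro j hj
      have hjN : j ≤ N := Finset.mem_Iic.mp hj
      have hA1 : A j = 1 := by rw [hA]; exact if_pos hjN
      have hlo : ∑ᶠ i ∈ Iio j, B i = ∑ i ∈ Finset.Iic M, (if i < j then B i else 0) := by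
        rw [← Finset.coe_Iio, finsum_mem_coe_finset]
        have hfe : Finset.Iio j = Finset.filter (fun i => i < j) (Finset.Iic M) := by
          ext i
          simp only [Finset.mem_Iio, Finset.mem_filter, Finset.mem_Iic]
          omega
        rw [hfe, Finset.sum_filter]
      have hhi : ∑ᶠ i ∈ Ioi j, B i = ∑ i ∈ Finset.Iic M, (if j < i then B i else 0) := by
        have h1 : Set.Ioi j ∩ Function.support B ⊆ ↑(Finset.Ioc j M) := by
          rintro i ⟨hi1, hi2⟩
          have h2 := hBsupp hi2
          simp only [Finset.coe_Iic, Set.mem_Iic] at h2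
          simp only [Finset.coe_Ioc, Set.mem_Ioc]
          exact ⟨hi1, h2⟩
        have h2 : ↑(Finset.Ioc j M) ⊆ Set.Ioi j := by
          intro i hi
          simp only [Finset.coe_Ioc, Set.mem_Ioc] at hi
          exact hi.1
        rw [finsum_mem_eq_sum_of_subset _ h1 h2]
        have hfe : Finset.Ioc j M = Finset.filter (fun i => j < i) (Finset.Iic M) := by
          ext i
          simp only [Finset.mem_Ioc, Finset.mem_filter, Finset.mem_Iic]
          omega
        rw [hfe, Finset.sum_filter]
      rw [hA1, one_mul, hlo, hhi, ← Finset.sum_sub_distrib]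
    rw [Finset.sum_congr rfl hstep, Finset.sum_comm]
    refine Finset.sum_congr rfl fun i _ => ?_
    rw [Finset.sum_sub_distrib]
    have e1 : ∑ j ∈ Finset.Iic N, (if i < j then B i else 0) = ((N - i : ℕ):ℝ) * B i := by
      rw [← Finset.sum_filter]
      have hfe : Finset.filter (fun j => i < j) (Finset.Iic N) = Finset.Ioc i N := by
        ext j
        simp only [Finset.mem_Ioc, Finset.mem_filter, Finset.mem_Iic]
        omega
      rw [hfe, Finset.sum_const, Nat.card_Ioc, nsmul_eq_mul]
    have e2 : ∑ j ∈ Finset.Iic N, (if j < i then B i else 0) = ((min i (N+1) : ℕ):ℝ) * B i := by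
      rw [← Finset.sum_filter]
      have hfe : Finset.filter (fun j => j < i) (Finset.Iic N) = Finset.Iio (min i (N+1)) := by
        ext j
        simp only [Finset.mem_Iio, Finset.mem_filter, Finset.mem_Iic]
        omega
      rw [hfe, Finset.sum_const, Nat.card_Iio, nsmul_eq_mul]
    rw [e1, e2]; ring
  -- target sum
  have hIcc : Finset.Icc (2*jC+2) M = Finset.Icc (N+1) M := by rw [hN]
  set T := ∑ k ∈ Finset.Icc (2*jC+2) M, (2*(k:ℝ) - 3 - 4*(jC:ℝ)) * B k with hTdef
  have hcoef : ∀ k, 2*jC+2 ≤ k → (1:ℝ) ≤ 2*(k:ℝ) - 3 - 4*(jC:ℝ) := by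
    intro k hk
    have : ((2*jC+2 : ℕ):ℝ) ≤ (k:ℝ) := by exact_mod_cast hk
    push_cast at this
    linarith
  have hTnn : 0 ≤ T := by
    refine Finset.sum_nonneg fun k hk => ?_
    have hk1 := (Finset.mem_Icc.mp hk).1
    exact mul_nonneg (by linarith [hcoef k hk1]) (hBnn k)
  -- split wpD
  have hwp2 : wpD A B = (∑ j ∈ Finset.Iic M, ((N:ℝ) - 2*j) * B j) + T := by
    rw [hwp, hTdef, hIcc]
    have hfe : Finset.Icc (N+1) M = Finset.filter (fun i => N+1 ≤ i) (Finset.Iic M) := by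
      ext i
      simp only [Finset.mem_Icc, Finset.mem_filter, Finset.mem_Iic]
      omega
    rw [hfe, Finset.sum_filter, ← Finset.sum_add_distrib]
    refine Finset.sum_congr rfl fun i _ => ?_
    rcases le_or_gt i N with h | h
    · rw [if_neg (by omega)]
      have hmin : min i (N+1) = i := by omega
      rw [hmin, Nat.cast_sub h]
      ring
    · rw [if_pos (by omega)]
      have h1 : N - i = 0 := by omega
      have hmin : min i (N+1) = N+1 := by omega
      rw [h1, hmin]
      push_cast [hN]
      ring
  refine ⟨by linarith, hTnn, ?_⟩
  rintro ⟨k, hk, hBk⟩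
  have hkM : k ≤ M := by
    by_contra h
    rw [hB0 k (by omega)] at hBk
    exact lt_irrefl 0 hBk
  have hmem : k ∈ Finset.Icc (2*jC+2) M := Finset.mem_Icc.mpr ⟨hk, hkM⟩
  have hterm : 0 < (2*(k:ℝ) - 3 - 4*(jC:ℝ)) * B k :=
    mul_pos (by linarith [hcoef k hk]) hBk
  have hle : (2*(k:ℝ) - 3 - 4*(jC:ℝ)) * B k ≤ T := by
    refine Finset.single_le_sum (f := fun i : ℕ => (2*(i:ℝ) - 3 - 4*(jC:ℝ)) * B i) (fun i hi => ?_) hmem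
    have hi1 := (Finset.mem_Icc.mp hi).1
    exact mul_nonneg (by linarith [hcoef i hi1]) (hBnn i)
  linarith
end

section
/- Fix a constraint value C > 0 and let n ≥ 2. If (A₁, …, Aₙ) is an equilibrium point of the discrete game, then wp(Aₖ; A_j) = 0 for all j, k ∈ {1, …, n} and wp(Aₖ; B) ≥ 0 for every admissible discrete strategy B and every k; that is, each Aₖ is an equilibrium strategy for the two-player game. -/
open Set

/-! auxiliary -/

noncomputable def ff (P : ℕ → ℝ) (j : ℕ) : ℝ :=
  (∑ᶠ i ∈ Iio j, P i) - ∑ᶠ i ∈ Ioi j, P i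

noncomputable def ee (i j : ℕ) : ℝ := if i < j then 1 else if j < i then -1 else 0

lemma ee_antisymm (i j : ℕ) : ee i j = - ee j i := by
  unfold ee
  rcases lt_trichotomy i j with h | h | h
  · simp [h, lt_asymm h]
  · subst h; simp
  · simp [h, lt_asymm h]

lemma wpD_eq_ff (B P : ℕ → ℝ) : wpD B P = ∑ᶠ j, B j * ff P j := rfl

lemma sum_Iio_eq (P : ℕ → ℝ) {N : ℕ} (h : Function.support P ⊆ ↑(Finset.range N)) (j : ℕ) :
    ∑ᶠ i ∈ Set.Iio j, P i = ∑ i ∈ Finset.range N, (if i < j then P i else 0) := by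
  rw [← Finset.coe_range, finsum_mem_coe_finset, Finset.sum_ite, Finset.sum_const_zero, add_zero]
  refine (Finset.sum_subset ?_ ?_).symm
  · intro i hi
    simp only [Finset.mem_filter, Finset.mem_range] at hi ⊢
    exact hi.2
  · intro i hi hni
    simp only [Finset.mem_filter, Finset.mem_range] at hni
    simp only [Finset.mem_range] at hi
    by_contra hne
    have := h (Function.mem_support.2 hne)
    simp only [Finset.coe_range, mem_Iio] at this
    exact hni ⟨this, hi⟩

lemma sum_Ioi_eq (P : ℕ → ℝ) {N : ℕ} (h : Function.support P ⊆ ↑(Finset.range N)) (j : ℕ) :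
    ∑ᶠ i ∈ Set.Ioi j, P i = ∑ i ∈ Finset.range N, (if j < i then P i else 0) := by
  rw [Finset.sum_ite, Finset.sum_const_zero, add_zero]
  apply finsum_mem_eq_sum_of_inter_support_eq
  ext i
  simp only [Finset.coe_filter, mem_inter_iff, mem_Ioi, Function.mem_support, mem_setOf_eq,
    Finset.mem_range]
  constructor
  · rintro ⟨h1, h2⟩
    have := h h2
    simp only [Finset.coe_range, mem_Iio] at this
    exact ⟨⟨this, h1⟩, h2⟩
  · rintro ⟨⟨_, h1⟩, h2⟩; exact ⟨h1, h2⟩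

lemma ff_eq_sum (P : ℕ → ℝ) {N : ℕ} (h : Function.support P ⊆ ↑(Finset.range N)) (j : ℕ) :
    ff P j = ∑ i ∈ Finset.range N, P i * ee i j := by
  unfold ff
  rw [sum_Iio_eq P h, sum_Ioi_eq P h, ← Finset.sum_sub_distrib]
  apply Finset.sum_congr rfl
  intro i _
  unfold ee
  rcases lt_trichotomy i j with hij | hij | hij
  · rw [if_pos hij, if_pos hij, if_neg (lt_asymm hij)]; ring
  · subst hij; simp
  · rw [if_neg (lt_asymm hij), if_neg (lt_asymm hij), if_pos hij, if_pos hij]; ring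

lemma wpD_eq_sum (B P : ℕ → ℝ) {N : ℕ} (hB : Function.support B ⊆ ↑(Finset.range N)) :
    wpD B P = ∑ j ∈ Finset.range N, B j * ff P j := by
  rw [wpD_eq_ff]
  apply finsum_eq_sum_of_support_subset
  intro j hj
  apply hB
  simp only [Function.mem_support] at hj ⊢
  intro h0; exact hj (by rw [h0, zero_mul])

lemma wpD_eq_double (B P : ℕ → ℝ) {N : ℕ} (hB : Function.support B ⊆ ↑(Finset.range N))
    (hP : Function.support P ⊆ ↑(Finset.range N)) :
    wpD B P = ∑ j ∈ Finset.range N, ∑ i ∈ Finset.range N, B j * (P i * ee i j) := by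
  rw [wpD_eq_sum B P hB]
  apply Finset.sum_congr rfl
  intro j _
  rw [ff_eq_sum P hP, Finset.mul_sum]

lemma wpD_antisymm (B P : ℕ → ℝ) {N : ℕ} (hB : Function.support B ⊆ ↑(Finset.range N))
    (hP : Function.support P ⊆ ↑(Finset.range N)) :
    wpD B P = - wpD P B := by
  rw [wpD_eq_double B P hB hP, wpD_eq_double P B hP hB, ← Finset.sum_neg_distrib,
    Finset.sum_comm]
  apply Finset.sum_congr rfl; intro j _
  rw [← Finset.sum_neg_distrib]
  apply Finset.sum_congr rfl; intro i _
  rw [ee_antisymm i j]; ring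

lemma wpD_self (P : ℕ → ℝ) (hfin : (Function.support P).Finite) : wpD P P = 0 := by
  obtain ⟨N, hN⟩ : ∃ N, Function.support P ⊆ ↑(Finset.range N) := by
    obtain ⟨N, hN⟩ := (hfin.bddAbove).exists_ge 0
    exact ⟨N + 1, fun x hx => by
      simp only [Finset.coe_range, mem_Iio]
      exact Nat.lt_succ_of_le (hN.2 x hx)⟩
  have := wpD_antisymm P P hN hN
  linarith

lemma tot_eq_sum (P : ℕ → ℝ) {N : ℕ} (h : Function.support P ⊆ ↑(Finset.range N)) :
    ∑ᶠ i, P i = ∑ i ∈ Finset.range N, P i := finsum_eq_sum_of_support_subset P h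

lemma sum_ite_self (P : ℕ → ℝ) {N : ℕ} (h : Function.support P ⊆ ↑(Finset.range N)) (a : ℕ) :
    ∑ i ∈ Finset.range N, (if i = a then P i else 0) = P a := by
  rw [Finset.sum_ite_eq' (Finset.range N) a P]
  by_cases ha : a ∈ Finset.range N
  · rw [if_pos ha]
  · rw [if_neg ha]
    by_contra hne
    exact ha (by exact_mod_cast Finset.mem_coe.1 (h (Function.mem_support.2 (Ne.symm hne))))

lemma ff_succ (P : ℕ → ℝ) {N : ℕ} (h : Function.support P ⊆ ↑(Finset.range N)) (j : ℕ) :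
    ff P (j + 1) = ff P j + P j + P (j + 1) := by
  rw [ff_eq_sum P h, ff_eq_sum P h]
  have key : ∀ i ∈ Finset.range N, P i * ee i (j+1) =
      P i * ee i j + ((if i = j then P i else 0) + (if i = j+1 then P i else 0)) := by
    intro i _
    unfold ee
    split_ifs <;> first | ring1 | (exfalso; omega)
  rw [Finset.sum_congr rfl key, Finset.sum_add_distrib, Finset.sum_add_distrib,
    sum_ite_self P h j, sum_ite_self P h (j+1)]
  ring

lemma ff_top (P : ℕ → ℝ) {j : ℕ} (h : Function.support P ⊆ ↑(Finset.range j)) :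
    ff P j = ∑ᶠ i, P i := by
  rw [ff_eq_sum P h, tot_eq_sum P h]
  apply Finset.sum_congr rfl
  intro i hi
  simp only [Finset.mem_range] at hi
  unfold ee
  rw [if_pos hi, mul_one]

lemma ff_zero (P : ℕ → ℝ) {N : ℕ} (h : Function.support P ⊆ ↑(Finset.range N)) :
    ff P 0 = P 0 - ∑ᶠ i, P i := by
  rw [ff_eq_sum P h, tot_eq_sum P h]
  have key : ∀ i ∈ Finset.range N, P i * ee i 0 = (if i = 0 then P i else 0) - P i := by
    intro i _
    unfold ee
    split_ifs <;> first | ring1 | (exfalso; omega)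
  rw [Finset.sum_congr rfl key, Finset.sum_sub_distrib, sum_ite_self P h 0]

lemma ff_gap (P : ℕ → ℝ) {N : ℕ} (h : Function.support P ⊆ ↑(Finset.range N)) {i i' : ℕ}
    (hlt : i < i') (h0 : ∀ m, i < m → m < i' → P m = 0) :
    ff P i' = ff P i + P i + P i' := by
  have H : ∀ b : ℕ, i < b → (∀ m, i < m → m < b → P m = 0) →
      ff P b = ff P i + P i + P b := by
    intro b
    induction b with
    | zero => omega
    | succ n ih =>
        intro hn h0n
        rcases Nat.lt_or_ge i n with hlt2 | hge
        · have hPn : P n = 0 := h0n n hlt2 (Nat.lt_succ_self n)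
          rw [ff_succ P h n, ih hlt2 (fun m hm1 hm2 => h0n m hm1 (by omega)), hPn]
          ring
        · have : i = n := by omega
          subst this
          rw [ff_succ P h i]
  exact H i' hlt h0

lemma support_sub_range {P : ℕ → ℝ} {N : ℕ} (h : ∀ j, N ≤ j → P j = 0) :
    Function.support P ⊆ ↑(Finset.range N) := by
  intro x hx
  simp only [Finset.coe_range, mem_Iio]
  by_contra hc
  exact hx (h x (by omega))

lemma ff_sub (T S A : ℕ → ℝ) {N : ℕ} (hT : Function.support T ⊆ ↑(Finset.range N))
    (hS : Function.support S ⊆ ↑(Finset.range N)) (hA : ∀ j, A j = T j - S j) (j : ℕ) :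
    ff A j = ff T j - ff S j := by
  have hAsupp : Function.support A ⊆ ↑(Finset.range N) := by
    intro x hx
    simp only [Function.mem_support, hA] at hx
    by_cases hT0 : T x = 0
    · exact hS (by simp only [Function.mem_support]; intro h0; rw [hT0, h0] at hx; simp at hx)
    · exact hT (Function.mem_support.2 hT0)
  rw [ff_eq_sum A hAsupp j, ff_eq_sum T hT j, ff_eq_sum S hS j, ← Finset.sum_sub_distrib]
  apply Finset.sum_congr rfl
  intro i _
  rw [hA i]
  ring

/-- the constraint function -/
noncomputable def xs (M : ℕ) (C : ℝ) (j : ℕ) : ℝ := (j : ℝ) / M - C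

lemma xs_mono (M : ℕ) (C : ℝ) (hM : 0 < M) {i j : ℕ} (hij : i ≤ j) : xs M C i ≤ xs M C j := by
  unfold xs
  have : (i:ℝ) ≤ j := by exact_mod_cast hij
  have hM' : (0:ℝ) < M := by exact_mod_cast hM
  have h2 : (i:ℝ)/M ≤ (j:ℝ)/M := by gcongr
  linarith

lemma xs_succ (M : ℕ) (C : ℝ) (hM : 0 < M) (j : ℕ) :
    xs M C (j + 1) = xs M C j + 1 / M := by
  unfold xs
  have hM' : (0:ℝ) < M := by exact_mod_cast hM
  push_cast
  field_simp
  ring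

/-- admissibility in summed form -/
lemma adm_sum {M : ℕ} {C : ℝ} (hM : 0 < M) {B : ℕ → ℝ} {N : ℕ}
    (hB : IsDStrategy B) (hadm : mcaD M B ≤ C)
    (hsupp : Function.support B ⊆ ↑(Finset.range N)) :
    ∑ j ∈ Finset.range N, B j * xs M C j ≤ 0 := by
  have htot : (0:ℝ) < ∑ j ∈ Finset.range N, B j := by
    rw [← tot_eq_sum B hsupp]; exact hB.2.2
  have hnum : ∑ᶠ j : ℕ, ((j : ℝ) / M) * B j = ∑ j ∈ Finset.range N, ((j : ℝ) / M) * B j := by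
    apply finsum_eq_sum_of_support_subset
    intro x hx
    apply hsupp
    simp only [Function.mem_support] at hx ⊢
    intro h0; rw [h0, mul_zero] at hx; exact hx rfl
  have h1 : ∑ j ∈ Finset.range N, ((j : ℝ) / M) * B j ≤ C * ∑ j ∈ Finset.range N, B j := by
    have := hadm
    unfold mcaD at this
    rw [hnum, tot_eq_sum B hsupp] at this
    exact (div_le_iff₀ htot).1 this
  have : ∑ j ∈ Finset.range N, B j * xs M C j
      = ∑ j ∈ Finset.range N, ((j : ℝ) / M) * B j - C * ∑ j ∈ Finset.range N, B j := by
    rw [Finset.mul_sum, ← Finset.sum_sub_distrib]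
    apply Finset.sum_congr rfl
    intro i _
    unfold xs
    ring
  linarith

/-- optimality for the two-player game -/
def IsOpt (M : ℕ) (C : ℝ) (P : ℕ → ℝ) : Prop :=
  ∀ B : ℕ → ℝ, IsDStrategy B → mcaD M B ≤ C → wpD B P ≤ 0

lemma single_strategy {M : ℕ} {C : ℝ} (hM : 0 < M) {j : ℕ} {c : ℝ} (hc : 0 < c)
    (hj : xs M C j ≤ 0) :
    IsDStrategy (fun i => if i = j then c else 0) ∧
      mcaD M (fun i => if i = j then c else 0) ≤ C := by
  have hsupp : ∀ x : ℕ, x ≠ j → (if x = j then c else 0) = 0 := by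
    intro x hx; rw [if_neg hx]
  have htot : ∑ᶠ i : ℕ, (if i = j then c else 0 : ℝ) = c := by
    rw [finsum_eq_single _ j hsupp, if_pos rfl]
  refine ⟨⟨?_, ?_, ?_⟩, ?_⟩
  · intro i
    dsimp only
    split_ifs
    · exact le_of_lt hc
    · exact le_refl 0
  · apply Set.Finite.subset (Set.finite_singleton j)
    intro x hx
    simp only [Function.mem_support] at hx
    by_contra hne
    exact hx (hsupp x (by simpa using hne))
  · have : (0:ℝ) < ∑ᶠ i : ℕ, (if i = j then c else 0 : ℝ) := by rw [htot]; exact hc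
    exact this
  · unfold mcaD
    rw [htot]
    have hnum : ∑ᶠ i : ℕ, ((i:ℝ)/M) * (if i = j then c else 0) = ((j:ℝ)/M) * c := by
      rw [finsum_eq_single _ j (fun x hx => by rw [hsupp x hx, mul_zero]), if_pos rfl]
    rw [hnum]
    rw [div_le_iff₀ hc]
    have : (j:ℝ)/M ≤ C := by unfold xs at hj; linarith
    nlinarith

lemma opt_single {M : ℕ} {C : ℝ} (hM : 0 < M) {P : ℕ → ℝ} (hopt : IsOpt M C P)
    {j : ℕ} (hj : xs M C j ≤ 0) : ff P j ≤ 0 := by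
  obtain ⟨hstrat, hadm⟩ := single_strategy (C := C) hM one_pos hj
  have hwp := hopt _ hstrat hadm
  rw [wpD_eq_ff] at hwp
  have : ∑ᶠ j' : ℕ, (if j' = j then (1:ℝ) else 0) * ff P j' = ff P j := by
    rw [finsum_eq_single _ j (fun x hx => by rw [if_neg hx, zero_mul]), if_pos rfl, one_mul]
  rw [this] at hwp
  exact hwp

lemma pair_strategy {M : ℕ} {C : ℝ} (hM : 0 < M) {j l : ℕ}
    (hj : xs M C j < 0) (hl : 0 < xs M C l) :
    IsDStrategy (fun i => if i = j then xs M C l else if i = l then -xs M C j else 0) ∧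
      mcaD M (fun i => if i = j then xs M C l else if i = l then -xs M C j else 0) ≤ C := by
  have hjl : j ≠ l := by
    intro h; rw [h] at hj; linarith
  set B := fun i => if i = j then xs M C l else if i = l then -xs M C j else 0 with hB
  have hsupp : ∀ x : ℕ, x ∉ ({j, l} : Finset ℕ) → B x = 0 := by
    intro x hx
    simp only [Finset.mem_insert, Finset.mem_singleton, not_or] at hx
    rw [hB]
    simp only
    rw [if_neg hx.1, if_neg hx.2]
  have hsupp' : Function.support B ⊆ ↑({j, l} : Finset ℕ) := by
    intro x hx
    simp only [Function.mem_support] at hx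
    by_contra hc
    exact hx (hsupp x (by simpa using hc))
  have hBj : B j = xs M C l := by simp [hB]
  have hBl : B l = -xs M C j := by simp [hB, Ne.symm hjl]
  have htot : ∑ᶠ i, B i = xs M C l + -xs M C j := by
    rw [finsum_eq_sum_of_support_subset B hsupp', Finset.sum_pair hjl, hBj, hBl]
  have htotpos : 0 < ∑ᶠ i, B i := by rw [htot]; linarith
  refine ⟨⟨?_, ?_, htotpos⟩, ?_⟩
  · intro i
    rw [hB]
    simp only
    split_ifs
    · linarith
    · linarith
    · exact le_refl 0
  · exact Set.Finite.subset (({j, l} : Finset ℕ).finite_toSet) hsupp'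
  · unfold mcaD
    have hnum : ∑ᶠ i : ℕ, ((i:ℝ)/M) * B i
        = ((j:ℝ)/M) * B j + ((l:ℝ)/M) * B l := by
      rw [finsum_eq_sum_of_support_subset _ (fun x hx => hsupp' (by
        simp only [Function.mem_support] at hx ⊢
        intro h0; rw [h0, mul_zero] at hx; exact hx rfl)), Finset.sum_pair hjl]
    rw [hnum, htot, hBj, hBl, div_le_iff₀ (by linarith : (0:ℝ) < xs M C l + -xs M C j)]
    have e1 : (j:ℝ)/M = xs M C j + C := by unfold xs; ring
    have e2 : (l:ℝ)/M = xs M C l + C := by unfold xs; ring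
    rw [e1, e2]
    ring_nf
    nlinarith [hj, hl]

lemma opt_pair {M : ℕ} {C : ℝ} (hM : 0 < M) {P : ℕ → ℝ} (hopt : IsOpt M C P)
    {j l : ℕ} (hj : xs M C j < 0) (hl : 0 < xs M C l) :
    xs M C l * ff P j + (-xs M C j) * ff P l ≤ 0 := by
  have hjl : j ≠ l := by intro h; rw [h] at hj; linarith
  obtain ⟨hstrat, hadm⟩ := pair_strategy (C := C) hM hj hl
  have hwp := hopt _ hstrat hadm
  rw [wpD_eq_ff] at hwp
  set B := fun i => if i = j then xs M C l else if i = l then -xs M C j else 0 with hB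
  have hsupp' : Function.support (fun i => B i * ff P i) ⊆ ↑({j, l} : Finset ℕ) := by
    intro x hx
    simp only [Function.mem_support, hB] at hx
    simp only [Finset.coe_insert, Finset.coe_singleton, mem_insert_iff, mem_singleton_iff]
    by_contra hc
    push_neg at hc
    rw [if_neg hc.1, if_neg hc.2, zero_mul] at hx
    exact hx rfl
  rw [finsum_eq_sum_of_support_subset _ hsupp', Finset.sum_pair hjl] at hwp
  have hBj : B j = xs M C l := by simp [hB]
  have hBl : B l = -xs M C j := by simp [hB, Ne.symm hjl]
  rw [hBj, hBl] at hwp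
  exact hwp

lemma support_range_of_finite {P : ℕ → ℝ} (hfin : (Function.support P).Finite) :
    ∃ N, Function.support P ⊆ ↑(Finset.range N) := by
  obtain ⟨N, hN⟩ := (hfin.bddAbove).exists_ge 0
  exact ⟨N + 1, fun x hx => by
    simp only [Finset.coe_range, mem_Iio]
    exact Nat.lt_succ_of_le (hN.2 x hx)⟩

lemma exists_mult {M : ℕ} {C : ℝ} (hM : 0 < M) (hC : 0 < C) {P : ℕ → ℝ}
    (hP : IsDStrategy P) (hopt : IsOpt M C P) :
    ∃ t : ℝ, 0 < t ∧ ∀ j : ℕ, ff P j ≤ t * xs M C j := by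
  obtain ⟨N, hN⟩ := support_range_of_finite hP.2.1
  set N₁ := N + ⌈C * M⌉₊ + 1 with hN₁def
  have hsupp1 : Function.support P ⊆ ↑(Finset.range N₁) :=
    subset_trans hN (by simp only [Finset.coe_range]; exact Iio_subset_Iio (by omega))
  have hM' : (0:ℝ) < M := by exact_mod_cast hM
  have hxN₁ : 0 < xs M C N₁ := by
    unfold xs
    rw [sub_pos, lt_div_iff₀ hM']
    calc C * M ≤ (⌈C * M⌉₊ : ℝ) := Nat.le_ceil _
    _ < (N₁ : ℝ) := by
        have : ⌈C * M⌉₊ < N₁ := by omega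
        exact_mod_cast this
  set F := (Finset.range (N₁+1)).filter (fun j => 0 < xs M C j) with hF
  have hN₁F : N₁ ∈ F := by
    rw [hF, Finset.mem_filter]
    exact ⟨Finset.mem_range.2 (by omega), hxN₁⟩
  obtain ⟨l, hlF, hlmax⟩ := F.exists_max_image (fun j => ff P j / xs M C j) ⟨N₁, hN₁F⟩
  have hxl : 0 < xs M C l := (Finset.mem_filter.1 hlF).2
  set t := ff P l / xs M C l with ht
  have htle : ∀ j ∈ F, ff P j ≤ t * xs M C j := by
    intro j hj
    have hxj : 0 < xs M C j := (Finset.mem_filter.1 hj).2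
    have := hlmax j hj
    rw [div_le_iff₀ hxj] at this
    calc ff P j ≤ ff P l / xs M C l * xs M C j := this
    _ = t * xs M C j := by rw [ht]
  have hfftop : ∀ j, N₁ ≤ j → ff P j = ∑ᶠ i, P i := by
    intro j hj
    exact ff_top P (subset_trans hsupp1 (by
      simp only [Finset.coe_range]
      exact Iio_subset_Iio hj))
  have htotpos : 0 < ∑ᶠ i, P i := hP.2.2
  have htpos : 0 < t := by
    have h1 := hlmax N₁ hN₁F
    have h2 : ff P N₁ = ∑ᶠ i, P i := hfftop N₁ le_rfl
    have : 0 < ff P N₁ / xs M C N₁ := by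
      rw [h2]; exact div_pos htotpos hxN₁
    exact lt_of_lt_of_le this h1
  have hffl : ff P l = t * xs M C l := by
    rw [ht, div_mul_cancel₀]
    exact ne_of_gt hxl
  refine ⟨t, htpos, ?_⟩
  intro j
  rcases lt_trichotomy (xs M C j) 0 with hneg | h0 | hpos
  · have hpair := opt_pair hM hopt hneg hxl
    rw [hffl] at hpair
    refine (mul_le_mul_iff_right₀ hxl).1 ?_
    have h3 : xs M C l * ff P j ≤ xs M C j * (t * xs M C l) := by linarith
    calc xs M C l * ff P j ≤ xs M C j * (t * xs M C l) := h3
    _ = xs M C l * (t * xs M C j) := by ring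
  · rw [h0, mul_zero]
    exact opt_single hM hopt (le_of_eq h0)
  · rcases Nat.lt_or_ge j (N₁+1) with hj1 | hj1
    · exact htle j (by rw [hF, Finset.mem_filter]; exact ⟨Finset.mem_range.2 hj1, hpos⟩)
    · have h2 : ff P j = ∑ᶠ i, P i := hfftop j (by omega)
      have h3 : ∑ᶠ i, P i ≤ t * xs M C N₁ := by
        rw [← hfftop N₁ le_rfl]
        exact htle N₁ hN₁F
      calc ff P j = ∑ᶠ i, P i := h2
      _ ≤ t * xs M C N₁ := h3
      _ ≤ t * xs M C j := by
          apply mul_le_mul_of_nonneg_left (xs_mono M C hM (by omega)) (le_of_lt htpos)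

lemma slack {M : ℕ} {C : ℝ} (hM : 0 < M) {P : ℕ → ℝ} {t : ℝ} (ht : 0 < t)
    (hle : ∀ j, ff P j ≤ t * xs M C j) {Q : ℕ → ℝ} (hQ : IsDStrategy Q)
    (hQadm : mcaD M Q ≤ C) (hzero : wpD Q P = 0) :
    ∀ i, Q i ≠ 0 → ff P i = t * xs M C i := by
  obtain ⟨N, hN⟩ := support_range_of_finite hQ.2.1
  have hsum : ∑ j ∈ Finset.range N, Q j * ff P j = 0 := by
    rw [← wpD_eq_sum Q P hN]; exact hzero
  have hterm : ∀ j ∈ Finset.range N, 0 ≤ Q j * (t * xs M C j - ff P j) := by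
    intro j _
    exact mul_nonneg (hQ.1 j) (by linarith [hle j])
  have hsum2 : ∑ j ∈ Finset.range N, Q j * (t * xs M C j - ff P j) ≤ 0 := by
    have e : ∑ j ∈ Finset.range N, Q j * (t * xs M C j - ff P j)
        = t * (∑ j ∈ Finset.range N, Q j * xs M C j) - ∑ j ∈ Finset.range N, Q j * ff P j := by
      rw [Finset.mul_sum, ← Finset.sum_sub_distrib]
      apply Finset.sum_congr rfl
      intro i _
      ring
    rw [e, hsum, sub_zero]
    have := adm_sum hM hQ hQadm hN
    nlinarith
  have hallzero := (Finset.sum_eq_zero_iff_of_nonneg hterm).1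
    (le_antisymm hsum2 (Finset.sum_nonneg hterm))
  intro i hi
  have hiN : i ∈ Finset.range N := by
    have := hN (Function.mem_support.2 hi)
    simpa using this
  have := hallzero i hiN
  rcases mul_eq_zero.1 this with h | h
  · exact absurd h hi
  · linarith

lemma xs_sub (M : ℕ) (C : ℝ) (i i' : ℕ) :
    xs M C i' - xs M C i = ((i':ℝ) - (i:ℝ))/M := by
  unfold xs; ring

section MainBound

variable {M : ℕ} {C : ℝ} {Tf Sf Af : ℕ → ℝ} {N : ℕ} {tT tS : ℝ}

lemma main_bound (hM : 0 < M) (hC : 0 < C)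
    (hTsupp : Function.support Tf ⊆ ↑(Finset.range N))
    (hSnn : ∀ j, 0 ≤ Sf j) (hAnn : ∀ j, 0 ≤ Af j)
    (hAeq : ∀ j, Af j = Tf j - Sf j)
    (htT : 0 < tT) (htS : 0 < tS)
    (hTle : ∀ j, ff Tf j ≤ tT * xs M C j) (hSle : ∀ j, ff Sf j ≤ tS * xs M C j)
    (hfT : ∀ i, Tf i ≠ 0 → ff Tf i = tT * xs M C i)
    (hfS : ∀ i, Tf i ≠ 0 → ff Sf i = tS * xs M C i)
    (htwo : ∃ i i', Tf i ≠ 0 ∧ Tf i' ≠ 0 ∧ i < i') :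
    0 ≤ tT - tS ∧ ∀ j, ff Af j ≤ (tT - tS) * xs M C j := by
  have hM' : (0:ℝ) < M := by exact_mod_cast hM
  -- zero propagation
  have hzero : ∀ m, Tf m = 0 → Sf m = 0 ∧ Af m = 0 := by
    intro m hm
    have h1 := hAeq m
    rw [hm] at h1
    have h2 := hSnn m
    have h3 := hAnn m
    constructor <;> linarith
  have hSsupp : Function.support Sf ⊆ ↑(Finset.range N) := by
    intro x hx
    simp only [Function.mem_support] at hx
    apply hTsupp
    simp only [Function.mem_support]
    intro h0
    exact hx (hzero x h0).1
  have hTnn : ∀ j, 0 ≤ Tf j := by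
    intro j
    rcases eq_or_ne (Tf j) 0 with h | h
    · rw [h]
    · have := hAeq j
      have := hSnn j
      have := hAnn j
      linarith
  have hffA : ∀ j, ff Af j = ff Tf j - ff Sf j := ff_sub Tf Sf Af hTsupp hSsupp hAeq
  -- the support finset
  set E := (Finset.range N).filter (fun i => Tf i ≠ 0) with hE
  have hmemE : ∀ i, Tf i ≠ 0 ↔ i ∈ E := by
    intro i
    rw [hE, Finset.mem_filter]
    constructor
    · intro h
      refine ⟨?_, h⟩
      have := hTsupp (Function.mem_support.2 h)
      simpa using this
    · exact fun h => h.2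
  obtain ⟨w1, w2, hw1, hw2, hww⟩ := htwo
  have hEne : E.Nonempty := ⟨w1, (hmemE w1).1 hw1⟩
  set i0 := E.min' hEne with hi0
  set iR := E.max' hEne with hiR
  have hi0E : i0 ∈ E := E.min'_mem hEne
  have hiRE : iR ∈ E := E.max'_mem hEne
  have hi0iR : i0 < iR := by
    have h1 : i0 ≤ w1 := E.min'_le w1 ((hmemE w1).1 hw1)
    have h2 : w2 ≤ iR := E.le_max' w2 ((hmemE w2).1 hw2)
    omega
  have hTE : ∀ i ∈ E, Tf i ≠ 0 := fun i hi => (hmemE i).2 hi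
  -- consecutive structure
  have hnext : ∀ i ∈ E, i < iR →
      ∃ i', i' ∈ E ∧ i < i' ∧ ∀ m, i < m → m < i' → Tf m = 0 := by
    intro i hi hilt
    have hFne : (E.filter (fun m => i < m)).Nonempty :=
      ⟨iR, Finset.mem_filter.2 ⟨hiRE, hilt⟩⟩
    set i' := (E.filter (fun m => i < m)).min' hFne with hi'
    have hi'mem := (E.filter (fun m => i < m)).min'_mem hFne
    rw [Finset.mem_filter] at hi'mem
    refine ⟨i', hi'mem.1, hi'mem.2, ?_⟩
    intro m hm1 hm2
    by_contra hTm
    have hmE : m ∈ E.filter (fun m => i < m) := Finset.mem_filter.2 ⟨(hmemE m).1 hTm, hm1⟩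
    have := (E.filter (fun m => i < m)).min'_le m hmE
    omega
  have hprev : ∀ j, i0 < j →
      ∃ i, i ∈ E ∧ i < j ∧ ∀ m, i < m → m < j → Tf m = 0 := by
    intro j hj
    have hFne : (E.filter (fun m => m < j)).Nonempty :=
      ⟨i0, Finset.mem_filter.2 ⟨hi0E, hj⟩⟩
    set i := (E.filter (fun m => m < j)).max' hFne with hidef
    have himem := (E.filter (fun m => m < j)).max'_mem hFne
    rw [Finset.mem_filter] at himem
    refine ⟨i, himem.1, himem.2, ?_⟩
    intro m hm1 hm2
    by_contra hTm
    have hmE : m ∈ E.filter (fun m => m < j) := Finset.mem_filter.2 ⟨(hmemE m).1 hTm, hm2⟩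
    have := (E.filter (fun m => m < j)).le_max' m hmE
    omega
  -- generic facts for an optimal member P
  have key : ∀ (P : ℕ → ℝ) (tP : ℝ), 0 < tP → (∀ j, ff P j ≤ tP * xs M C j) →
      (∀ i, Tf i ≠ 0 → ff P i = tP * xs M C i) → (∀ j, 0 ≤ P j) →
      (∀ m, Tf m = 0 → P m = 0) →
      (Function.support P ⊆ ↑(Finset.range N)) →
      ((∀ i i', i ∈ E → i' ∈ E → i < i' → (∀ m, i < m → m < i' → Tf m = 0) →
        P i + P i' = tP * (xs M C i' - xs M C i)) ∧
      (∀ i ∈ E, P i ≤ tP / M) ∧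
      (1 ≤ i0 → P i0 = tP * xs M C i0 + ∑ᶠ m, P m)) := by
    intro P tP htP hPle hfP hPnn hPzero hPsupp
    have hpair : ∀ i i', i ∈ E → i' ∈ E → i < i' → (∀ m, i < m → m < i' → Tf m = 0) →
        P i + P i' = tP * (xs M C i' - xs M C i) := by
      intro i i' hi hi' hlt hbet
      have hg := ff_gap P hPsupp hlt (fun m h1 h2 => hPzero m (hbet m h1 h2))
      rw [hfP i (hTE i hi), hfP i' (hTE i' hi')] at hg
      linarith
    refine ⟨hpair, ?_, ?_⟩
    · intro i hi
      by_cases hsucc : Tf (i+1) = 0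
      · have hP1 : P (i+1) = 0 := hPzero _ hsucc
        have hg := ff_succ P hPsupp i
        rw [hP1, hfP i (hTE i hi)] at hg
        have h2 := hPle (i+1)
        rw [xs_succ M C hM] at h2
        have : tP * (xs M C i + 1 / ↑M) = tP * xs M C i + tP / M := by ring
        rw [this] at h2
        linarith
      · have hi1E : (i+1) ∈ E := (hmemE _).1 hsucc
        have := hpair i (i+1) hi hi1E (Nat.lt_succ_self i) (by omega)
        rw [xs_succ M C hM] at this
        have h2 : xs M C i + 1 / ↑M - xs M C i = 1 / M := by ring
        rw [h2] at this
        have := hPnn (i+1)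
        have : P i ≤ tP * (1/M) := by linarith
        calc P i ≤ tP * (1/M) := this
        _ = tP / M := by ring
    · intro h1
      have hT0 : Tf 0 = 0 := by
        by_contra hc
        have := E.min'_le 0 ((hmemE 0).1 hc)
        omega
      have hP0 : P 0 = 0 := hPzero 0 hT0
      have hg := ff_gap P hPsupp (show 0 < i0 by omega) (fun m hm1 hm2 => hPzero m (by
        by_contra hc
        have := E.min'_le m ((hmemE m).1 hc)
        omega))
      rw [ff_zero P hPsupp, hP0, hfP i0 (hTE i0 hi0E)] at hg
      linarith
  obtain ⟨hpairT, hbndT, hbotT⟩ := key Tf tT htT hTle hfT hTnn (fun m hm => hm) hTsupp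
  obtain ⟨hpairS, hbndS, hbotS⟩ := key Sf tS htS hSle hfS hSnn (fun m hm => (hzero m hm).1) hSsupp
  set t' := tT - tS with ht'
  have hfA : ∀ i, Tf i ≠ 0 → ff Af i = t' * xs M C i := by
    intro i hi
    rw [hffA i, hfT i hi, hfS i hi, ht']
    ring
  have hAE : ∀ i, Tf i = 0 → Af i = 0 := fun i hi => (hzero i hi).2
  have hpairA : ∀ i i', i ∈ E → i' ∈ E → i < i' → (∀ m, i < m → m < i' → Tf m = 0) →
      Af i + Af i' = t' * (xs M C i' - xs M C i) := by
    intro i i' hi hi' hlt hbet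
    have h1 := hpairT i i' hi hi' hlt hbet
    have h2 := hpairS i i' hi hi' hlt hbet
    have h3 := hAeq i
    have h4 := hAeq i'
    rw [ht', sub_mul]
    linarith
  have hxsdiff : ∀ i i' : ℕ, i < i' → 0 < xs M C i' - xs M C i := by
    intro i i' hlt
    rw [xs_sub]
    apply div_pos _ hM'
    have : (i:ℝ) < i' := by exact_mod_cast hlt
    linarith
  have ht'nn : 0 ≤ t' := by
    obtain ⟨i', hi'E, hlt, hbet⟩ := hnext i0 hi0E hi0iR
    have hp := hpairA i0 i' hi0E hi'E hlt hbet
    have hd := hxsdiff i0 i' hlt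
    have ha := hAnn i0
    have hb := hAnn i'
    nlinarith
  -- gap analysis: consecutive pairs are at distance ≤ 2, with equality structure at distance 2
  have hgap : ∀ i i', i ∈ E → i' ∈ E → i < i' → (∀ m, i < m → m < i' → Tf m = 0) →
      i' ≤ i + 2 ∧ (i' = i + 2 → Af i = t'/M ∧ Af i' = t'/M) := by
    intro i i' hi hi' hlt hbet
    have hpT := hpairT i i' hi hi' hlt hbet
    have hpS := hpairS i i' hi hi' hlt hbet
    have hbT1 := hbndT i hi
    have hbT2 := hbndT i' hi'
    have hbS1 := hbndS i hi
    have hbS2 := hbndS i' hi'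
    have hD : xs M C i' - xs M C i = ((i':ℝ) - i)/M := xs_sub M C i i'
    have hle2 : i' ≤ i + 2 := by
      by_contra hc
      push_neg at hc
      have h3 : (3:ℝ) ≤ (i':ℝ) - i := by
        have : (i:ℝ) + 3 ≤ i' := by exact_mod_cast hc
        linarith
      have hDge : 3/M ≤ xs M C i' - xs M C i := by
        rw [hD]
        gcongr
      have h5 : tT * (3/M) ≤ tT * (xs M C i' - xs M C i) :=
        mul_le_mul_of_nonneg_left hDge (le_of_lt htT)
      have e1 : tT * (3/(M:ℝ)) = 3 * (tT/M) := by ring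
      have hdp : 0 < tT/M := div_pos htT hM'
      linarith
    refine ⟨hle2, ?_⟩
    intro heq2
    have hDeq : xs M C i' - xs M C i = 2/M := by
      rw [hD, heq2]
      push_cast
      ring
    rw [hDeq] at hpT hpS
    have e2 : tT * (2/(M:ℝ)) = 2 * (tT/M) := by ring
    have e3 : tS * (2/(M:ℝ)) = 2 * (tS/M) := by ring
    have hTi : Tf i = tT/M := le_antisymm hbT1 (by linarith)
    have hTi' : Tf i' = tT/M := le_antisymm hbT2 (by linarith)
    have hSi : Sf i = tS/M := le_antisymm hbS1 (by linarith)
    have hSi' : Sf i' = tS/M := le_antisymm hbS2 (by linarith)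
    constructor
    · rw [hAeq i, hTi, hSi, ht']; ring
    · rw [hAeq i', hTi', hSi', ht']; ring
  -- support of Af
  have hAsupp : Function.support Af ⊆ ↑(Finset.range N) := by
    intro x hx
    simp only [Function.mem_support] at hx
    apply hTsupp
    simp only [Function.mem_support]
    intro h0
    exact hx (hzero x h0).2
  have hxs0 : xs M C 0 = -C := by unfold xs; simp
  have hEy : ∀ m, Tf m ≠ 0 → m ≤ iR := fun m hm => E.le_max' m ((hmemE m).1 hm)
  have hEy0 : ∀ m, Tf m ≠ 0 → i0 ≤ m := fun m hm => E.min'_le m ((hmemE m).1 hm)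
  -- bound for Af at the top point
  have hAiR : Af iR ≤ t'/M := by
    obtain ⟨i, hiE, hilt, hbet⟩ := hprev iR hi0iR
    have hpA := hpairA i iR hiE hiRE hilt hbet
    obtain ⟨hle2, hgap2⟩ := hgap i iR hiE hiRE hilt hbet
    rcases Nat.lt_or_ge (i+1) iR with hcase | hcase
    · have : iR = i + 2 := by omega
      exact le_of_eq (hgap2 this).2
    · have hiR1 : iR = i + 1 := by omega
      rw [hiR1, xs_succ M C hM] at hpA
      have : xs M C i + 1/(M:ℝ) - xs M C i = 1/M := by ring
      rw [this] at hpA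
      have := hAnn i
      have e : t' * (1/(M:ℝ)) = t'/M := by ring
      rw [hiR1]
      linarith [e ▸ hpA]
  -- main case analysis
  refine ⟨ht'nn, fun j => ?_⟩
  by_cases hTj : Tf j ≠ 0
  · exact le_of_eq (hfA j hTj)
  push_neg at hTj
  have hAj : Af j = 0 := hAE j hTj
  rcases Nat.lt_or_ge j i0 with hji0 | hji0
  · -- below the support: j = 0, i0 = 1
    have hi0ge1 : 1 ≤ i0 := by omega
    -- total masses
    have htotle : ∀ (P : ℕ → ℝ) (tP : ℝ), 0 < tP → (∀ j, ff P j ≤ tP * xs M C j) →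
        (∀ m, Tf m = 0 → P m = 0) → Function.support P ⊆ ↑(Finset.range N) →
        tP * C ≤ ∑ᶠ m, P m := by
      intro P tP htP hPle hPzero hPsupp
      have hP0 : P 0 = 0 := hPzero 0 (by
        by_contra hc
        have := hEy0 0 hc
        omega)
      have := hPle 0
      rw [ff_zero P hPsupp, hP0, hxs0] at this
      linarith
    have htotT := htotle Tf tT htT hTle (fun m hm => hm) hTsupp
    have htotS := htotle Sf tS htS hSle (fun m hm => (hzero m hm).1) hSsupp
    have hbT := hbotT hi0ge1
    have hbS := hbotS hi0ge1
    have hbndTi0 := hbndT i0 hi0E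
    have hbndSi0 := hbndS i0 hi0E
    have hxsi0C : xs M C i0 + C = (i0:ℝ)/M := by unfold xs; ring
    have hi0le1 : i0 ≤ 1 := by
      have h1 : tT * ((i0:ℝ)/M) ≤ tT/M := by nlinarith [hbT, htotT, hbndTi0, hxsi0C]
      have h2 : (i0:ℝ)/M ≤ 1/M := by
        have := (mul_le_mul_iff_right₀ htT).1 (by
          calc tT * ((i0:ℝ)/M) ≤ tT/M := h1
          _ = tT * (1/M) := by ring)
        exact this
      have h3 : (i0:ℝ) ≤ 1 := by
        have h4 := mul_le_mul_of_nonneg_right h2 (le_of_lt hM')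
        rw [div_mul_cancel₀ _ (ne_of_gt hM'), div_mul_cancel₀ _ (ne_of_gt hM')] at h4
        exact h4
      exact_mod_cast h3
    have hi0eq1 : i0 = 1 := by omega
    have hjeq0 : j = 0 := by omega
    -- exact totals
    have hxs1 : xs M C 1 = 1/(M:ℝ) - C := by unfold xs; simp
    have htotTeq : ∑ᶠ m, Tf m = tT * C := by
      have e : tT * (1/(M:ℝ) - C) = tT/M - tT*C := by ring
      have : Tf i0 = tT/M := by
        apply le_antisymm hbndTi0
        rw [hbT, hi0eq1, hxs1, e]
        linarith [htotT]
      rw [hi0eq1, hxs1, e] at hbT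
      rw [hi0eq1] at this
      linarith [hbT, this]
    have htotSeq : ∑ᶠ m, Sf m = tS * C := by
      have e : tS * (1/(M:ℝ) - C) = tS/M - tS*C := by ring
      have : Sf i0 = tS/M := by
        apply le_antisymm hbndSi0
        rw [hbS, hi0eq1, hxs1, e]
        linarith [htotS]
      rw [hi0eq1, hxs1, e] at hbS
      rw [hi0eq1] at this
      linarith [hbS, this]
    have htotAeq : ∑ᶠ m, Af m = ∑ᶠ m, Tf m - ∑ᶠ m, Sf m := by
      rw [tot_eq_sum Af hAsupp, tot_eq_sum Tf hTsupp, tot_eq_sum Sf hSsupp,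
        ← Finset.sum_sub_distrib]
      exact Finset.sum_congr rfl (fun i _ => hAeq i)
    rw [hjeq0, ff_zero Af hAsupp, hxs0]
    rw [hjeq0] at hAj
    rw [hAj, htotAeq, htotTeq, htotSeq, ht']
    exact le_of_eq (by ring)
  rcases Nat.lt_or_ge iR j with hjiR | hjiR
  · -- above the support
    have hsupA : Function.support Af ⊆ ↑(Finset.range j) := support_sub_range (fun m hm => by
      apply hAE
      by_contra hc
      have := hEy m hc
      omega)
    have hsupA' : Function.support Af ⊆ ↑(Finset.range (iR+1)) := support_sub_range (fun m hm => by
      apply hAE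
      by_contra hc
      have := hEy m hc
      omega)
    have h1 : ff Af j = ∑ᶠ m, Af m := ff_top Af hsupA
    have h2 : ff Af (iR+1) = ∑ᶠ m, Af m := ff_top Af hsupA'
    have hAiR1 : Af (iR+1) = 0 := hAE _ (by
      by_contra hc
      have := hEy _ hc
      omega)
    have h3 := ff_succ Af hAsupp iR
    rw [hAiR1, h2, hfA iR (hTE iR hiRE)] at h3
    have h4 : ff Af j = t' * xs M C iR + Af iR := by rw [h1]; linarith
    calc ff Af j = t' * xs M C iR + Af iR := h4
    _ ≤ t' * xs M C iR + t'/M := by linarith [hAiR]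
    _ = t' * (xs M C iR + 1/M) := by ring
    _ = t' * xs M C (iR+1) := by rw [xs_succ M C hM]
    _ ≤ t' * xs M C j := mul_le_mul_of_nonneg_left (xs_mono M C hM (by omega)) ht'nn
  · -- in a gap
    have hjne : j ≠ iR := by
      intro h
      rw [h] at hTj
      exact (hTE iR hiRE) hTj
    have hjltiR : j < iR := by omega
    have hjni0 : j ≠ i0 := fun h => (hTE i0 hi0E) (h ▸ hTj)
    obtain ⟨i, hiE, hilt, hbet⟩ := hprev j (by omega)
    obtain ⟨i', hi'E, hlt', hbet'⟩ := hnext i hiE (by omega)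
    have hji' : j < i' := by
      rcases Nat.lt_or_ge j i' with h | h
      · exact h
      · exfalso
        rcases Nat.eq_or_lt_of_le h with h2 | h2
        · exact (hTE i' hi'E) (h2 ▸ hTj)
        · exact (hTE i' hi'E) (hbet i' hlt' h2)
    obtain ⟨hle2, hgap2⟩ := hgap i i' hiE hi'E hlt' hbet'
    have hi'eq : i' = i + 2 := by omega
    have hjeq : j = i + 1 := by omega
    have hAi : Af i = t'/M := (hgap2 hi'eq).1
    have h3 := ff_succ Af hAsupp i
    rw [← hjeq] at h3
    rw [h3, hAj, hfA i (hTE i hiE), hAi, hjeq, xs_succ M C hM]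
    exact le_of_eq (by ring)

end MainBound

lemma opt_of_bound {M : ℕ} {C : ℝ} (hM : 0 < M) {Af : ℕ → ℝ} {t' : ℝ} (ht' : 0 ≤ t')
    (h : ∀ j, ff Af j ≤ t' * xs M C j) : IsOpt M C Af := by
  intro B hB hBadm
  obtain ⟨N, hN⟩ := support_range_of_finite hB.2.1
  rw [wpD_eq_sum B Af hN]
  have h1 : ∑ j ∈ Finset.range N, B j * ff Af j
      ≤ ∑ j ∈ Finset.range N, B j * (t' * xs M C j) := by
    apply Finset.sum_le_sum
    intro j _
    exact mul_le_mul_of_nonneg_left (h j) (hB.1 j)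
  have h2 : ∑ j ∈ Finset.range N, B j * (t' * xs M C j)
      = t' * ∑ j ∈ Finset.range N, B j * xs M C j := by
    rw [Finset.mul_sum]
    exact Finset.sum_congr rfl (fun j _ => by ring)
  have h3 := adm_sum hM hB hBadm hN
  calc ∑ j ∈ Finset.range N, B j * ff Af j
      ≤ t' * ∑ j ∈ Finset.range N, B j * xs M C j := by rw [← h2]; exact h1
  _ ≤ 0 := mul_nonpos_of_nonneg_of_nonpos ht' h3

lemma ff_sum {ι : Type*} (s : Finset ι) (G : ι → ℕ → ℝ) {N : ℕ}
    (hG : ∀ ℓ ∈ s, Function.support (G ℓ) ⊆ ↑(Finset.range N)) (j : ℕ) :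
    ff (fun i => ∑ ℓ ∈ s, G ℓ i) j = ∑ ℓ ∈ s, ff (G ℓ) j := by
  have hsupp : Function.support (fun i => ∑ ℓ ∈ s, G ℓ i) ⊆ ↑(Finset.range N) := by
    intro x hx
    simp only [Function.mem_support] at hx
    have : ∃ ℓ ∈ s, G ℓ x ≠ 0 := by
      by_contra hc
      push_neg at hc
      exact hx (Finset.sum_eq_zero hc)
    obtain ⟨ℓ, hℓ, hne⟩ := this
    exact hG ℓ hℓ (Function.mem_support.2 hne)
  rw [ff_eq_sum _ hsupp j]
  have : ∀ i ∈ Finset.range N, (∑ ℓ ∈ s, G ℓ i) * ee i j = ∑ ℓ ∈ s, G ℓ i * ee i j := by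
    intro i _
    rw [Finset.sum_mul]
  rw [Finset.sum_congr rfl this, Finset.sum_comm]
  exact Finset.sum_congr rfl (fun ℓ hℓ => (ff_eq_sum (G ℓ) (hG ℓ hℓ) j).symm)

lemma wpD_sum_right {ι : Type*} (B : ℕ → ℝ) {NB : ℕ}
    (hB : Function.support B ⊆ ↑(Finset.range NB)) (s : Finset ι) (G : ι → ℕ → ℝ) {N : ℕ}
    (hG : ∀ ℓ ∈ s, Function.support (G ℓ) ⊆ ↑(Finset.range N)) :
    wpD B (fun i => ∑ ℓ ∈ s, G ℓ i) = ∑ ℓ ∈ s, wpD B (G ℓ) := by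
  rw [wpD_eq_sum B _ hB]
  have : ∀ j ∈ Finset.range NB, B j * ff (fun i => ∑ ℓ ∈ s, G ℓ i) j
      = ∑ ℓ ∈ s, B j * ff (G ℓ) j := by
    intro j _
    rw [ff_sum s G hG j, Finset.mul_sum]
  rw [Finset.sum_congr rfl this, Finset.sum_comm]
  exact Finset.sum_congr rfl (fun ℓ _ => (wpD_eq_sum B (G ℓ) hB).symm)

lemma coe_range_mono {N N' : ℕ} (h : N ≤ N') :
    (↑(Finset.range N) : Set ℕ) ⊆ ↑(Finset.range N') :=
  Finset.coe_subset.2 (Finset.range_subset_range.2 h)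

lemma sum_supp {ι : Type*} (s : Finset ι) (G : ι → ℕ → ℝ) {N : ℕ}
    (hG : ∀ ℓ ∈ s, Function.support (G ℓ) ⊆ ↑(Finset.range N)) :
    Function.support (fun i => ∑ ℓ ∈ s, G ℓ i) ⊆ ↑(Finset.range N) := by
  intro x hx
  simp only [Function.mem_support] at hx
  have : ∃ ℓ ∈ s, G ℓ x ≠ 0 := by
    by_contra hc
    push_neg at hc
    exact hx (Finset.sum_eq_zero hc)
  obtain ⟨ℓ, hℓ, hne⟩ := this
  exact hG ℓ hℓ (Function.mem_support.2 hne)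

lemma sum_strategy {M : ℕ} {C : ℝ} (hM : 0 < M) {ι : Type*} (s : Finset ι) (hs : s.Nonempty)
    (G : ι → ℕ → ℝ) {N : ℕ} (hG : ∀ ℓ ∈ s, Function.support (G ℓ) ⊆ ↑(Finset.range N))
    (hstrat : ∀ ℓ ∈ s, IsDStrategy (G ℓ)) (hadm : ∀ ℓ ∈ s, mcaD M (G ℓ) ≤ C) :
    IsDStrategy (fun i => ∑ ℓ ∈ s, G ℓ i) ∧ mcaD M (fun i => ∑ ℓ ∈ s, G ℓ i) ≤ C := by
  have hsupp := sum_supp s G hG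
  have htoti : ∀ ℓ ∈ s, ∑ᶠ i, G ℓ i = ∑ i ∈ Finset.range N, G ℓ i :=
    fun ℓ hℓ => tot_eq_sum (G ℓ) (hG ℓ hℓ)
  have htot : ∑ᶠ i, (fun i => ∑ ℓ ∈ s, G ℓ i) i = ∑ ℓ ∈ s, ∑ᶠ i, G ℓ i := by
    rw [tot_eq_sum _ hsupp, Finset.sum_comm]
    exact Finset.sum_congr rfl (fun ℓ hℓ => (htoti ℓ hℓ).symm)
  have htotpos : 0 < ∑ᶠ i, (fun i => ∑ ℓ ∈ s, G ℓ i) i := by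
    rw [htot]
    exact Finset.sum_pos (fun ℓ hℓ => (hstrat ℓ hℓ).2.2) hs
  have hnum : ∀ ℓ ∈ s, ∑ᶠ i : ℕ, ((i:ℝ)/M) * G ℓ i = ∑ i ∈ Finset.range N, ((i:ℝ)/M) * G ℓ i := by
    intro ℓ hℓ
    apply finsum_eq_sum_of_support_subset
    intro x hx
    apply hG ℓ hℓ
    simp only [Function.mem_support] at hx ⊢
    intro h0; rw [h0, mul_zero] at hx; exact hx rfl
  have hnumle : ∀ ℓ ∈ s, ∑ᶠ i : ℕ, ((i:ℝ)/M) * G ℓ i ≤ C * ∑ᶠ i, G ℓ i := by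
    intro ℓ hℓ
    have h1 := hadm ℓ hℓ
    unfold mcaD at h1
    exact (div_le_iff₀ (hstrat ℓ hℓ).2.2).1 h1
  refine ⟨⟨fun j => Finset.sum_nonneg (fun ℓ hℓ => (hstrat ℓ hℓ).1 j),
    Set.Finite.subset (Finset.range N).finite_toSet hsupp, htotpos⟩, ?_⟩
  unfold mcaD
  rw [div_le_iff₀ htotpos]
  have hnumtot : ∑ᶠ i : ℕ, ((i:ℝ)/M) * (∑ ℓ ∈ s, G ℓ i) = ∑ ℓ ∈ s, ∑ᶠ i : ℕ, ((i:ℝ)/M) * G ℓ i := by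
    have hsupp2 : Function.support (fun i : ℕ => ((i:ℝ)/M) * (∑ ℓ ∈ s, G ℓ i))
        ⊆ ↑(Finset.range N) := by
      intro x hx
      apply hsupp
      simp only [Function.mem_support] at hx ⊢
      intro h0; rw [h0, mul_zero] at hx; exact hx rfl
    rw [finsum_eq_sum_of_support_subset _ hsupp2]
    have : ∀ i ∈ Finset.range N, ((i:ℝ)/M) * (∑ ℓ ∈ s, G ℓ i)
        = ∑ ℓ ∈ s, ((i:ℝ)/M) * G ℓ i := fun i _ => Finset.mul_sum _ _ _
    rw [Finset.sum_congr rfl this, Finset.sum_comm]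
    exact Finset.sum_congr rfl (fun ℓ hℓ => (hnum ℓ hℓ).symm)
  calc ∑ᶠ i : ℕ, ((i:ℝ)/M) * (∑ ℓ ∈ s, G ℓ i)
      = ∑ ℓ ∈ s, ∑ᶠ i : ℕ, ((i:ℝ)/M) * G ℓ i := hnumtot
  _ ≤ ∑ ℓ ∈ s, C * ∑ᶠ i, G ℓ i := Finset.sum_le_sum hnumle
  _ = C * ∑ ℓ ∈ s, ∑ᶠ i, G ℓ i := by rw [Finset.mul_sum]
  _ = C * ∑ᶠ i, (fun i => ∑ ℓ ∈ s, G ℓ i) i := by rw [htot]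

lemma ff_smul {P : ℕ → ℝ} {N : ℕ} (h : Function.support P ⊆ ↑(Finset.range N)) (c : ℝ) (j : ℕ) :
    ff (fun i => c * P i) j = c * ff P j := by
  have hsupp : Function.support (fun i => c * P i) ⊆ ↑(Finset.range N) := by
    intro x hx
    apply h
    simp only [Function.mem_support] at hx ⊢
    intro h0; rw [h0, mul_zero] at hx; exact hx rfl
  rw [ff_eq_sum _ hsupp j, ff_eq_sum P h j, Finset.mul_sum]
  exact Finset.sum_congr rfl (fun i _ => by ring)

lemma wpD_smul_right (B : ℕ → ℝ) {NB : ℕ} (hB : Function.support B ⊆ ↑(Finset.range NB))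
    {P : ℕ → ℝ} {N : ℕ} (hP : Function.support P ⊆ ↑(Finset.range N)) (c : ℝ) :
    wpD B (fun i => c * P i) = c * wpD B P := by
  rw [wpD_eq_sum B _ hB, wpD_eq_sum B P hB, Finset.mul_sum]
  exact Finset.sum_congr rfl (fun j _ => by rw [ff_smul hP c j]; ring)

theorem stmt18 (M : ℕ) (hM : 0 < M) (C : ℝ) (hC : 0 < C) (n : ℕ) (hn : 2 ≤ n)
    (A : Fin n → ℕ → ℝ)
    (hstrat : ∀ k, IsDStrategy (A k)) (hadm : ∀ k, mcaD M (A k) ≤ C)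
    (heq : ∀ k, ∀ B : ℕ → ℝ, IsDStrategy B → mcaD M B ≤ C →
      wpD B (fun j => ∑ ℓ ∈ Finset.univ.erase k, A ℓ j) ≤
        wpD (A k) (fun j => ∑ ℓ ∈ Finset.univ.erase k, A ℓ j)) :
    (∀ j k, wpD (A k) (A j) = 0) ∧
    (∀ k, ∀ B : ℕ → ℝ, IsDStrategy B → mcaD M B ≤ C → 0 ≤ wpD (A k) B) := by
  -- uniform support bound
  have hfin : ∀ ℓ, ∃ N, Function.support (A ℓ) ⊆ ↑(Finset.range N) :=
    fun ℓ => support_range_of_finite (hstrat ℓ).2.1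
  choose Nf hNf using hfin
  set N := Finset.univ.sup Nf with hNdef
  have hNA : ∀ ℓ, Function.support (A ℓ) ⊆ ↑(Finset.range N) :=
    fun ℓ => subset_trans (hNf ℓ) (coe_range_mono (Finset.le_sup (Finset.mem_univ ℓ)))
  set S : Fin n → ℕ → ℝ := fun k j => ∑ ℓ ∈ Finset.univ.erase k, A ℓ j with hSdef
  have heq' : ∀ k, ∀ B : ℕ → ℝ, IsDStrategy B → mcaD M B ≤ C →
      wpD B (S k) ≤ wpD (A k) (S k) := heq
  have hSsupp : ∀ k, Function.support (S k) ⊆ ↑(Finset.range N) :=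
    fun k => sum_supp _ _ (fun ℓ _ => hNA ℓ)
  have herasene : ∀ k : Fin n, (Finset.univ.erase k).Nonempty := by
    intro k
    rw [← Finset.card_pos, Finset.card_erase_of_mem (Finset.mem_univ k), Finset.card_univ,
      Fintype.card_fin]
    omega
  have hSk : ∀ k, IsDStrategy (S k) ∧ mcaD M (S k) ≤ C := fun k =>
    sum_strategy hM _ (herasene k) A (fun ℓ _ => hNA ℓ) (fun ℓ _ => hstrat ℓ) (fun ℓ _ => hadm ℓ)
  -- w matrix
  have hw_anti : ∀ k ℓ, wpD (A k) (A ℓ) = - wpD (A ℓ) (A k) :=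
    fun k ℓ => wpD_antisymm (A k) (A ℓ) (hNA k) (hNA ℓ)
  have hwkk : ∀ k, wpD (A k) (A k) = 0 := fun k => wpD_self (A k) (hstrat k).2.1
  have hSexp : ∀ (B : ℕ → ℝ) {NB : ℕ}, Function.support B ⊆ ↑(Finset.range NB) →
      ∀ k, wpD B (S k) = ∑ ℓ ∈ Finset.univ.erase k, wpD B (A ℓ) :=
    fun B NB hB k => wpD_sum_right B hB _ A (fun ℓ _ => hNA ℓ)
  -- part 1
  have hv_nonneg : ∀ k, 0 ≤ wpD (A k) (S k) := by
    intro k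
    have h1 := heq' k (S k) (hSk k).1 (hSk k).2
    have h2 : wpD (S k) (S k) = 0 := wpD_self (S k) (hSk k).1.2.1
    linarith
  have hvsum : ∑ k, wpD (A k) (S k) = 0 := by
    have e1 : ∀ k, wpD (A k) (S k) = ∑ ℓ, wpD (A k) (A ℓ) := by
      intro k
      rw [hSexp (A k) (hNA k) k, Finset.sum_erase_eq_sub (Finset.mem_univ k), hwkk k, sub_zero]
    rw [Finset.sum_congr rfl (fun k _ => e1 k)]
    have e2 : ∑ k, ∑ ℓ, wpD (A k) (A ℓ) = - ∑ k, ∑ ℓ, wpD (A k) (A ℓ) := by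
      nth_rewrite 1 [Finset.sum_comm]
      rw [← Finset.sum_neg_distrib]
      apply Finset.sum_congr rfl
      intro k _
      rw [← Finset.sum_neg_distrib]
      exact Finset.sum_congr rfl (fun ℓ _ => by rw [hw_anti ℓ k])
    linarith
  have hv0 : ∀ k, wpD (A k) (S k) = 0 := by
    have := (Finset.sum_eq_zero_iff_of_nonneg (fun k _ => hv_nonneg k)).1 hvsum
    exact fun k => this k (Finset.mem_univ k)
  have part1 : ∀ j k, wpD (A k) (A j) = 0 := by
    have hge : ∀ j k, j ≠ k → 0 ≤ wpD (A j) (A k) := by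
      intro j k hjk
      have h1 := heq' k (A j) (hstrat j) (hadm j)
      rw [hv0 k, hSexp (A j) (hNA j) k, Finset.sum_erase_eq_sub (Finset.mem_univ k)] at h1
      have h2 : ∑ ℓ, wpD (A j) (A ℓ) = 0 := by
        have := hv0 j
        rw [hSexp (A j) (hNA j) j, Finset.sum_erase_eq_sub (Finset.mem_univ j), hwkk j,
          sub_zero] at this
        exact this
      rw [h2] at h1
      linarith
    intro j k
    rcases eq_or_ne j k with h | h
    · rw [h]; exact hwkk k
    · have h1 := hge j k h
      have h2 := hge k j (Ne.symm h)
      rw [hw_anti k j] at h2 ⊢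
      linarith
  refine ⟨part1, ?_⟩
  -- part 2
  intro k B hB hBadm
  obtain ⟨NB, hNB⟩ := support_range_of_finite hB.2.1
  set N2 := max N NB with hN2
  have hNA2 : ∀ ℓ, Function.support (A ℓ) ⊆ ↑(Finset.range N2) :=
    fun ℓ => subset_trans (hNA ℓ) (coe_range_mono (le_max_left _ _))
  have hNB2 : Function.support B ⊆ ↑(Finset.range N2) :=
    subset_trans hNB (coe_range_mono (le_max_right _ _))
  rw [wpD_antisymm (A k) B (hNA2 k) hNB2]
  suffices h : wpD B (A k) ≤ 0 by linarith
  -- S k is optimal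
  have hSopt : IsOpt M C (S k) := by
    intro B' hB' hB'adm
    have := heq' k B' hB' hB'adm
    rw [hv0 k] at this
    exact this
  -- T
  have hne' : Nonempty (Fin n) := ⟨⟨0, by omega⟩⟩
  set T : ℕ → ℝ := fun j => ∑ ℓ, A ℓ j with hTdef
  have hTsupp : Function.support T ⊆ ↑(Finset.range N) := sum_supp _ _ (fun ℓ _ => hNA ℓ)
  have hTstrat : IsDStrategy T ∧ mcaD M T ≤ C :=
    sum_strategy hM _ (Finset.univ_nonempty) A (fun ℓ _ => hNA ℓ) (fun ℓ _ => hstrat ℓ)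
      (fun ℓ _ => hadm ℓ)
  have hTopt : IsOpt M C T := by
    intro B' hB' hB'adm
    obtain ⟨NB', hNB'⟩ := support_range_of_finite hB'.2.1
    have hW : wpD B' T = ∑ ℓ, wpD B' (A ℓ) := wpD_sum_right B' hNB' _ A (fun ℓ _ => hNA ℓ)
    have hk' : ∀ m : Fin n, wpD B' (S m) ≤ 0 := by
      intro m
      have := heq' m B' hB' hB'adm
      rw [hv0 m] at this
      exact this
    have hsum : ∑ m, wpD B' (S m) = ((n:ℝ) - 1) * wpD B' T := by
      have e1 : ∀ m, wpD B' (S m) = wpD B' T - wpD B' (A m) := by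
        intro m
        rw [hSexp B' hNB' m, Finset.sum_erase_eq_sub (Finset.mem_univ m), hW]
      rw [Finset.sum_congr rfl (fun m _ => e1 m), Finset.sum_sub_distrib,
        Finset.sum_const, Finset.card_univ, Fintype.card_fin, ← hW]
      push_cast
      rw [nsmul_eq_mul]
      ring
    have hsumle : ∑ m, wpD B' (S m) ≤ 0 :=
      Finset.sum_nonpos (fun m _ => hk' m)
    rw [hsum] at hsumle
    have hn1 : (1:ℝ) ≤ (n:ℝ) - 1 := by
      have : (2:ℝ) ≤ (n:ℝ) := by exact_mod_cast hn
      linarith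
    by_contra hc
    push_neg at hc
    nlinarith
  -- multipliers
  obtain ⟨tS, htS, hSle⟩ := exists_mult hM hC (hSk k).1 hSopt
  obtain ⟨tT, htT, hTle⟩ := exists_mult hM hC hTstrat.1 hTopt
  -- equalities on the support of T
  have hTnn : ∀ j, 0 ≤ T j := fun j => Finset.sum_nonneg (fun ℓ _ => (hstrat ℓ).1 j)
  have hwitness : ∀ i, T i ≠ 0 → ∃ ℓ, A ℓ i ≠ 0 := by
    intro i hi
    by_contra hc
    push_neg at hc
    exact hi (Finset.sum_eq_zero (fun ℓ _ => hc ℓ))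
  have hzeroT : ∀ ℓ, wpD (A ℓ) T = 0 := by
    intro ℓ
    rw [wpD_sum_right (A ℓ) (hNA ℓ) _ A (fun m _ => hNA m)]
    exact Finset.sum_eq_zero (fun m _ => part1 m ℓ)
  have hzeroS : ∀ ℓ, wpD (A ℓ) (S k) = 0 := by
    intro ℓ
    rw [hSexp (A ℓ) (hNA ℓ) k]
    exact Finset.sum_eq_zero (fun m _ => part1 m ℓ)
  have hfT : ∀ i, T i ≠ 0 → ff T i = tT * xs M C i := by
    intro i hi
    obtain ⟨ℓ, hℓ⟩ := hwitness i hi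
    exact slack hM htT hTle (hstrat ℓ) (hadm ℓ) (hzeroT ℓ) i hℓ
  have hfS : ∀ i, T i ≠ 0 → ff (S k) i = tS * xs M C i := by
    intro i hi
    obtain ⟨ℓ, hℓ⟩ := hwitness i hi
    exact slack hM htS hSle (hstrat ℓ) (hadm ℓ) (hzeroS ℓ) i hℓ
  have hAeq : ∀ j, A k j = T j - S k j := by
    intro j
    have := Finset.add_sum_erase Finset.univ (fun ℓ => A ℓ j) (Finset.mem_univ k)
    simp only [hTdef, hSdef]
    linarith [this]
  have hSnn : ∀ j, 0 ≤ S k j := (hSk k).1.1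
  have hAnn : ∀ j, 0 ≤ A k j := (hstrat k).1
  by_cases htwo : ∃ i i', T i ≠ 0 ∧ T i' ≠ 0 ∧ i < i'
  · obtain ⟨ht'nn, hbound⟩ := main_bound hM hC hTsupp hSnn hAnn hAeq htT htS hTle hSle
      hfT hfS htwo
    exact opt_of_bound hM ht'nn hbound B hB hBadm
  · -- singleton support
    push_neg at htwo
    have hTi1 : ∃ i, T i ≠ 0 := by
      by_contra hc
      push_neg at hc
      have : ∑ᶠ i, T i = 0 := by
        rw [tot_eq_sum T hTsupp]
        exact Finset.sum_eq_zero (fun i _ => hc i)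
      have := hTstrat.1.2.2
      linarith
    obtain ⟨i1, hi1⟩ := hTi1
    have huniq : ∀ i, i ≠ i1 → T i = 0 := by
      intro i hne
      by_contra hc
      have h1 := htwo i i1 hc hi1
      have h2 := htwo i1 i hi1 hc
      omega
    have hzero1 : ∀ i, i ≠ i1 → S k i = 0 ∧ A k i = 0 := by
      intro i hne
      have h1 := hAeq i
      rw [huniq i hne] at h1
      have h2 := hSnn i
      have h3 := hAnn i
      constructor <;> linarith
    have hi1N : i1 ∈ Finset.range N := by
      have := hTsupp (Function.mem_support.2 hi1)
      simpa using this
    have hSi1 : 0 < S k i1 := by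
      rcases lt_or_eq_of_le (hSnn i1) with h | h
      · exact h
      · exfalso
        have : ∑ᶠ i, S k i = 0 := by
          rw [tot_eq_sum (S k) (hSsupp k)]
          apply Finset.sum_eq_zero
          intro i _
          rcases eq_or_ne i i1 with he | he
          · rw [he, ← h]
          · exact (hzero1 i he).1
        have := (hSk k).1.2.2
        linarith
    set c := A k i1 / S k i1 with hc
    have hcnn : 0 ≤ c := div_nonneg (hAnn i1) (le_of_lt hSi1)
    have hAc : A k = fun i => c * S k i := by
      funext i
      rcases eq_or_ne i i1 with he | he
      · rw [he, hc, div_mul_cancel₀ _ (ne_of_gt hSi1)]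
      · rw [(hzero1 i he).1, (hzero1 i he).2, mul_zero]
    rw [hAc, wpD_smul_right B hNB (hSsupp k) c]
    exact mul_nonpos_of_nonneg_of_nonpos hcnn (hSopt B hB hBadm)
end
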